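/- arXiv:1505.04269 — 4 statements merged into one kernel-verified Lean document; each statement's English description precedes it below -/
import Mathlib

section
/- If A is an element of Π_λ (a sequence of nonnegative integers, eventually 0 to the right, eventually periodic equal to a_{i mod n} to the left, with every sum of n consecutive terms at most k = a_0+...+a_{n-1}), then the array s_{i,j}(A) defined by s_{i,j}(A) = Σ_{l ≤ in+j(n-1)}(A_l - T^{i+j}_l) - Σ_{l=in+j(n-1)+1}^{(i+j)n} T^{i+j}_l satisfies the Gelfand-Tsetlin inequalities s_{i,j} ≥ s_{i+1,j} ≥ s_{i,j+1} for all integers i,j. -/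
open scoped BigOperators

/-- The reference sequence `T^m`: `T^m_i = 0` for `i > mn` and `T^m_i = a_i` otherwise
(where `a` is `n`-periodic, so `a i = a_{i mod n}`). -/
def Tseq (n : ℕ) (a : ℤ → ℤ) (m : ℤ) (i : ℤ) : ℤ :=
  if (m * n : ℤ) < i then 0 else a i

/-- Membership in the set `Π_λ`: integer sequences eventually `0` to the right,
eventually equal to the periodic sequence `a` to the left, nonnegative, and with
every sum of `n` consecutive terms at most `k = a_0 + ... + a_{n-1}`. -/
structure MemPi (n : ℕ) (a : ℤ → ℤ) (A : ℤ → ℤ) : Prop where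
  eventually_zero : ∃ N : ℤ, ∀ i, N ≤ i → A i = 0
  eventually_periodic : ∃ N : ℤ, ∀ i, i ≤ N → A i = a i
  nonneg : ∀ i, 0 ≤ A i
  window : ∀ i : ℤ,
    (∑ l ∈ Finset.Icc (i - n + 1) i, A l) ≤ ∑ l ∈ Finset.Icc (0 : ℤ) ((n : ℤ) - 1), a l

/-- The array `s_{i,j}(A)` associated with a sequence `A`:
`s_{i,j}(A) = Σ_{l ≤ in+j(n-1)} (A_l - T^{i+j}_l) - Σ_{l=in+j(n-1)+1}^{(i+j)n} T^{i+j}_l`. -/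
noncomputable def sPat (n : ℕ) (a A : ℤ → ℤ) (i j : ℤ) : ℤ :=
  (∑ᶠ l : ℤ, if l ≤ i * n + j * ((n : ℤ) - 1) then A l - Tseq n a (i + j) l else 0)
    - ∑ l ∈ Finset.Icc (i * n + j * ((n : ℤ) - 1) + 1) ((i + j) * n), Tseq n a (i + j) l

/- ## Auxiliary lemmas -/

lemma sum_Ioc_split (f : ℤ → ℤ) {a b c : ℤ} (h1 : a ≤ b) (h2 : b ≤ c) :
    (∑ l ∈ Finset.Ioc a b, f l) + ∑ l ∈ Finset.Ioc b c, f l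
      = ∑ l ∈ Finset.Ioc a c, f l := by
  rw [← Finset.sum_union, Finset.Ioc_union_Ioc_eq_Ioc h1 h2]
  rw [Finset.disjoint_left]
  intro x hx hx'
  simp only [Finset.mem_Ioc] at hx hx'
  omega

lemma Icc_eq_Ioc (a b : ℤ) : Finset.Icc a b = Finset.Ioc (a - 1) b := by
  ext x; simp only [Finset.mem_Icc, Finset.mem_Ioc]; omega

/-- `a` is periodic with every integer multiple of `n`. -/
lemma per_mul (n : ℕ) (a : ℤ → ℤ) (hper : ∀ i, a (i + n) = a i) (c i : ℤ) :
    a (i + c * n) = a i :=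
  (Function.Periodic.int_mul hper c) i

/-- Shift invariance of sums of `a` over intervals of integer-multiple-of-`n` shift. -/
lemma sum_shift (n : ℕ) (a : ℤ → ℤ) (hper : ∀ i, a (i + n) = a i) (c t t' : ℤ) :
    ∑ l ∈ Finset.Icc (t + c * n) (t' + c * n), a l = ∑ l ∈ Finset.Icc t t', a l := by
  rw [← Finset.map_add_right_Icc, Finset.sum_map]
  simp only [addRightEmbedding_apply]
  exact Finset.sum_congr rfl fun x _ => per_mul n a hper c x

/-- The sum of `a` over any window `(t, t+n]` equals `k`. -/
lemma window_sum (n : ℕ) (hn : 2 ≤ n) (a : ℤ → ℤ) (hper : ∀ i, a (i + n) = a i) (t : ℤ) :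
    ∑ l ∈ Finset.Icc (t + 1) (t + n), a l = ∑ l ∈ Finset.Icc (0 : ℤ) ((n : ℤ) - 1), a l := by
  have h1 : ∀ c : ℤ, ∑ l ∈ Finset.Icc (c * n + 1) (c * n + n), a l
      = ∑ l ∈ Finset.Icc (1 : ℤ) (n : ℤ), a l := by
    intro c
    have := sum_shift n a hper c 1 n
    rw [← this]
    congr 1 <;> ring_nf
  -- reduce t to an interval within one period: t = q*n + r
  have key : ∀ t : ℤ, ∑ l ∈ Finset.Icc (t + 1) (t + n), a l
      = ∑ l ∈ Finset.Icc (1 : ℤ) (n : ℤ), a l := by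
    intro t
    induction t using Int.induction_on with
    | zero => simpa using h1 0
    | succ m ih =>
      have hn1 : (1 : ℤ) ≤ (n : ℤ) := by exact_mod_cast Nat.one_le_of_lt hn
      have e1 : Finset.Icc ((m : ℤ) + 1 + 1) ((m : ℤ) + 1 + n)
          = Finset.Ioc ((m : ℤ) + 1) ((m : ℤ) + 1 + n) := by
        rw [Icc_eq_Ioc]; congr 1; ring
      have e2 : Finset.Icc ((m : ℤ) + 1) ((m : ℤ) + n)
          = Finset.Ioc ((m : ℤ)) ((m : ℤ) + n) := by
        rw [Icc_eq_Ioc]; congr 1; ring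
      have s1 := sum_Ioc_split a (a := (m : ℤ)) (b := (m : ℤ) + 1) (c := (m : ℤ) + 1 + n)
        (by omega) (by omega)
      have s2 := sum_Ioc_split a (a := (m : ℤ)) (b := (m : ℤ) + n) (c := (m : ℤ) + 1 + n)
        (by omega) (by omega)
      have single1 : ∑ l ∈ Finset.Ioc ((m : ℤ)) ((m : ℤ) + 1), a l = a ((m : ℤ) + 1) := by
        have : Finset.Ioc ((m : ℤ)) ((m : ℤ) + 1) = {(m : ℤ) + 1} := by
          ext x; simp only [Finset.mem_Ioc, Finset.mem_singleton]; omega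
        rw [this, Finset.sum_singleton]
      have single2 : ∑ l ∈ Finset.Ioc ((m : ℤ) + n) ((m : ℤ) + 1 + n), a l
          = a ((m : ℤ) + 1 + n) := by
        have : Finset.Ioc ((m : ℤ) + n) ((m : ℤ) + 1 + n) = {(m : ℤ) + 1 + n} := by
          ext x; simp only [Finset.mem_Ioc, Finset.mem_singleton]; omega
        rw [this, Finset.sum_singleton]
      have hpe : a ((m : ℤ) + 1 + n) = a ((m : ℤ) + 1) := hper _
      rw [e1, ← ih, e2]
      omega
    | pred m ih =>
      have hn1 : (1 : ℤ) ≤ (n : ℤ) := by exact_mod_cast Nat.one_le_of_lt hn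
      have e1 : Finset.Icc ((-(m : ℤ) - 1) + 1) ((-(m : ℤ) - 1) + n)
          = Finset.Ioc (-(m : ℤ) - 1) (-(m : ℤ) - 1 + n) := by
        rw [Icc_eq_Ioc]; congr 1; ring
      have e2 : Finset.Icc ((-(m : ℤ)) + 1) ((-(m : ℤ)) + n)
          = Finset.Ioc (-(m : ℤ)) (-(m : ℤ) + n) := by
        rw [Icc_eq_Ioc]; congr 1; ring
      have s1 := sum_Ioc_split a (a := -(m : ℤ) - 1) (b := -(m : ℤ)) (c := -(m : ℤ) + n)
        (by omega) (by omega)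
      have s2 := sum_Ioc_split a (a := -(m : ℤ) - 1) (b := -(m : ℤ) - 1 + n) (c := -(m : ℤ) + n)
        (by omega) (by omega)
      have single1 : ∑ l ∈ Finset.Ioc (-(m : ℤ) - 1) (-(m : ℤ)), a l = a (-(m : ℤ)) := by
        have : Finset.Ioc (-(m : ℤ) - 1) (-(m : ℤ)) = {-(m : ℤ)} := by
          ext x; simp only [Finset.mem_Ioc, Finset.mem_singleton]; omega
        rw [this, Finset.sum_singleton]
      have single2 : ∑ l ∈ Finset.Ioc (-(m : ℤ) - 1 + n) (-(m : ℤ) + n), a l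
          = a (-(m : ℤ) + n) := by
        have : Finset.Ioc (-(m : ℤ) - 1 + n) (-(m : ℤ) + n) = {-(m : ℤ) + n} := by
          ext x; simp only [Finset.mem_Ioc, Finset.mem_singleton]; omega
        rw [this, Finset.sum_singleton]
      have hpe : a (-(m : ℤ) + n) = a (-(m : ℤ)) := hper _
      rw [e1, ← ih, e2]
      omega
  have last : ∑ l ∈ Finset.Icc (1 : ℤ) (n : ℤ), a l
      = ∑ l ∈ Finset.Icc (0 : ℤ) ((n : ℤ) - 1), a l := by
    have hn1 : (1 : ℤ) ≤ (n : ℤ) := by exact_mod_cast Nat.one_le_of_lt hn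
    have s1 := sum_Ioc_split a (a := (0 : ℤ)) (b := (n : ℤ) - 1) (c := (n : ℤ))
      (by omega) (by omega)
    have s2 := sum_Ioc_split a (a := (-1 : ℤ)) (b := (0 : ℤ)) (c := (n : ℤ) - 1)
      (by omega) (by omega)
    have single1 : ∑ l ∈ Finset.Ioc ((n : ℤ) - 1) (n : ℤ), a l = a (n : ℤ) := by
      have : Finset.Ioc ((n : ℤ) - 1) (n : ℤ) = {(n : ℤ)} := by
        ext x; simp only [Finset.mem_Ioc, Finset.mem_singleton]; omega
      rw [this, Finset.sum_singleton]
    have single2 : ∑ l ∈ Finset.Ioc (-1 : ℤ) (0 : ℤ), a l = a 0 := by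
      have : Finset.Ioc (-1 : ℤ) (0 : ℤ) = {(0 : ℤ)} := by
        ext x; simp only [Finset.mem_Ioc, Finset.mem_singleton]; omega
      rw [this, Finset.sum_singleton]
    have hpe : a (n : ℤ) = a 0 := by have := hper 0; simpa using this
    rw [Icc_eq_Ioc (1 : ℤ), Icc_eq_Ioc (0 : ℤ)]
    have e1 : (1 : ℤ) - 1 = 0 := by ring
    have e2 : (0 : ℤ) - 1 = -1 := by ring
    rw [e1, e2]
    omega
  rw [key t, last]

/-- Representation of `sPat` as a difference of finite sums. -/
lemma sPat_eq (n : ℕ) (a A : ℤ → ℤ) (N1 : ℤ) (hN1 : ∀ l, l ≤ N1 → A l = a l)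
    (i j B : ℤ) (hB1 : B ≤ N1) (hB2 : B ≤ (i + j) * n) (hB3 : B ≤ i * n + j * ((n : ℤ) - 1)) :
    sPat n a A i j = (∑ l ∈ Finset.Icc B (i * n + j * ((n : ℤ) - 1)), A l)
      - ∑ l ∈ Finset.Icc B ((i + j) * n), a l := by
  set m : ℤ := i + j with hm
  set M : ℤ := i * n + j * ((n : ℤ) - 1) with hM
  have hsupp : (Function.support fun l : ℤ =>
      if l ≤ M then A l - Tseq n a m l else 0) ⊆ ↑(Finset.Icc B M) := by
    intro l hl
    simp only [Function.mem_support] at hl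
    by_contra hmem
    simp only [Finset.coe_Icc, Set.mem_Icc, not_and_or, not_le] at hmem
    rcases hmem with h | h
    · -- l < B : A l = a l and Tseq = a l
      have hle : l ≤ M := by omega
      have hA : A l = a l := hN1 l (by omega)
      have hT : Tseq n a m l = a l := by
        unfold Tseq
        rw [if_neg (by omega)]
      rw [if_pos hle, hA, hT] at hl
      simp at hl
    · -- M < l
      rw [if_neg (by omega)] at hl
      exact hl rfl
  have hfin : (∑ᶠ l : ℤ, if l ≤ M then A l - Tseq n a m l else 0)
      = ∑ l ∈ Finset.Icc B M, (A l - Tseq n a m l) := by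
    rw [finsum_eq_sum_of_support_subset _ hsupp]
    refine Finset.sum_congr rfl fun x hx => ?_
    rw [Finset.mem_Icc] at hx
    rw [if_pos hx.2]
  have key : (∑ l ∈ Finset.Icc B M, Tseq n a m l)
      + ∑ l ∈ Finset.Icc (M + 1) (m * n), Tseq n a m l
      = ∑ l ∈ Finset.Icc B (m * n), a l := by
    rcases le_or_gt M (m * n) with h | h
    · have s1 := sum_Ioc_split (Tseq n a m) (a := B - 1) (b := M) (c := m * n)
        (by omega) h
      rw [Icc_eq_Ioc B M, Icc_eq_Ioc (M + 1) (m * n), Icc_eq_Ioc B (m * n)]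
      have e : M + 1 - 1 = M := by ring
      rw [e, s1]
      refine Finset.sum_congr rfl fun x hx => ?_
      rw [Finset.mem_Ioc] at hx
      unfold Tseq
      rw [if_neg (by omega)]
    · have hemp : Finset.Icc (M + 1) (m * n) = ∅ := by
        apply Finset.Icc_eq_empty; omega
      rw [hemp, Finset.sum_empty, add_zero]
      rw [Icc_eq_Ioc B M, Icc_eq_Ioc B (m * n)]
      have s1 := sum_Ioc_split (Tseq n a m) (a := B - 1) (b := m * n) (c := M)
        (by omega) (by omega)
      rw [← s1]
      have z : ∑ l ∈ Finset.Ioc (m * n) M, Tseq n a m l = 0 := by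
        apply Finset.sum_eq_zero
        intro x hx
        rw [Finset.mem_Ioc] at hx
        unfold Tseq
        rw [if_pos hx.1]
      rw [z, add_zero]
      refine Finset.sum_congr rfl fun x hx => ?_
      rw [Finset.mem_Ioc] at hx
      unfold Tseq
      rw [if_neg (by omega)]
  unfold sPat
  rw [← hm, ← hM, hfin, Finset.sum_sub_distrib]
  omega

/-- If `A ∈ Π_λ`, then the array `(s_{i,j}(A))` satisfies the Gelfand–Tsetlin
inequalities `s_{i,j} ≥ s_{i+1,j} ≥ s_{i,j+1}` for all integers `i, j`. -/
theorem stmt0 (n : ℕ) (hn : 2 ≤ n) (a : ℤ → ℤ)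
    (hper : ∀ i, a (i + n) = a i) (hpos : ∀ i, 0 ≤ a i)
    (hk : 0 < ∑ l ∈ Finset.Icc (0 : ℤ) ((n : ℤ) - 1), a l)
    (A : ℤ → ℤ) (hA : MemPi n a A) (i j : ℤ) :
    sPat n a A i (j + 1) ≤ sPat n a A (i + 1) j ∧
      sPat n a A (i + 1) j ≤ sPat n a A i j := by
  obtain ⟨N1, hN1⟩ := hA.eventually_periodic
  have hn1 : (2 : ℤ) ≤ (n : ℤ) := by exact_mod_cast hn
  set M : ℤ := i * n + j * ((n : ℤ) - 1) with hM
  set m : ℤ := i + j with hm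
  set B : ℤ := min N1 (min (m * n) (min ((m + 1) * n) M)) - 1 with hB
  have hBN1 : B ≤ N1 := by omega
  have hBm : B ≤ m * n := by omega
  have hBm1 : B ≤ (m + 1) * n := by omega
  have hBM : B ≤ M := by omega
  have e1 : sPat n a A i j = (∑ l ∈ Finset.Icc B M, A l)
      - ∑ l ∈ Finset.Icc B (m * n), a l := by
    have := sPat_eq n a A N1 hN1 i j B hBN1 (by rw [← hm]; exact hBm) (by rw [← hM]; exact hBM)
    rw [this]
  have hM2 : (i + 1) * (n : ℤ) + j * ((n : ℤ) - 1) = M + n := by rw [hM]; ring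
  have hM3 : i * (n : ℤ) + (j + 1) * ((n : ℤ) - 1) = M + n - 1 := by rw [hM]; ring
  have hm2 : i + 1 + j = m + 1 := by rw [hm]; ring
  have hm3 : i + (j + 1) = m + 1 := by rw [hm]; ring
  have e2 : sPat n a A (i + 1) j = (∑ l ∈ Finset.Icc B (M + n), A l)
      - ∑ l ∈ Finset.Icc B ((m + 1) * n), a l := by
    have := sPat_eq n a A N1 hN1 (i + 1) j B hBN1 (by rw [hm2]; exact hBm1)
      (by rw [hM2]; omega)
    rw [this, hm2, hM2]
  have e3 : sPat n a A i (j + 1) = (∑ l ∈ Finset.Icc B (M + n - 1), A l)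
      - ∑ l ∈ Finset.Icc B ((m + 1) * n), a l := by
    have := sPat_eq n a A N1 hN1 i (j + 1) B hBN1 (by rw [hm3]; exact hBm1)
      (by rw [hM3]; omega)
    rw [this, hm3, hM3]
  constructor
  · -- sPat i (j+1) ≤ sPat (i+1) j
    rw [e2, e3]
    have : (∑ l ∈ Finset.Icc B (M + n - 1), A l) ≤ ∑ l ∈ Finset.Icc B (M + n), A l := by
      apply Finset.sum_le_sum_of_subset_of_nonneg
      · apply Finset.Icc_subset_Icc_right; omega
      · intro x _ _; exact hA.nonneg x
    omega
  · -- sPat (i+1) j ≤ sPat i j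
    rw [e1, e2]
    have sA := sum_Ioc_split A (a := B - 1) (b := M) (c := M + n) (by omega) (by omega)
    have sa := sum_Ioc_split a (a := B - 1) (b := m * n) (c := (m + 1) * n)
      (by omega) (by nlinarith)
    rw [Icc_eq_Ioc B (M + n), Icc_eq_Ioc B M, Icc_eq_Ioc B (m * n),
      Icc_eq_Ioc B ((m + 1) * n)]
    rw [← sA, ← sa]
    have hw : ∑ l ∈ Finset.Ioc M (M + n), A l ≤ ∑ l ∈ Finset.Ioc (m * n) ((m + 1) * n), a l := by
      have h1 : ∑ l ∈ Finset.Ioc M (M + n), A l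
          = ∑ l ∈ Finset.Icc (M + n - n + 1) (M + n), A l := by
        rw [Icc_eq_Ioc]; congr 1; ring
      have h2 : ∑ l ∈ Finset.Ioc (m * n) ((m + 1) * n), a l
          = ∑ l ∈ Finset.Icc (m * n + 1) (m * n + n), a l := by
        rw [Icc_eq_Ioc]; congr 1 <;> ring
      rw [h1, h2, window_sum n hn a hper (m * n)]
      exact hA.window (M + n)
    omega
end

section
/- Let g be a face of D_Γ(b_1,...,b_{l_Γ}) (all b_i distinct) degenerating onto the vertex of the cone D_Γ(b,...,b) via the face map π. Then g belongs to π^{-1}(vertex), i.e. g is bounded, if and only if the subgraph Δ_g includes every edge joining two vertices that are both leftmost in their rows of Γ (joined diagonally), and every edge joining two vertices that are both rightmost in their rows of Γ. -/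
open scoped BigOperators Classical

noncomputable section

/-- Adjacency in the rotated square lattice `ℛ`: the neighbours of `(i,j)` are its
upper neighbours `(i-1,j)`, `(i-1,j+1)` and lower neighbours `(i+1,j)`, `(i+1,j-1)`. -/
def LatAdj (p q : ℤ × ℤ) : Prop :=
  q = (p.1 - 1, p.2) ∨ q = (p.1 - 1, p.2 + 1) ∨ q = (p.1 + 1, p.2) ∨ q = (p.1 + 1, p.2 - 1)

/-- The rotated square lattice `ℛ` as a simple graph on `ℤ × ℤ`. -/
def latticeGraph : SimpleGraph (ℤ × ℤ) := SimpleGraph.fromRel LatAdj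

/-- An ordinary subgraph of `ℛ`: a finite connected full subgraph such that whenever
`(i,j)` and `(i,j+1)` are vertices, so is `(i+1,j)`, and, if `i` is below the top row,
so is `(i-1,j+1)`. -/
structure OrdinaryGraph where
  verts : Finset (ℤ × ℤ)
  nonempty : verts.Nonempty
  connected : (latticeGraph.induce (verts : Set (ℤ × ℤ))).Connected
  prop2 : ∀ i j : ℤ, (i, j) ∈ verts → (i, j + 1) ∈ verts → (i + 1, j) ∈ verts
  prop3 : ∀ i j : ℤ, (i, j) ∈ verts → (i, j + 1) ∈ verts →
    (∃ p ∈ verts, p.1 < i) → (i - 1, j + 1) ∈ verts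

/-- The number `a_Γ` of the top row of an ordinary subgraph. -/
def OrdinaryGraph.top (Γ : OrdinaryGraph) : ℤ :=
  (Γ.verts.image Prod.fst).min' (Γ.nonempty.image _)

/-- The set of vertices of `Γ` in the top row. -/
def OrdinaryGraph.topRow (Γ : OrdinaryGraph) : Finset (ℤ × ℤ) :=
  Γ.verts.filter fun p => p.1 = Γ.top

/-- The number `l_Γ` of vertices of `Γ` in the top row. -/
def OrdinaryGraph.lG (Γ : OrdinaryGraph) : ℕ := Γ.topRow.card

/-- The boundary values `b` are nonincreasing from left to right along the top row. -/
def TopAntitone (Γ : OrdinaryGraph) (b : ℤ → ℤ) : Prop :=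
  ∀ j j' : ℤ, (Γ.top, j) ∈ Γ.verts → (Γ.top, j') ∈ Γ.verts → j ≤ j' → b j' ≤ b j

/-- The boundary values `b` are strictly decreasing from left to right along the top row. -/
def TopStrictAnti (Γ : OrdinaryGraph) (b : ℤ → ℤ) : Prop :=
  ∀ j j' : ℤ, (Γ.top, j) ∈ Γ.verts → (Γ.top, j') ∈ Γ.verts → j < j' → b j' < b j

/-- The polyhedron `D_Γ(b)`: real arrays `(s_{i,j})` vanishing outside `Γ`, with the
top-row coordinates fixed equal to the values of `b`, and satisfying
`s_{i-1,j} ≥ s_{i,j} ≥ s_{i-1,j+1}` for adjacent pairs of vertices of `Γ`. -/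
def DPoly (Γ : OrdinaryGraph) (b : ℤ → ℤ) : Set ((ℤ × ℤ) → ℝ) :=
  {s | (∀ p, p ∉ Γ.verts → s p = 0) ∧
    (∀ j : ℤ, (Γ.top, j) ∈ Γ.verts → s (Γ.top, j) = (b j : ℝ)) ∧
    (∀ i j : ℤ, (i, j) ∈ Γ.verts →
      (((i - 1, j) ∈ Γ.verts → s (i, j) ≤ s (i - 1, j)) ∧
       ((i - 1, j + 1) ∈ Γ.verts → s (i - 1, j + 1) ≤ s (i, j))))}

/-- A face of a polyhedron in the array space: a nonempty extreme subset. -/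
def IsFaceOf (P f : Set ((ℤ × ℤ) → ℝ)) : Prop := IsExtreme ℝ P f ∧ f.Nonempty

/-- The dimension of (the affine span of) a set of arrays. -/
def sdim (f : Set ((ℤ × ℤ) → ℝ)) : ℕ := Module.finrank ℝ (affineSpan ℝ f).direction

/-- The subgraph `Δ_f` of `Γ` associated to a face (or any set) `f`: two adjacent
vertices of `Γ` are joined iff the corresponding coordinates agree on all of `f`. -/
def deltaGraph (Γ : OrdinaryGraph) (f : Set ((ℤ × ℤ) → ℝ)) : SimpleGraph (ℤ × ℤ) :=
  SimpleGraph.fromRel fun p q =>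
    p ∈ Γ.verts ∧ q ∈ Γ.verts ∧ LatAdj p q ∧ ∀ s ∈ f, s p = s q

/-- The number of vertices in row `i` of the connected component `c` of the subgraph
`G` restricted to `Γ`. -/
def rowCount (Γ : OrdinaryGraph) (G : SimpleGraph (ℤ × ℤ))
    (c : (G.induce (Γ.verts : Set (ℤ × ℤ))).ConnectedComponent) (i : ℤ) : ℕ :=
  Nat.card {v : (Γ.verts : Set (ℤ × ℤ)) //
    (G.induce (Γ.verts : Set (ℤ × ℤ))).connectedComponentMk v = c ∧ (v : ℤ × ℤ).1 = i}

/-- The statistic `d_l` of a face `f`: the number of pairs `(E, i)` of a connected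
component `E` of `Δ_f` and a row `i` below the top row such that `E` has exactly `l-1`
vertices in row `i-1` and `l` vertices in row `i`. -/
def dstat (Γ : OrdinaryGraph) (f : Set ((ℤ × ℤ) → ℝ)) (l : ℕ) : ℕ :=
  Nat.card {ci : ((deltaGraph Γ f).induce (Γ.verts : Set (ℤ × ℤ))).ConnectedComponent × ℤ //
    Γ.top < ci.2 ∧ rowCount Γ (deltaGraph Γ f) ci.1 (ci.2 - 1) = l - 1 ∧
      rowCount Γ (deltaGraph Γ f) ci.1 ci.2 = l}

/-- The weight `φ_Γ(b)(f) = Π_l (1 - t^l)^{d_l}` of a face `f` of `D_Γ(b)`. -/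
def phiG (Γ : OrdinaryGraph) (f : Set ((ℤ × ℤ) → ℝ)) : Polynomial ℤ :=
  ∏ᶠ l ∈ Set.Ici 1, ((1 : Polynomial ℤ) - Polynomial.X ^ l) ^ dstat Γ f l

section Aux
variable (Γ : OrdinaryGraph)

lemma latAdj_cases {p q : ℤ × ℤ} (h : LatAdj p q ∨ LatAdj q p) :
    q = (p.1 - 1, p.2) ∨ q = (p.1 - 1, p.2 + 1) ∨ q = (p.1 + 1, p.2) ∨ q = (p.1 + 1, p.2 - 1) := by
  obtain ⟨i, j⟩ := p; obtain ⟨i', j'⟩ := q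
  simp only [LatAdj, Prod.mk.injEq, Prod.ext_iff] at h ⊢
  omega

lemma adj_cases {p q : ℤ × ℤ} (h : latticeGraph.Adj p q) :
    q = (p.1 - 1, p.2) ∨ q = (p.1 - 1, p.2 + 1) ∨ q = (p.1 + 1, p.2) ∨ q = (p.1 + 1, p.2 - 1) := by
  rw [latticeGraph, SimpleGraph.fromRel_adj] at h
  exact latAdj_cases h.2

abbrev IG := latticeGraph.induce (Γ.verts : Set (ℤ × ℤ))

lemma igAdj_cases {a b : (Γ.verts : Set (ℤ × ℤ))} (h : (IG Γ).Adj a b) :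
    (b : ℤ × ℤ) = ((a : ℤ × ℤ).1 - 1, (a : ℤ × ℤ).2) ∨
    (b : ℤ × ℤ) = ((a : ℤ × ℤ).1 - 1, (a : ℤ × ℤ).2 + 1) ∨
    (b : ℤ × ℤ) = ((a : ℤ × ℤ).1 + 1, (a : ℤ × ℤ).2) ∨
    (b : ℤ × ℤ) = ((a : ℤ × ℤ).1 + 1, (a : ℤ × ℤ).2 - 1) :=
  adj_cases h

lemma igAdj_row {a b : (Γ.verts : Set (ℤ × ℤ))} (h : (IG Γ).Adj a b) :
    (b : ℤ × ℤ).1 = (a : ℤ × ℤ).1 + 1 ∨ (b : ℤ × ℤ).1 = (a : ℤ × ℤ).1 - 1 := by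
  rcases igAdj_cases Γ h with h | h | h | h <;> rw [h] <;> simp <;> omega

lemma exists_cross (i : ℤ) {u v : (Γ.verts : Set (ℤ × ℤ))} (W : (IG Γ).Walk u v) :
    (∃ x ∈ W.support, (x : ℤ × ℤ).1 ≤ i) → (∃ x ∈ W.support, i + 1 ≤ (x : ℤ × ℤ).1) →
    ∃ a ∈ W.support, ∃ b ∈ W.support,
      (IG Γ).Adj a b ∧ (a : ℤ × ℤ).1 = i ∧ (b : ℤ × ℤ).1 = i + 1 := by
  induction W with
  | nil =>
    rintro ⟨x, hx, h1⟩ ⟨y, hy, h2⟩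
    simp only [SimpleGraph.Walk.support_nil, List.mem_singleton] at hx hy
    subst hx; subst hy; omega
  | @cons u x v h W ih =>
    rintro ⟨y1, hy1, hr1⟩ ⟨y2, hy2, hr2⟩
    rw [SimpleGraph.Walk.support_cons, List.mem_cons] at hy1 hy2
    by_cases hu : (u : ℤ × ℤ).1 ≤ i
    · have hy2' : y2 ∈ W.support := by
        rcases hy2 with rfl | h2'
        · omega
        · exact h2'
      by_cases hx : (x : ℤ × ℤ).1 ≤ i
      · obtain ⟨a, ha, b, hbs, hab⟩ := ih ⟨x, W.start_mem_support, hx⟩ ⟨y2, hy2', hr2⟩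
        exact ⟨a, by simp [ha], b, by simp [hbs], hab⟩
      · refine ⟨u, by simp, x, by simp [W.start_mem_support], h, ?_, ?_⟩ <;>
          rcases igAdj_row Γ h with h' | h' <;> omega
    · have hy1' : y1 ∈ W.support := by
        rcases hy1 with rfl | h1'
        · omega
        · exact h1'
      by_cases hx : (x : ℤ × ℤ).1 ≤ i
      · refine ⟨x, by simp [W.start_mem_support], u, by simp, h.symm, ?_, ?_⟩ <;>
          rcases igAdj_row Γ h with h' | h' <;> omega
      · obtain ⟨a, ha, b, hbs, hab⟩ := ih ⟨y1, hy1', hr1⟩ ⟨x, W.start_mem_support, by omega⟩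
        exact ⟨a, by simp [ha], b, by simp [hbs], hab⟩

lemma exists_row {u v : (Γ.verts : Set (ℤ × ℤ))} (W : (IG Γ).Walk u v) (i : ℤ) :
    (u : ℤ × ℤ).1 ≤ i → i ≤ (v : ℤ × ℤ).1 →
    ∃ x ∈ W.support, (x : ℤ × ℤ).1 = i := by
  induction W with
  | nil => intro h1 h2; exact ⟨_, SimpleGraph.Walk.start_mem_support _, by omega⟩
  | @cons u x v h W ih =>
    intro h1 h2
    by_cases hu : (u : ℤ × ℤ).1 = i
    · exact ⟨u, by simp, hu⟩
    · have hx : (x : ℤ × ℤ).1 ≤ i := by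
        rcases igAdj_row Γ h with h' | h' <;> omega
      obtain ⟨a, ha, hra⟩ := ih hx h2
      exact ⟨a, by simp [ha], hra⟩

end Aux
section Aux2
variable (Γ : OrdinaryGraph)

lemma top_le {p : ℤ × ℤ} (hp : p ∈ Γ.verts) : Γ.top ≤ p.1 :=
  Finset.min'_le _ _ (Finset.mem_image_of_mem _ hp)

lemma exists_top_vert : ∃ jt : ℤ, (Γ.top, jt) ∈ Γ.verts := by
  have h := Finset.min'_mem (Γ.verts.image Prod.fst) (Γ.nonempty.image _)
  rw [Finset.mem_image] at h
  obtain ⟨p, hp, hp'⟩ := h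
  refine ⟨p.2, ?_⟩
  have hh : (Γ.top, p.2) = p := Prod.ext (by rw [OrdinaryGraph.top, ← hp']) rfl
  rw [hh]; exact hp

lemma reach {p q : ℤ × ℤ} (hp : p ∈ Γ.verts) (hq : q ∈ Γ.verts) :
    Nonempty ((IG Γ).Walk ⟨p, hp⟩ ⟨q, hq⟩) :=
  Γ.connected.preconnected ⟨p, hp⟩ ⟨q, hq⟩

lemma span_down {x v : (Γ.verts : Set (ℤ × ℤ))} (W : (IG Γ).Walk x v)
    (ih : ∀ i c1 c2 c : ℤ, (∃ z ∈ W.support, (z : ℤ × ℤ) = (i, c1)) →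
      (∃ z ∈ W.support, (z : ℤ × ℤ) = (i, c2)) → c1 ≤ c → c ≤ c2 → (i, c) ∈ Γ.verts)
    (i ca cb c e0 : ℤ) (ha : ((i, ca) : ℤ × ℤ) ∈ Γ.verts)
    (hx : (x : ℤ × ℤ) = (i + 1, e0)) (he0v : e0 = ca ∨ e0 = ca - 1)
    (hy : ∃ y ∈ W.support, (y : ℤ × ℤ) = (i, cb))
    (hm1 : min ca cb ≤ c) (hm2 : c ≤ max ca cb) : ((i, c) : ℤ × ℤ) ∈ Γ.verts := by
  obtain ⟨y, hys, hyv⟩ := hy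
  obtain ⟨a, has, b, hbs, hab, harow, hbrow⟩ :=
    exists_cross Γ i W ⟨y, hys, by rw [hyv]⟩ ⟨x, W.start_mem_support, by rw [hx]⟩
  obtain ⟨d, hav⟩ : ∃ d : ℤ, (a : ℤ × ℤ) = (i, d) := ⟨(a : ℤ × ℤ).2, Prod.ext harow rfl⟩
  obtain ⟨e', hbv⟩ : ∃ e' : ℤ, (b : ℤ × ℤ) = (i + 1, e') := ⟨(b : ℤ × ℤ).2, Prod.ext hbrow rfl⟩
  have he'd : e' = d ∨ e' = d - 1 := by
    rcases igAdj_cases Γ hab with h' | h' | h' | h' <;>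
      (rw [hav, hbv] at h'; simp only [Prod.mk.injEq] at h'; omega)
  have fill1 : ∀ t, min e0 e' ≤ t → t ≤ max e0 e' → ((i + 1, t) : ℤ × ℤ) ∈ Γ.verts := by
    intro t ht1 ht2
    rcases le_total e0 e' with hle | hle
    · exact ih (i + 1) e0 e' t ⟨x, W.start_mem_support, hx⟩ ⟨b, hbs, hbv⟩ (by omega) (by omega)
    · exact ih (i + 1) e' e0 t ⟨b, hbs, hbv⟩ ⟨x, W.start_mem_support, hx⟩ (by omega) (by omega)
  have lift1 : ∀ t, min e0 e' + 1 ≤ t → t ≤ max e0 e' → ((i, t) : ℤ × ℤ) ∈ Γ.verts := by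
    intro t ht1 ht2
    have h1 := fill1 (t - 1) (by omega) (by omega)
    have h2 := fill1 t (by omega) (by omega)
    rw [show ((i + 1, t) : ℤ × ℤ) = (i + 1, (t - 1) + 1) by simp] at h2
    have h3 := Γ.prop3 (i + 1) (t - 1) h1 h2 ⟨(i, ca), ha, by simp⟩
    rw [show (i + 1 - 1 : ℤ) = i by ring, show (t - 1 + 1 : ℤ) = t by ring] at h3
    exact h3
  have fill2 : ∀ t, min d cb ≤ t → t ≤ max d cb → ((i, t) : ℤ × ℤ) ∈ Γ.verts := by
    intro t ht1 ht2
    rcases le_total d cb with hle | hle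
    · exact ih i d cb t ⟨a, has, hav⟩ ⟨y, hys, hyv⟩ (by omega) (by omega)
    · exact ih i cb d t ⟨y, hys, hyv⟩ ⟨a, has, hav⟩ (by omega) (by omega)
  have key : c = ca ∨ (min e0 e' + 1 ≤ c ∧ c ≤ max e0 e') ∨
      (min d cb ≤ c ∧ c ≤ max d cb) := by omega
  rcases key with rfl | ⟨k1, k2⟩ | ⟨k1, k2⟩
  · exact ha
  · exact lift1 c k1 k2
  · exact fill2 c k1 k2

lemma span_up {x v : (Γ.verts : Set (ℤ × ℤ))} (W : (IG Γ).Walk x v)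
    (ih : ∀ i c1 c2 c : ℤ, (∃ z ∈ W.support, (z : ℤ × ℤ) = (i, c1)) →
      (∃ z ∈ W.support, (z : ℤ × ℤ) = (i, c2)) → c1 ≤ c → c ≤ c2 → (i, c) ∈ Γ.verts)
    (i ca cb c e0 : ℤ) (ha : ((i, ca) : ℤ × ℤ) ∈ Γ.verts)
    (hx : (x : ℤ × ℤ) = (i - 1, e0)) (he0v : e0 = ca ∨ e0 = ca + 1)
    (hy : ∃ y ∈ W.support, (y : ℤ × ℤ) = (i, cb))
    (hm1 : min ca cb ≤ c) (hm2 : c ≤ max ca cb) : ((i, c) : ℤ × ℤ) ∈ Γ.verts := by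
  obtain ⟨y, hys, hyv⟩ := hy
  obtain ⟨a, has, b, hbs, hab, harow, hbrow⟩ :=
    exists_cross Γ (i - 1) W ⟨x, W.start_mem_support, by rw [hx]⟩ ⟨y, hys, by rw [hyv]; omega⟩
  obtain ⟨d, hav⟩ : ∃ d : ℤ, (a : ℤ × ℤ) = (i - 1, d) := ⟨(a : ℤ × ℤ).2, Prod.ext harow rfl⟩
  obtain ⟨e', hbv⟩ : ∃ e' : ℤ, (b : ℤ × ℤ) = (i, e') :=
    ⟨(b : ℤ × ℤ).2, Prod.ext (by omega) rfl⟩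
  have he'd : e' = d ∨ e' = d - 1 := by
    rcases igAdj_cases Γ hab with h' | h' | h' | h' <;>
      (rw [hav, hbv] at h'; simp only [Prod.mk.injEq] at h'; omega)
  have fill1 : ∀ t, min e0 d ≤ t → t ≤ max e0 d → ((i - 1, t) : ℤ × ℤ) ∈ Γ.verts := by
    intro t ht1 ht2
    rcases le_total e0 d with hle | hle
    · exact ih (i - 1) e0 d t ⟨x, W.start_mem_support, hx⟩ ⟨a, has, hav⟩ (by omega) (by omega)
    · exact ih (i - 1) d e0 t ⟨a, has, hav⟩ ⟨x, W.start_mem_support, hx⟩ (by omega) (by omega)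
  have lift1 : ∀ t, min e0 d ≤ t → t ≤ max e0 d - 1 → ((i, t) : ℤ × ℤ) ∈ Γ.verts := by
    intro t ht1 ht2
    have h1 := fill1 t (by omega) (by omega)
    have h2 := fill1 (t + 1) (by omega) (by omega)
    have h3 := Γ.prop2 (i - 1) t h1 h2
    rw [show (i - 1 + 1 : ℤ) = i by ring] at h3
    exact h3
  have fill2 : ∀ t, min e' cb ≤ t → t ≤ max e' cb → ((i, t) : ℤ × ℤ) ∈ Γ.verts := by
    intro t ht1 ht2
    rcases le_total e' cb with hle | hle
    · exact ih i e' cb t ⟨b, hbs, hbv⟩ ⟨y, hys, hyv⟩ (by omega) (by omega)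
    · exact ih i cb e' t ⟨y, hys, hyv⟩ ⟨b, hbs, hbv⟩ (by omega) (by omega)
  have key : c = ca ∨ (min e0 d ≤ c ∧ c ≤ max e0 d - 1) ∨
      (min e' cb ≤ c ∧ c ≤ max e' cb) := by omega
  rcases key with rfl | ⟨k1, k2⟩ | ⟨k1, k2⟩
  · exact ha
  · exact lift1 c k1 k2
  · exact fill2 c k1 k2

/-- Key filling lemma: if a walk in `Γ` visits row `i` at columns `c1` and `c2`,
then every column in between belongs to `Γ`. -/
lemma span {u v : (Γ.verts : Set (ℤ × ℤ))} (W : (IG Γ).Walk u v) :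
    ∀ i c1 c2 c : ℤ, (∃ x ∈ W.support, (x : ℤ × ℤ) = (i, c1)) →
      (∃ x ∈ W.support, (x : ℤ × ℤ) = (i, c2)) →
      c1 ≤ c → c ≤ c2 → (i, c) ∈ Γ.verts := by
  induction W with
  | nil =>
    rintro i c1 c2 c ⟨x1, hx1, hv1⟩ ⟨x2, hx2, hv2⟩ hc1 hc2
    simp only [SimpleGraph.Walk.support_nil, List.mem_singleton] at hx1 hx2
    rw [hx1] at hv1; rw [hx2] at hv2
    have hcc : c = c1 := by rw [hv1] at hv2; simp at hv2; omega
    subst hcc; rw [← hv1]; exact Subtype.coe_prop _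
  | @cons u x v h W ih =>
    rintro i c1 c2 c ⟨x1, hx1, hv1⟩ ⟨x2, hx2, hv2⟩ hc1 hc2
    rw [SimpleGraph.Walk.support_cons, List.mem_cons] at hx1 hx2
    have main : ∀ ca cb : ℤ, (u : ℤ × ℤ) = (i, ca) →
        (∃ y ∈ W.support, (y : ℤ × ℤ) = (i, cb)) →
        min ca cb ≤ c → c ≤ max ca cb → ((i, c) : ℤ × ℤ) ∈ Γ.verts := by
      rintro ca cb hu hy hm1 hm2
      have ha : ((i, ca) : ℤ × ℤ) ∈ Γ.verts := by rw [← hu]; exact Subtype.coe_prop _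
      rcases igAdj_cases Γ h with hxv | hxv | hxv | hxv <;> rw [hu] at hxv <;>
        simp only [] at hxv
      · exact span_up Γ W ih i ca cb c ca ha hxv (Or.inl rfl) hy hm1 hm2
      · exact span_up Γ W ih i ca cb c (ca + 1) ha hxv (Or.inr rfl) hy hm1 hm2
      · exact span_down Γ W ih i ca cb c ca ha hxv (Or.inl rfl) hy hm1 hm2
      · exact span_down Γ W ih i ca cb c (ca - 1) ha hxv (Or.inr rfl) hy hm1 hm2
    rcases hx1 with hx1 | hx1 <;> rcases hx2 with hx2 | hx2
    · rw [hx1] at hv1; rw [hx2] at hv2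
      have hcc : c = c1 := by rw [hv1] at hv2; simp at hv2; omega
      subst hcc; rw [← hv1]; exact Subtype.coe_prop _
    · exact main c1 c2 (by rw [← hx1]; exact hv1) ⟨x2, hx2, hv2⟩ (by omega) (by omega)
    · exact main c2 c1 (by rw [← hx2]; exact hv2) ⟨x1, hx1, hv1⟩ (by omega) (by omega)
    · exact ih i c1 c2 c ⟨x1, hx1, hv1⟩ ⟨x2, hx2, hv2⟩ hc1 hc2

/-- Rows of `Γ` are intervals. -/
lemma row_interval {i c1 c2 c : ℤ} (h1 : (i, c1) ∈ Γ.verts) (h2 : (i, c2) ∈ Γ.verts)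
    (hc1 : c1 ≤ c) (hc2 : c ≤ c2) : (i, c) ∈ Γ.verts := by
  obtain ⟨W⟩ := reach Γ h1 h2
  exact span Γ W i c1 c2 c ⟨_, W.start_mem_support, rfl⟩ ⟨_, W.end_mem_support, rfl⟩ hc1 hc2

/-- Any two consecutive nonempty rows are joined by a lattice edge. -/
lemma cross_rows {i j0 j1 : ℤ} (h0 : (i, j0) ∈ Γ.verts) (h1 : (i + 1, j1) ∈ Γ.verts) :
    ∃ d e : ℤ, (i, d) ∈ Γ.verts ∧ (i + 1, e) ∈ Γ.verts ∧ (e = d ∨ e = d - 1) := by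
  obtain ⟨W⟩ := reach Γ h0 h1
  obtain ⟨a, has, b, hbs, hab, harow, hbrow⟩ :=
    exists_cross Γ i W ⟨_, W.start_mem_support, by simp⟩ ⟨_, W.end_mem_support, by simp⟩
  obtain ⟨d, hav⟩ : ∃ d : ℤ, (a : ℤ × ℤ) = (i, d) := ⟨(a : ℤ × ℤ).2, Prod.ext harow rfl⟩
  obtain ⟨e, hbv⟩ : ∃ e : ℤ, (b : ℤ × ℤ) = (i + 1, e) := ⟨(b : ℤ × ℤ).2, Prod.ext hbrow rfl⟩
  refine ⟨d, e, by rw [← hav]; exact Subtype.coe_prop _, by rw [← hbv]; exact Subtype.coe_prop _, ?_⟩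
  rcases igAdj_cases Γ hab with h' | h' | h' | h' <;>
    (rw [hav, hbv] at h'; simp only [Prod.mk.injEq] at h'; omega)

/-- Every row between two occupied rows is occupied. -/
lemma row_nonempty {i1 i2 i : ℤ} {j1 j2 : ℤ} (h1 : (i1, j1) ∈ Γ.verts)
    (h2 : (i2, j2) ∈ Γ.verts) (hi1 : i1 ≤ i) (hi2 : i ≤ i2) : ∃ j, (i, j) ∈ Γ.verts := by
  obtain ⟨W⟩ := reach Γ h1 h2
  obtain ⟨x, hxs, hxr⟩ := exists_row Γ W i (by simpa using hi1) (by simpa using hi2)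
  exact ⟨(x : ℤ × ℤ).2, by rw [show ((i, (x : ℤ × ℤ).2) : ℤ × ℤ) = (x : ℤ × ℤ) from Prod.ext hxr.symm rfl]; exact Subtype.coe_prop _⟩

end Aux2
section Aux3
variable (Γ : OrdinaryGraph) (b : ℤ → ℤ)

lemma dpoly_vert {s : (ℤ × ℤ) → ℝ} (hs : s ∈ DPoly Γ b) {r c : ℤ}
    (h1 : (r + 1, c) ∈ Γ.verts) (h2 : (r, c) ∈ Γ.verts) : s (r + 1, c) ≤ s (r, c) := by
  have h := (hs.2.2 (r + 1) c h1).1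
  rw [show (r + 1 - 1 : ℤ) = r by ring] at h
  exact h h2

lemma dpoly_diag {s : (ℤ × ℤ) → ℝ} (hs : s ∈ DPoly Γ b) {r c : ℤ}
    (h1 : (r + 1, c) ∈ Γ.verts) (h2 : (r, c + 1) ∈ Γ.verts) : s (r, c + 1) ≤ s (r + 1, c) := by
  have h := (hs.2.2 (r + 1) c h1).2
  rw [show (r + 1 - 1 : ℤ) = r by ring] at h
  exact h h2

lemma b_anti (hb : TopStrictAnti Γ b) {j j' : ℤ} (h1 : (Γ.top, j) ∈ Γ.verts)
    (h2 : (Γ.top, j') ∈ Γ.verts) (hjj : j ≤ j') : (b j' : ℝ) ≤ (b j : ℝ) := by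
  rcases eq_or_lt_of_le hjj with rfl | hlt
  · exact le_refl _
  · exact_mod_cast (hb j j' h1 h2 hlt).le

lemma row_anti_step (hb : TopStrictAnti Γ b) {s : (ℤ × ℤ) → ℝ} (hs : s ∈ DPoly Γ b)
    {i t : ℤ} (htop : Γ.top < i) (h1 : (i, t) ∈ Γ.verts) (h2 : (i, t + 1) ∈ Γ.verts) :
    s (i, t + 1) ≤ s (i, t) := by
  obtain ⟨jt, hjt⟩ := exists_top_vert Γ
  have h3 : (i - 1, t + 1) ∈ Γ.verts := Γ.prop3 i t h1 h2 ⟨(Γ.top, jt), hjt, htop⟩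
  have k1 : s (i, t + 1) ≤ s (i - 1, t + 1) := by
    have k := dpoly_vert Γ b hs (r := i - 1) (c := t + 1)
      (by rw [show (i - 1 + 1 : ℤ) = i by ring]; exact h2) h3
    rw [show (i - 1 + 1 : ℤ) = i by ring] at k
    exact k
  have k2 : s (i - 1, t + 1) ≤ s (i, t) := by
    have k := dpoly_diag Γ b hs (r := i - 1) (c := t)
      (by rw [show (i - 1 + 1 : ℤ) = i by ring]; exact h1) h3
    rw [show (i - 1 + 1 : ℤ) = i by ring] at k
    exact k
  linarith

lemma row_anti (hb : TopStrictAnti Γ b) {s : (ℤ × ℤ) → ℝ} (hs : s ∈ DPoly Γ b)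
    (i : ℤ) {c c' : ℤ} (h1 : (i, c) ∈ Γ.verts) (h2 : (i, c') ∈ Γ.verts) (hcc : c ≤ c') :
    s (i, c') ≤ s (i, c) := by
  have htop : Γ.top ≤ i := by have := top_le Γ h1; simpa using this
  rcases eq_or_lt_of_le htop with rfl | hlt
  · rw [hs.2.1 c h1, hs.2.1 c' h2]; exact b_anti Γ b hb h1 h2 hcc
  · have main : ∀ c'' : ℤ, c ≤ c'' → ((i, c'') ∈ Γ.verts → s (i, c'') ≤ s (i, c)) := by
      refine Int.le_induction (motive := fun c'' _ => (i, c'') ∈ Γ.verts → s (i, c'') ≤ s (i, c)) ?_ ?_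
      · intro _; exact le_refl _
      · intro t ht ihp h2'
        have hmid : (i, t) ∈ Γ.verts := row_interval Γ h1 h2' ht (by omega)
        exact le_trans (row_anti_step Γ b hb hs hlt hmid h2') (ihp hmid)
    exact main c' hcc h2

lemma exists_minmax (i : ℤ) {j0 : ℤ} (h : (i, j0) ∈ Γ.verts) :
    ∃ lo hi : ℤ, (i, lo) ∈ Γ.verts ∧ (i, hi) ∈ Γ.verts ∧
      (∀ j, (i, j) ∈ Γ.verts → lo ≤ j ∧ j ≤ hi) := by
  classical
  set F := (Γ.verts.filter (fun p => p.1 = i)).image Prod.snd with hF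
  have hmem : ∀ j : ℤ, j ∈ F ↔ (i, j) ∈ Γ.verts := by
    intro j
    simp only [hF, Finset.mem_image, Finset.mem_filter]
    constructor
    · rintro ⟨p, ⟨hp, hp1⟩, hp2⟩
      rw [show ((i, j) : ℤ × ℤ) = p from Prod.ext hp1.symm hp2.symm]; exact hp
    · intro h'; exact ⟨(i, j), ⟨h', rfl⟩, rfl⟩
  have hne : F.Nonempty := ⟨j0, (hmem j0).2 h⟩
  exact ⟨F.min' hne, F.max' hne, (hmem _).1 (F.min'_mem hne), (hmem _).1 (F.max'_mem hne),
    fun j hj => ⟨F.min'_le j ((hmem j).2 hj), F.le_max' j ((hmem j).2 hj)⟩⟩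

lemma delta_eq {g : Set ((ℤ × ℤ) → ℝ)} {p q : ℤ × ℤ} (h : (deltaGraph Γ g).Adj p q) :
    ∀ s ∈ g, s p = s q := by
  rw [deltaGraph, SimpleGraph.fromRel_adj] at h
  rcases h.2 with h' | h'
  · exact h'.2.2.2
  · intro s hs; exact (h'.2.2.2 s hs).symm

lemma bounded_of_edges (hb : TopStrictAnti Γ b) {g : Set ((ℤ × ℤ) → ℝ)}
    (hg : IsFaceOf (DPoly Γ b) g)
    (hL : ∀ i j : ℤ, (i, j) ∈ Γ.verts → (i + 1, j - 1) ∈ Γ.verts →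
          (∀ j', (i, j') ∈ Γ.verts → j ≤ j') → (∀ j', (i + 1, j') ∈ Γ.verts → j - 1 ≤ j') →
          (deltaGraph Γ g).Adj (i, j) (i + 1, j - 1))
    (hR : ∀ i j : ℤ, (i, j) ∈ Γ.verts → (i + 1, j) ∈ Γ.verts →
          (∀ j', (i, j') ∈ Γ.verts → j' ≤ j) → (∀ j', (i + 1, j') ∈ Γ.verts → j' ≤ j) →
          (deltaGraph Γ g).Adj (i, j) (i + 1, j)) :
    ∃ M : ℝ, ∀ s ∈ g, ∀ p, |s p| ≤ M := by
  obtain ⟨jt, hjt⟩ := exists_top_vert Γ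
  obtain ⟨Lt, Rt, hLt, hRt, hLR⟩ := exists_minmax Γ Γ.top hjt
  refine ⟨max |(b Lt : ℝ)| |(b Rt : ℝ)|, ?_⟩
  intro s hsg p
  have hsD : s ∈ DPoly Γ b := hg.1.1 hsg
  by_cases hp : p ∈ Γ.verts
  case neg =>
    rw [hsD.1 p hp, abs_zero]
    exact le_trans (abs_nonneg _) (le_max_left _ _)
  case pos =>
  have main : ∀ n : ℕ, ∀ j : ℤ, (Γ.top + (n : ℤ), j) ∈ Γ.verts →
      (b Rt : ℝ) ≤ s (Γ.top + (n : ℤ), j) ∧ s (Γ.top + (n : ℤ), j) ≤ (b Lt : ℝ) := by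
    intro n
    induction n with
    | zero =>
      intro j hj
      rw [show (Γ.top + ((0 : ℕ) : ℤ)) = Γ.top by simp] at hj ⊢
      rw [hsD.2.1 j hj]
      exact ⟨b_anti Γ b hb hj hRt (hLR j hj).2, b_anti Γ b hb hLt hj (hLR j hj).1⟩
    | succ n ihn =>
      intro j hj
      have hcast : (Γ.top + ((n + 1 : ℕ) : ℤ)) = (Γ.top + (n : ℤ)) + 1 := by push_cast; ring
      rw [hcast] at hj ⊢
      have hrow1 : ((Γ.top + (n : ℤ)) + 1, j) ∈ Γ.verts := hj
      obtain ⟨j0, hj0⟩ := row_nonempty Γ (i := Γ.top + (n : ℤ)) hjt hrow1 (by omega) (by omega)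
      obtain ⟨L0, R0, hL0, hR0, hb0⟩ := exists_minmax Γ (Γ.top + (n : ℤ)) hj0
      obtain ⟨L1, R1, hL1, hR1, hb1⟩ := exists_minmax Γ ((Γ.top + (n : ℤ)) + 1) hrow1
      obtain ⟨d, e, hd, he, hde⟩ := cross_rows Γ hL0 hL1
      have hdb := hb0 d hd
      have heb := hb1 e he
      have hL1R1 : L1 ≤ R1 := le_trans (hb1 j hj).1 (hb1 j hj).2
      have hR1R0 : R1 ≤ R0 := by
        by_cases hsing : L1 < R1
        · have h2 : ((Γ.top + (n : ℤ)) + 1, R1 - 1) ∈ Γ.verts :=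
            row_interval Γ hL1 hR1 (by omega) (by omega)
          have h3 := Γ.prop3 ((Γ.top + (n : ℤ)) + 1) (R1 - 1) h2
            (by rw [show (R1 - 1 + 1 : ℤ) = R1 by ring]; exact hR1)
            ⟨(Γ.top + (n : ℤ), j0), hj0, by simp⟩
          rw [show ((Γ.top + (n : ℤ)) + 1 - 1 : ℤ) = Γ.top + (n : ℤ) by ring,
            show (R1 - 1 + 1 : ℤ) = R1 by ring] at h3
          exact (hb0 _ h3).2
        · omega
      have hL1L0 : L0 - 1 ≤ L1 := by
        by_cases hsing : L1 < R1
        · have h2 : ((Γ.top + (n : ℤ)) + 1, L1 + 1) ∈ Γ.verts :=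
            row_interval Γ hL1 hR1 (by omega) (by omega)
          have h3 := Γ.prop3 ((Γ.top + (n : ℤ)) + 1) L1 hL1 h2
            ⟨(Γ.top + (n : ℤ), j0), hj0, by simp⟩
          rw [show ((Γ.top + (n : ℤ)) + 1 - 1 : ℤ) = Γ.top + (n : ℤ) by ring] at h3
          have := (hb0 _ h3).1
          omega
        · omega
      have hubL : s ((Γ.top + (n : ℤ)) + 1, L1) ≤ (b Lt : ℝ) := by
        by_cases hcase : L0 ≤ L1
        · have hmem : (Γ.top + (n : ℤ), L1) ∈ Γ.verts :=
            row_interval Γ hL0 hR0 hcase (by omega)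
          have k := dpoly_vert Γ b hsD (r := Γ.top + (n : ℤ)) (c := L1) hL1 hmem
          exact le_trans k (ihn L1 hmem).2
        · have hLL : L1 = L0 - 1 := by omega
          have hadj := hL (Γ.top + (n : ℤ)) L0 hL0
            (by rw [show (L0 - 1 : ℤ) = L1 from hLL.symm]; exact hL1)
            (fun j' hj' => (hb0 j' hj').1)
            (fun j' hj' => by have := (hb1 j' hj').1; omega)
          have heq := delta_eq Γ hadj s hsg
          rw [show (L0 - 1 : ℤ) = L1 from hLL.symm] at heq
          rw [← heq]
          exact (ihn L0 hL0).2
      have hlbR : (b Rt : ℝ) ≤ s ((Γ.top + (n : ℤ)) + 1, R1) := by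
        by_cases hcase : R1 = R0
        · have hadj := hR (Γ.top + (n : ℤ)) R0 hR0
            (hcase ▸ hR1)
            (fun j' hj' => (hb0 j' hj').2)
            (fun j' hj' => by have := (hb1 j' hj').2; omega)
          have heq := delta_eq Γ hadj s hsg
          rw [hcase]
          rw [← heq]
          exact (ihn R0 hR0).1
        · have hlt : R1 < R0 := lt_of_le_of_ne hR1R0 hcase
          have hmem : (Γ.top + (n : ℤ), R1 + 1) ∈ Γ.verts :=
            row_interval Γ hL0 hR0 (by omega) (by omega)
          have k := dpoly_diag Γ b hsD (r := Γ.top + (n : ℤ)) (c := R1) hR1 hmem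
          exact le_trans (ihn (R1 + 1) hmem).1 k
      constructor
      · exact le_trans hlbR (row_anti Γ b hb hsD _ hj hR1 (hb1 j hj).2)
      · exact le_trans (row_anti Γ b hb hsD _ hL1 hj (hb1 j hj).1) hubL
  obtain ⟨n, hn⟩ : ∃ n : ℕ, p.1 = Γ.top + (n : ℤ) :=
    ⟨(p.1 - Γ.top).toNat, by have := top_le Γ hp; omega⟩
  have hp' : (Γ.top + (n : ℤ), p.2) ∈ Γ.verts := by
    rw [show ((Γ.top + (n : ℤ), p.2) : ℤ × ℤ) = p from Prod.ext hn.symm rfl]; exact hp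
  obtain ⟨k1, k2⟩ := main n p.2 hp'
  rw [show p = ((Γ.top + (n : ℤ), p.2) : ℤ × ℤ) from Prod.ext hn rfl]
  rw [abs_le]
  constructor
  · have u1 : |(b Rt : ℝ)| ≤ max |(b Lt : ℝ)| |(b Rt : ℝ)| := le_max_right _ _
    have u2 : -(|(b Rt : ℝ)|) ≤ (b Rt : ℝ) := neg_abs_le _
    linarith
  · have u1 : |(b Lt : ℝ)| ≤ max |(b Lt : ℝ)| |(b Rt : ℝ)| := le_max_left _ _
    have u2 : (b Lt : ℝ) ≤ |(b Lt : ℝ)| := le_abs_self _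
    linarith

end Aux3
/-- Vertices reachable from `q` by moving vertically up, diagonally down-left,
or across `s0`-tight constraints (vertically down / diagonally up-right). -/
inductive ULset (Γ : OrdinaryGraph) (s0 : (ℤ × ℤ) → ℝ) (q : ℤ × ℤ) : ℤ × ℤ → Prop where
  | base : ULset Γ s0 q q
  | up (r c : ℤ) : ULset Γ s0 q (r, c) → (r - 1, c) ∈ Γ.verts → ULset Γ s0 q (r - 1, c)
  | diag (r c : ℤ) : ULset Γ s0 q (r, c) → (r + 1, c - 1) ∈ Γ.verts → ULset Γ s0 q (r + 1, c - 1)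
  | tdown (r c : ℤ) : ULset Γ s0 q (r, c) → (r + 1, c) ∈ Γ.verts →
      s0 (r + 1, c) = s0 (r, c) → ULset Γ s0 q (r + 1, c)
  | tdiag (r c : ℤ) : ULset Γ s0 q (r, c) → (r - 1, c + 1) ∈ Γ.verts →
      s0 (r - 1, c + 1) = s0 (r, c) → ULset Γ s0 q (r - 1, c + 1)

section AuxL
variable (Γ : OrdinaryGraph) (b : ℤ → ℤ)

lemma UL_inv (hb : TopStrictAnti Γ b) {s0 : (ℤ × ℤ) → ℝ} (hsD : s0 ∈ DPoly Γ b) (i j : ℤ)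
    (hp : (i, j) ∈ Γ.verts) (hq : (i + 1, j - 1) ∈ Γ.verts)
    (hleft : ∀ j', (i, j') ∈ Γ.verts → j ≤ j')
    (hlt : s0 (i, j) < s0 (i + 1, j - 1)) :
    ∀ v, ULset Γ s0 (i + 1, j - 1) v →
      v ∈ Γ.verts ∧ s0 (i + 1, j - 1) ≤ s0 v ∧ i + 1 ≤ v.1 := by
  intro v hv
  induction hv with
  | base => exact ⟨hq, le_refl _, le_refl _⟩
  | up r c hprev hmem ih =>
    obtain ⟨ih1, ih2, ih3⟩ := ih
    have ih3' : i + 1 ≤ r := ih3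
    have hval : s0 (r, c) ≤ s0 (r - 1, c) := by
      have k := dpoly_vert Γ b hsD (r := r - 1) (c := c)
        (by rw [show (r - 1 + 1 : ℤ) = r by ring]; exact ih1) hmem
      rw [show (r - 1 + 1 : ℤ) = r by ring] at k
      exact k
    refine ⟨hmem, le_trans ih2 hval, ?_⟩
    show i + 1 ≤ r - 1
    by_contra hcon
    have hri : r = i + 1 := by omega
    subst hri
    rw [show (i + 1 - 1 : ℤ) = i by ring] at hmem hval
    have hjc := hleft c hmem
    have hra := row_anti Γ b hb hsD i hp hmem hjc
    linarith
  | diag r c hprev hmem ih =>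
    obtain ⟨ih1, ih2, ih3⟩ := ih
    have ih3' : i + 1 ≤ r := ih3
    have hval : s0 (r, c) ≤ s0 (r + 1, c - 1) := by
      have k := dpoly_diag Γ b hsD (r := r) (c := c - 1) hmem
        (by rw [show (c - 1 + 1 : ℤ) = c by ring]; exact ih1)
      rw [show (c - 1 + 1 : ℤ) = c by ring] at k
      exact k
    exact ⟨hmem, le_trans ih2 hval, by show i + 1 ≤ r + 1; omega⟩
  | tdown r c hprev hmem heq ih =>
    obtain ⟨ih1, ih2, ih3⟩ := ih
    have ih3' : i + 1 ≤ r := ih3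
    exact ⟨hmem, le_trans ih2 (le_of_eq heq.symm), by show i + 1 ≤ r + 1; omega⟩
  | tdiag r c hprev hmem heq ih =>
    obtain ⟨ih1, ih2, ih3⟩ := ih
    have ih3' : i + 1 ≤ r := ih3
    refine ⟨hmem, le_trans ih2 (le_of_eq heq.symm), ?_⟩
    show i + 1 ≤ r - 1
    by_contra hcon
    have hri : r = i + 1 := by omega
    subst hri
    rw [show (i + 1 - 1 : ℤ) = i by ring] at hmem heq
    have hjc := hleft (c + 1) hmem
    have hra := row_anti Γ b hb hsD i hp hmem hjc
    linarith

lemma eqL (hb : TopStrictAnti Γ b) {g : Set ((ℤ × ℤ) → ℝ)} (hg : IsFaceOf (DPoly Γ b) g)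
    (hM : ∃ M : ℝ, ∀ s ∈ g, ∀ p, |s p| ≤ M) (i j : ℤ)
    (hp : (i, j) ∈ Γ.verts) (hq : (i + 1, j - 1) ∈ Γ.verts)
    (hleft : ∀ j', (i, j') ∈ Γ.verts → j ≤ j') :
    ∀ s0 ∈ g, s0 (i, j) = s0 (i + 1, j - 1) := by
  intro s0 hs0
  by_contra hne
  have hsD : s0 ∈ DPoly Γ b := hg.1.1 hs0
  have hle : s0 (i, j) ≤ s0 (i + 1, j - 1) := by
    have k := dpoly_diag Γ b hsD (r := i) (c := j - 1) hq
      (by rw [show (j - 1 + 1 : ℤ) = j by ring]; exact hp)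
    rw [show (j - 1 + 1 : ℤ) = j by ring] at k
    exact k
  have hlt : s0 (i, j) < s0 (i + 1, j - 1) := lt_of_le_of_ne hle hne
  have hinv := UL_inv Γ b hb hsD i j hp hq hleft hlt
  classical
  set q : ℤ × ℤ := (i + 1, j - 1) with hqd
  set w : (ℤ × ℤ) → ℝ := fun v => if ULset Γ s0 q v then 1 else 0 with hw
  have hwval1 : ∀ v, ULset Γ s0 q v → w v = 1 := fun v hv => by rw [hw]; exact if_pos hv
  have hwval0 : ∀ v, ¬ ULset Γ s0 q v → w v = 0 := fun v hv => by rw [hw]; exact if_neg hv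
  have hw01 : ∀ v, w v = 0 ∨ w v = 1 := fun v => by
    by_cases hv : ULset Γ s0 q v
    · exact Or.inr (hwval1 v hv)
    · exact Or.inl (hwval0 v hv)
  have hwq : w q = 1 := hwval1 q ULset.base
  have hwnot : ∀ v, v ∉ Γ.verts → w v = 0 := fun v hv =>
    hwval0 v (fun hvU => hv (hinv v hvU).1)
  have hwtop : ∀ j' : ℤ, ((Γ.top, j') : ℤ × ℤ) ∈ Γ.verts → w (Γ.top, j') = 0 := by
    intro j' hj'
    refine hwval0 _ (fun hvU => ?_)
    have h3 : i + 1 ≤ Γ.top := (hinv _ hvU).2.2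
    have h4 : Γ.top ≤ i := by have := top_le Γ hp; simpa using this
    omega
  have hclo1 : ∀ i' j' : ℤ, ULset Γ s0 q (i', j') → (i' - 1, j') ∈ Γ.verts →
      ULset Γ s0 q (i' - 1, j') := fun i' j' hU hm => ULset.up i' j' hU hm
  have hclo2 : ∀ i' j' : ℤ, ULset Γ s0 q (i' - 1, j' + 1) → (i', j') ∈ Γ.verts →
      ULset Γ s0 q (i', j') := by
    intro i' j' hU hm
    have k := ULset.diag (i' - 1) (j' + 1) hU
      (by rw [show (i' - 1 + 1 : ℤ) = i' by ring, show (j' + 1 - 1 : ℤ) = j' by ring]; exact hm)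
    rw [show (i' - 1 + 1 : ℤ) = i' by ring, show (j' + 1 - 1 : ℤ) = j' by ring] at k
    exact k
  have htight1 : ∀ i' j' : ℤ, (i', j') ∈ Γ.verts → (i' - 1, j') ∈ Γ.verts →
      ULset Γ s0 q (i' - 1, j') → ¬ ULset Γ s0 q (i', j') →
      s0 (i', j') < s0 (i' - 1, j') := by
    intro i' j' h1 h2 hU hnU
    rcases lt_or_eq_of_le ((hsD.2.2 i' j' h1).1 h2) with h | h
    · exact h
    · exfalso
      apply hnU
      have k := ULset.tdown (i' - 1) j' hU
        (by rw [show (i' - 1 + 1 : ℤ) = i' by ring]; exact h1)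
        (by rw [show (i' - 1 + 1 : ℤ) = i' by ring]; exact h)
      rw [show (i' - 1 + 1 : ℤ) = i' by ring] at k
      exact k
  have htight2 : ∀ i' j' : ℤ, (i', j') ∈ Γ.verts → (i' - 1, j' + 1) ∈ Γ.verts →
      ULset Γ s0 q (i', j') → ¬ ULset Γ s0 q (i' - 1, j' + 1) →
      s0 (i' - 1, j' + 1) < s0 (i', j') := by
    intro i' j' h1 h2 hU hnU
    rcases lt_or_eq_of_le ((hsD.2.2 i' j' h1).2 h2) with h | h
    · exact h
    · exact absurd (ULset.tdiag i' j' hU h2 h) hnU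
  -- slack
  set F : Finset ℝ :=
    ((Γ.verts ×ˢ Γ.verts).image fun pq => s0 pq.2 - s0 pq.1).filter (fun x => 0 < x) with hF
  set ε : ℝ := (insert (1 : ℝ) F).min' (Finset.insert_nonempty _ _) with he
  have hε1 : 0 < ε := by
    have hm := (insert (1 : ℝ) F).min'_mem (Finset.insert_nonempty _ _)
    rw [← he] at hm
    rcases Finset.mem_insert.1 hm with h | h
    · rw [h]; norm_num
    · rw [hF] at h
      exact (Finset.mem_filter.1 h).2
  have hεle : ∀ x y : ℤ × ℤ, x ∈ Γ.verts → y ∈ Γ.verts → s0 x < s0 y → ε ≤ s0 y - s0 x := by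
    intro x y hx hy hlt'
    rw [he]
    apply Finset.min'_le
    apply Finset.mem_insert_of_mem
    rw [hF, Finset.mem_filter]
    refine ⟨Finset.mem_image.2 ⟨(x, y), Finset.mem_product.2 ⟨hx, hy⟩, rfl⟩, by linarith⟩
  -- ray memberships
  have hplus : ∀ t : ℝ, 0 ≤ t → (fun v => s0 v + t * w v) ∈ DPoly Γ b := by
    intro t ht
    refine ⟨?_, ?_, ?_⟩
    · intro pp hpp
      show s0 pp + t * w pp = 0
      rw [hsD.1 pp hpp, hwnot pp hpp]; ring
    · intro j' hj'
      show s0 (Γ.top, j') + t * w (Γ.top, j') = (b j' : ℝ)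
      rw [hwtop j' hj', hsD.2.1 j' hj']; ring
    · intro i' j' h1
      constructor
      · intro h2
        show s0 (i', j') + t * w (i', j') ≤ s0 (i' - 1, j') + t * w (i' - 1, j')
        have k1 := (hsD.2.2 i' j' h1).1 h2
        have k2 : w (i', j') ≤ w (i' - 1, j') := by
          by_cases hx : ULset Γ s0 q (i', j')
          · rw [hwval1 _ hx, hwval1 _ (hclo1 i' j' hx h2)]
          · rw [hwval0 _ hx]
            rcases hw01 (i' - 1, j') with h | h <;> rw [h] <;> norm_num
        have k3 := mul_le_mul_of_nonneg_left k2 ht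
        linarith
      · intro h2
        show s0 (i' - 1, j' + 1) + t * w (i' - 1, j' + 1) ≤ s0 (i', j') + t * w (i', j')
        have k1 := (hsD.2.2 i' j' h1).2 h2
        have k2 : w (i' - 1, j' + 1) ≤ w (i', j') := by
          by_cases hx : ULset Γ s0 q (i' - 1, j' + 1)
          · rw [hwval1 _ hx, hwval1 _ (hclo2 i' j' hx h1)]
          · rw [hwval0 _ hx]
            rcases hw01 (i', j') with h | h <;> rw [h] <;> norm_num
        have k3 := mul_le_mul_of_nonneg_left k2 ht
        linarith
  have hminus : (fun v => s0 v - ε * w v) ∈ DPoly Γ b := by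
    refine ⟨?_, ?_, ?_⟩
    · intro pp hpp
      show s0 pp - ε * w pp = 0
      rw [hsD.1 pp hpp, hwnot pp hpp]; ring
    · intro j' hj'
      show s0 (Γ.top, j') - ε * w (Γ.top, j') = (b j' : ℝ)
      rw [hwtop j' hj', hsD.2.1 j' hj']; ring
    · intro i' j' h1
      constructor
      · intro h2
        show s0 (i', j') - ε * w (i', j') ≤ s0 (i' - 1, j') - ε * w (i' - 1, j')
        have k1 := (hsD.2.2 i' j' h1).1 h2
        by_cases hy : ULset Γ s0 q (i' - 1, j')
        · by_cases hx : ULset Γ s0 q (i', j')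
          · rw [hwval1 _ hx, hwval1 _ hy]; linarith
          · have hst := htight1 i' j' h1 h2 hy hx
            have hεs := hεle _ _ h1 h2 hst
            rw [hwval1 _ hy, hwval0 _ hx]; linarith
        · have hx : ¬ ULset Γ s0 q (i', j') := fun hx => hy (hclo1 i' j' hx h2)
          rw [hwval0 _ hx, hwval0 _ hy]; linarith
      · intro h2
        show s0 (i' - 1, j' + 1) - ε * w (i' - 1, j' + 1) ≤ s0 (i', j') - ε * w (i', j')
        have k1 := (hsD.2.2 i' j' h1).2 h2
        by_cases hy : ULset Γ s0 q (i', j')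
        · by_cases hx : ULset Γ s0 q (i' - 1, j' + 1)
          · rw [hwval1 _ hx, hwval1 _ hy]; linarith
          · have hst := htight2 i' j' h1 h2 hy hx
            have hεs := hεle _ _ h2 h1 hst
            rw [hwval1 _ hy, hwval0 _ hx]; linarith
        · have hx : ¬ ULset Γ s0 q (i' - 1, j' + 1) := fun hx => hy (hclo2 i' j' hx h1)
          rw [hwval0 _ hx, hwval0 _ hy]; linarith
  -- extremality gives the whole ray inside g, contradicting boundedness
  obtain ⟨M, hMb⟩ := hM
  have hseg : s0 ∈ openSegment ℝ (fun v => s0 v - ε * w v) (fun v => s0 v + ε * w v) := by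
    refine ⟨1/2, 1/2, by norm_num, by norm_num, by norm_num, ?_⟩
    funext v
    simp only [Pi.add_apply, Pi.smul_apply, smul_eq_mul]
    ring
  obtain hy2 := hg.1.2 (hplus ε (le_of_lt hε1)) hminus hs0 (by rw [openSegment_symm]; exact hseg)
  have hM0 : 0 ≤ M := le_trans (abs_nonneg _) (hMb s0 hs0 q)
  set T : ℝ := ε + M + |s0 q| + 1 with hT
  have habs0 := abs_nonneg (s0 q)
  have hTε : ε < T := by rw [hT]; linarith
  have hT0 : (0 : ℝ) < T := by linarith
  have hseg2 : (fun v => s0 v + ε * w v) ∈ openSegment ℝ s0 (fun v => s0 v + T * w v) := by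
    refine ⟨1 - ε / T, ε / T, ?_, by positivity, by ring, ?_⟩
    · have : ε / T < 1 := (div_lt_one hT0).2 hTε
      linarith
    · funext v
      simp only [Pi.add_apply, Pi.smul_apply, smul_eq_mul]
      field_simp
      ring
  obtain hy3 := hg.1.2 (hplus T (le_of_lt hT0)) (hg.1.1 hs0) hy2 (by rw [openSegment_symm]; exact hseg2)
  have hfin : |s0 q + T * w q| ≤ M := hMb _ hy3 q
  rw [hwq, mul_one] at hfin
  have h6 := (abs_le.1 hfin).2
  have h7 := neg_abs_le (s0 q)
  rw [hT] at h6
  linarith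

end AuxL
/-- Mirror image of `ULset`: vertices reachable from `q` by moving vertically down,
diagonally up-right, or across `s0`-tight constraints (vertically up / diagonally
down-left). -/
inductive URset (Γ : OrdinaryGraph) (s0 : (ℤ × ℤ) → ℝ) (q : ℤ × ℤ) : ℤ × ℤ → Prop where
  | base : URset Γ s0 q q
  | down (r c : ℤ) : URset Γ s0 q (r, c) → (r + 1, c) ∈ Γ.verts → URset Γ s0 q (r + 1, c)
  | diagup (r c : ℤ) : URset Γ s0 q (r, c) → (r - 1, c + 1) ∈ Γ.verts → URset Γ s0 q (r - 1, c + 1)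
  | tup (r c : ℤ) : URset Γ s0 q (r, c) → (r - 1, c) ∈ Γ.verts →
      s0 (r - 1, c) = s0 (r, c) → URset Γ s0 q (r - 1, c)
  | tdiagdown (r c : ℤ) : URset Γ s0 q (r, c) → (r + 1, c - 1) ∈ Γ.verts →
      s0 (r + 1, c - 1) = s0 (r, c) → URset Γ s0 q (r + 1, c - 1)

section AuxR
variable (Γ : OrdinaryGraph) (b : ℤ → ℤ)

lemma UR_inv (hb : TopStrictAnti Γ b) {s0 : (ℤ × ℤ) → ℝ} (hsD : s0 ∈ DPoly Γ b) (i j : ℤ)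
    (hp : (i, j) ∈ Γ.verts) (hq : (i + 1, j) ∈ Γ.verts)
    (hright : ∀ j', (i, j') ∈ Γ.verts → j' ≤ j)
    (hlt : s0 (i + 1, j) < s0 (i, j)) :
    ∀ v, URset Γ s0 (i + 1, j) v →
      v ∈ Γ.verts ∧ s0 v ≤ s0 (i + 1, j) ∧ i + 1 ≤ v.1 := by
  intro v hv
  induction hv with
  | base => exact ⟨hq, le_refl _, le_refl _⟩
  | down r c hprev hmem ih =>
    obtain ⟨ih1, ih2, ih3⟩ := ih
    have ih3' : i + 1 ≤ r := ih3
    have hval : s0 (r + 1, c) ≤ s0 (r, c) := dpoly_vert Γ b hsD hmem ih1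
    exact ⟨hmem, le_trans hval ih2, by show i + 1 ≤ r + 1; omega⟩
  | diagup r c hprev hmem ih =>
    obtain ⟨ih1, ih2, ih3⟩ := ih
    have ih3' : i + 1 ≤ r := ih3
    have hval : s0 (r - 1, c + 1) ≤ s0 (r, c) := by
      have k := dpoly_diag Γ b hsD (r := r - 1) (c := c)
        (by rw [show (r - 1 + 1 : ℤ) = r by ring]; exact ih1) hmem
      rw [show (r - 1 + 1 : ℤ) = r by ring] at k
      exact k
    refine ⟨hmem, le_trans hval ih2, ?_⟩
    show i + 1 ≤ r - 1
    by_contra hcon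
    have hri : r = i + 1 := by omega
    subst hri
    rw [show (i + 1 - 1 : ℤ) = i by ring] at hmem hval
    have hjc := hright (c + 1) hmem
    have hra := row_anti Γ b hb hsD i hmem hp hjc
    linarith
  | tup r c hprev hmem heq ih =>
    obtain ⟨ih1, ih2, ih3⟩ := ih
    have ih3' : i + 1 ≤ r := ih3
    refine ⟨hmem, le_trans (le_of_eq heq) ih2, ?_⟩
    show i + 1 ≤ r - 1
    by_contra hcon
    have hri : r = i + 1 := by omega
    subst hri
    rw [show (i + 1 - 1 : ℤ) = i by ring] at hmem heq
    have hjc := hright c hmem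
    have hra := row_anti Γ b hb hsD i hmem hp hjc
    linarith
  | tdiagdown r c hprev hmem heq ih =>
    obtain ⟨ih1, ih2, ih3⟩ := ih
    have ih3' : i + 1 ≤ r := ih3
    exact ⟨hmem, le_trans (le_of_eq heq) ih2, by show i + 1 ≤ r + 1; omega⟩

lemma eqR (hb : TopStrictAnti Γ b) {g : Set ((ℤ × ℤ) → ℝ)} (hg : IsFaceOf (DPoly Γ b) g)
    (hM : ∃ M : ℝ, ∀ s ∈ g, ∀ p, |s p| ≤ M) (i j : ℤ)
    (hp : (i, j) ∈ Γ.verts) (hq : (i + 1, j) ∈ Γ.verts)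
    (hright : ∀ j', (i, j') ∈ Γ.verts → j' ≤ j) :
    ∀ s0 ∈ g, s0 (i, j) = s0 (i + 1, j) := by
  intro s0 hs0
  by_contra hne
  have hsD : s0 ∈ DPoly Γ b := hg.1.1 hs0
  have hle : s0 (i + 1, j) ≤ s0 (i, j) := dpoly_vert Γ b hsD hq hp
  have hlt : s0 (i + 1, j) < s0 (i, j) := lt_of_le_of_ne hle (fun h => hne h.symm)
  have hinv := UR_inv Γ b hb hsD i j hp hq hright hlt
  classical
  set q : ℤ × ℤ := (i + 1, j) with hqd
  set w : (ℤ × ℤ) → ℝ := fun v => if URset Γ s0 q v then 1 else 0 with hw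
  have hwval1 : ∀ v, URset Γ s0 q v → w v = 1 := fun v hv => by rw [hw]; exact if_pos hv
  have hwval0 : ∀ v, ¬ URset Γ s0 q v → w v = 0 := fun v hv => by rw [hw]; exact if_neg hv
  have hwq : w q = 1 := hwval1 q URset.base
  have hwnot : ∀ v, v ∉ Γ.verts → w v = 0 := fun v hv =>
    hwval0 v (fun hvU => hv (hinv v hvU).1)
  have hwtop : ∀ j' : ℤ, ((Γ.top, j') : ℤ × ℤ) ∈ Γ.verts → w (Γ.top, j') = 0 := by
    intro j' hj'
    refine hwval0 _ (fun hvU => ?_)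
    have h3 : i + 1 ≤ Γ.top := (hinv _ hvU).2.2
    have h4 : Γ.top ≤ i := by have := top_le Γ hp; simpa using this
    omega
  have hclo1 : ∀ i' j' : ℤ, URset Γ s0 q (i' - 1, j') → (i', j') ∈ Γ.verts →
      URset Γ s0 q (i', j') := by
    intro i' j' hU hm
    have k := URset.down (i' - 1) j' hU
      (by rw [show (i' - 1 + 1 : ℤ) = i' by ring]; exact hm)
    rw [show (i' - 1 + 1 : ℤ) = i' by ring] at k
    exact k
  have hclo2 : ∀ i' j' : ℤ, URset Γ s0 q (i', j') → (i' - 1, j' + 1) ∈ Γ.verts →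
      URset Γ s0 q (i' - 1, j' + 1) := fun i' j' hU hm => URset.diagup i' j' hU hm
  have htight1 : ∀ i' j' : ℤ, (i', j') ∈ Γ.verts → (i' - 1, j') ∈ Γ.verts →
      URset Γ s0 q (i', j') → ¬ URset Γ s0 q (i' - 1, j') →
      s0 (i', j') < s0 (i' - 1, j') := by
    intro i' j' h1 h2 hU hnU
    rcases lt_or_eq_of_le ((hsD.2.2 i' j' h1).1 h2) with h | h
    · exact h
    · exact absurd (URset.tup i' j' hU h2 h.symm) hnU
  have htight2 : ∀ i' j' : ℤ, (i', j') ∈ Γ.verts → (i' - 1, j' + 1) ∈ Γ.verts →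
      URset Γ s0 q (i' - 1, j' + 1) → ¬ URset Γ s0 q (i', j') →
      s0 (i' - 1, j' + 1) < s0 (i', j') := by
    intro i' j' h1 h2 hU hnU
    rcases lt_or_eq_of_le ((hsD.2.2 i' j' h1).2 h2) with h | h
    · exact h
    · exfalso
      apply hnU
      have k := URset.tdiagdown (i' - 1) (j' + 1) hU
        (by rw [show (i' - 1 + 1 : ℤ) = i' by ring, show (j' + 1 - 1 : ℤ) = j' by ring]; exact h1)
        (by rw [show (i' - 1 + 1 : ℤ) = i' by ring, show (j' + 1 - 1 : ℤ) = j' by ring]; exact h.symm)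
      rw [show (i' - 1 + 1 : ℤ) = i' by ring, show (j' + 1 - 1 : ℤ) = j' by ring] at k
      exact k
  set F : Finset ℝ :=
    ((Γ.verts ×ˢ Γ.verts).image fun pq => s0 pq.2 - s0 pq.1).filter (fun x => 0 < x) with hF
  set ε : ℝ := (insert (1 : ℝ) F).min' (Finset.insert_nonempty _ _) with he
  have hε1 : 0 < ε := by
    have hm := (insert (1 : ℝ) F).min'_mem (Finset.insert_nonempty _ _)
    rw [← he] at hm
    rcases Finset.mem_insert.1 hm with h | h
    · rw [h]; norm_num
    · rw [hF] at h
      exact (Finset.mem_filter.1 h).2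
  have hεle : ∀ x y : ℤ × ℤ, x ∈ Γ.verts → y ∈ Γ.verts → s0 x < s0 y → ε ≤ s0 y - s0 x := by
    intro x y hx hy hlt'
    rw [he]
    apply Finset.min'_le
    apply Finset.mem_insert_of_mem
    rw [hF, Finset.mem_filter]
    refine ⟨Finset.mem_image.2 ⟨(x, y), Finset.mem_product.2 ⟨hx, hy⟩, rfl⟩, by linarith⟩
  have hminus : ∀ t : ℝ, 0 ≤ t → (fun v => s0 v - t * w v) ∈ DPoly Γ b := by
    intro t ht
    refine ⟨?_, ?_, ?_⟩
    · intro pp hpp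
      show s0 pp - t * w pp = 0
      rw [hsD.1 pp hpp, hwnot pp hpp]; ring
    · intro j' hj'
      show s0 (Γ.top, j') - t * w (Γ.top, j') = (b j' : ℝ)
      rw [hwtop j' hj', hsD.2.1 j' hj']; ring
    · intro i' j' h1
      constructor
      · intro h2
        show s0 (i', j') - t * w (i', j') ≤ s0 (i' - 1, j') - t * w (i' - 1, j')
        have k1 := (hsD.2.2 i' j' h1).1 h2
        have k2 : w (i' - 1, j') ≤ w (i', j') := by
          by_cases hy : URset Γ s0 q (i' - 1, j')
          · rw [hwval1 _ hy, hwval1 _ (hclo1 i' j' hy h1)]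
          · rw [hwval0 _ hy]
            by_cases hx : URset Γ s0 q (i', j')
            · rw [hwval1 _ hx]; norm_num
            · rw [hwval0 _ hx]
        have k3 := mul_le_mul_of_nonneg_left k2 ht
        linarith
      · intro h2
        show s0 (i' - 1, j' + 1) - t * w (i' - 1, j' + 1) ≤ s0 (i', j') - t * w (i', j')
        have k1 := (hsD.2.2 i' j' h1).2 h2
        have k2 : w (i', j') ≤ w (i' - 1, j' + 1) := by
          by_cases hy : URset Γ s0 q (i', j')
          · rw [hwval1 _ hy, hwval1 _ (hclo2 i' j' hy h2)]
          · rw [hwval0 _ hy]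
            by_cases hx : URset Γ s0 q (i' - 1, j' + 1)
            · rw [hwval1 _ hx]; norm_num
            · rw [hwval0 _ hx]
        have k3 := mul_le_mul_of_nonneg_left k2 ht
        linarith
  have hplus : (fun v => s0 v + ε * w v) ∈ DPoly Γ b := by
    refine ⟨?_, ?_, ?_⟩
    · intro pp hpp
      show s0 pp + ε * w pp = 0
      rw [hsD.1 pp hpp, hwnot pp hpp]; ring
    · intro j' hj'
      show s0 (Γ.top, j') + ε * w (Γ.top, j') = (b j' : ℝ)
      rw [hwtop j' hj', hsD.2.1 j' hj']; ring
    · intro i' j' h1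
      constructor
      · intro h2
        show s0 (i', j') + ε * w (i', j') ≤ s0 (i' - 1, j') + ε * w (i' - 1, j')
        have k1 := (hsD.2.2 i' j' h1).1 h2
        by_cases hx : URset Γ s0 q (i', j')
        · by_cases hy : URset Γ s0 q (i' - 1, j')
          · rw [hwval1 _ hx, hwval1 _ hy]; linarith
          · have hst := htight1 i' j' h1 h2 hx hy
            have hεs := hεle _ _ h1 h2 hst
            rw [hwval1 _ hx, hwval0 _ hy]; linarith
        · have hy : ¬ URset Γ s0 q (i' - 1, j') := fun hy => hx (hclo1 i' j' hy h1)
          rw [hwval0 _ hx, hwval0 _ hy]; linarith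
      · intro h2
        show s0 (i' - 1, j' + 1) + ε * w (i' - 1, j' + 1) ≤ s0 (i', j') + ε * w (i', j')
        have k1 := (hsD.2.2 i' j' h1).2 h2
        by_cases hx : URset Γ s0 q (i' - 1, j' + 1)
        · by_cases hy : URset Γ s0 q (i', j')
          · rw [hwval1 _ hx, hwval1 _ hy]; linarith
          · have hst := htight2 i' j' h1 h2 hx hy
            have hεs := hεle _ _ h2 h1 hst
            rw [hwval1 _ hx, hwval0 _ hy]; linarith
        · have hy0 : w (i', j') ≤ 1 := by
            by_cases hy : URset Γ s0 q (i', j')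
            · rw [hwval1 _ hy]
            · rw [hwval0 _ hy]; norm_num
          rw [hwval0 _ hx]
          have hw0 : (0 : ℝ) ≤ w (i', j') := by
            by_cases hy : URset Γ s0 q (i', j')
            · rw [hwval1 _ hy]; norm_num
            · rw [hwval0 _ hy]
          linarith [mul_nonneg (le_of_lt hε1) hw0]
  obtain ⟨M, hMb⟩ := hM
  have hseg : s0 ∈ openSegment ℝ (fun v => s0 v + ε * w v) (fun v => s0 v - ε * w v) := by
    refine ⟨1/2, 1/2, by norm_num, by norm_num, by norm_num, ?_⟩
    funext v
    simp only [Pi.add_apply, Pi.smul_apply, smul_eq_mul]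
    ring
  obtain hy2 := hg.1.2 (hminus ε (le_of_lt hε1)) hplus hs0 (by rw [openSegment_symm]; exact hseg)
  have hM0 : 0 ≤ M := le_trans (abs_nonneg _) (hMb s0 hs0 q)
  set T : ℝ := ε + M + |s0 q| + 1 with hT
  have habs0 := abs_nonneg (s0 q)
  have hTε : ε < T := by rw [hT]; linarith
  have hT0 : (0 : ℝ) < T := by linarith
  have hseg2 : (fun v => s0 v - ε * w v) ∈ openSegment ℝ s0 (fun v => s0 v - T * w v) := by
    refine ⟨1 - ε / T, ε / T, ?_, by positivity, by ring, ?_⟩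
    · have : ε / T < 1 := (div_lt_one hT0).2 hTε
      linarith
    · funext v
      simp only [Pi.add_apply, Pi.smul_apply, smul_eq_mul]
      field_simp
      ring
  obtain hy3 := hg.1.2 (hminus T (le_of_lt hT0)) (hg.1.1 hs0) hy2 (by rw [openSegment_symm]; exact hseg2)
  have hfin : |s0 q - T * w q| ≤ M := hMb _ hy3 q
  rw [hwq, mul_one] at hfin
  have h6 := (abs_le.1 hfin).1
  have h7 := le_abs_self (s0 q)
  rw [hT] at h6
  linarith

end AuxR

/-- A face `g` of `D_Γ(b_1, ..., b_{l_Γ})` (with the `b_i` pairwise distinct) is bounded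
if and only if its subgraph `Δ_g` includes every edge joining two vertices of `Γ` that
are both leftmost in their respective rows, and every edge joining two vertices of `Γ`
that are both rightmost in their respective rows. -/
theorem stmt14 (Γ : OrdinaryGraph) (b : ℤ → ℤ) (hb : TopStrictAnti Γ b)
    (g : Set ((ℤ × ℤ) → ℝ)) (hg : IsFaceOf (DPoly Γ b) g) :
    (∃ M : ℝ, ∀ s ∈ g, ∀ p, |s p| ≤ M) ↔
      ((∀ i j : ℤ, (i, j) ∈ Γ.verts → (i + 1, j - 1) ∈ Γ.verts →
          (∀ j', (i, j') ∈ Γ.verts → j ≤ j') → (∀ j', (i + 1, j') ∈ Γ.verts → j - 1 ≤ j') →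
          (deltaGraph Γ g).Adj (i, j) (i + 1, j - 1)) ∧
       (∀ i j : ℤ, (i, j) ∈ Γ.verts → (i + 1, j) ∈ Γ.verts →
          (∀ j', (i, j') ∈ Γ.verts → j' ≤ j) → (∀ j', (i + 1, j') ∈ Γ.verts → j' ≤ j) →
          (deltaGraph Γ g).Adj (i, j) (i + 1, j))) := by
  constructor
  · intro hM
    constructor
    · intro i j hp hq hleft0 _hleft1
      rw [deltaGraph, SimpleGraph.fromRel_adj]
      refine ⟨?_, Or.inl ⟨hp, hq, ?_, ?_⟩⟩
      · intro hcon
        rw [Prod.ext_iff] at hcon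
        simp only [] at hcon
        omega
      · exact Or.inr (Or.inr (Or.inr rfl))
      · exact eqL Γ b hb hg hM i j hp hq hleft0
    · intro i j hp hq hright0 _hright1
      rw [deltaGraph, SimpleGraph.fromRel_adj]
      refine ⟨?_, Or.inl ⟨hp, hq, ?_, ?_⟩⟩
      · intro hcon
        rw [Prod.ext_iff] at hcon
        simp only [] at hcon
        omega
      · exact Or.inr (Or.inr (Or.inl rfl))
      · exact eqR Γ b hb hg hM i j hp hq hright0
  · rintro ⟨hL, hR⟩
    exact bounded_of_edges Γ b hb hg hL hR
end
end

section
/- A point v of the infinite-dimensional polyhedron Π is a vertex (minimal face) of Π if and only if for every integer i at least one of the equalities v_i = 0 or χ_i(v) = k holds, where χ_i(v) = v_{i-n+1} + ... + v_i. -/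
open scoped BigOperators Classical

noncomputable section

/-- The window sum `χ_i(x) = x_{i-n+1} + ... + x_i`. -/
def chiW (n : ℕ) (x : ℤ → ℝ) (i : ℤ) : ℝ := ∑ l ∈ Finset.Icc (i - n + 1) i, x l

/-- The level `k = a_0 + ... + a_{n-1}`. -/
def klev (n : ℕ) (a : ℤ → ℤ) : ℤ := ∑ l ∈ Finset.Icc (0 : ℤ) ((n : ℤ) - 1), a l

/-- The affine space `V` of real sequences vanishing far to the right and equal to the
(`n`-periodic) sequence `a` far to the left. -/
def Vspace (n : ℕ) (a : ℤ → ℤ) : Set (ℤ → ℝ) :=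
  {x | (∃ N : ℤ, ∀ i, N ≤ i → x i = 0) ∧ (∃ N : ℤ, ∀ i, i ≤ N → x i = (a i : ℝ))}

/-- The infinite-dimensional polyhedron `Π ⊂ V`, cut out by the inequalities `x_i ≥ 0`
and `χ_i(x) ≤ k` for all `i ∈ ℤ`. -/
def PiPoly (n : ℕ) (a : ℤ → ℤ) : Set (ℤ → ℝ) :=
  {x | x ∈ Vspace n a ∧ (∀ i, 0 ≤ x i) ∧ ∀ i, chiW n x i ≤ (klev n a : ℝ)}

/-- A face of `Π`: a nonempty intersection of `Π` with some collection of the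
hyperplanes `E_i = {x_i = 0}` and `H_i = {χ_i(x) = k}`. -/
def IsFacePi (n : ℕ) (a : ℤ → ℤ) (f : Set (ℤ → ℝ)) : Prop :=
  f.Nonempty ∧ ∃ S T : Set ℤ,
    f = PiPoly n a ∩ (⋂ i ∈ S, {x | x i = 0}) ∩ (⋂ i ∈ T, {x | chiW n x i = (klev n a : ℝ)})

lemma sum_Icc_eq_sum_Ico_add (f : ℤ → ℝ) {b c : ℤ} (h : b ≤ c) :
    ∑ l ∈ Finset.Icc b c, f l = (∑ l ∈ Finset.Ico b c, f l) + f c := by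
  rw [← Finset.Ico_insert_right h, Finset.sum_insert (by simp)]
  ring

lemma Icc_pred_eq_Ico (b c : ℤ) : Finset.Icc b (c - 1) = Finset.Ico b c := by
  ext z; simp only [Finset.mem_Icc, Finset.mem_Ico]; omega

lemma sum_Icc_eq_add_sum (f : ℤ → ℝ) {b c : ℤ} (h : b ≤ c) :
    ∑ l ∈ Finset.Icc b c, f l = f b + ∑ l ∈ Finset.Icc (b + 1) c, f l := by
  have h2 : Finset.Icc (b + 1) c = Finset.Ioc b c := by
    ext z; simp only [Finset.mem_Icc, Finset.mem_Ioc]; omega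
  rw [h2, ← Finset.Ioc_insert_left h, Finset.sum_insert (by simp)]

noncomputable def dd (n : ℕ) (Z : ℤ → Prop) (i₀ : ℤ) (i : ℤ) : ℝ :=
  if h1 : i < i₀ then 0
  else if h2 : i = i₀ then -1
  else if Z i then
    -(∑ l ∈ (Finset.Ico (i - n + 1) i).attach, dd n Z i₀ l.1)
  else 0
termination_by (i - i₀).toNat
decreasing_by
  have hl := l.2
  simp only [Finset.mem_Ico] at hl
  omega

lemma dd_lt {n Z i₀ i} (h : i < i₀) : dd n Z i₀ i = 0 := by
  rw [dd]; simp [h]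

lemma dd_self {n Z i₀} : dd n Z i₀ i₀ = -1 := by
  rw [dd]; simp

lemma dd_not {n Z i₀ i} (h : i₀ < i) (hZ : ¬ Z i) : dd n Z i₀ i = 0 := by
  rw [dd]; simp [not_lt.2 h.le, h.ne', hZ]

lemma dd_Z {n Z i₀ i} (h : i₀ < i) (hZ : Z i) :
    dd n Z i₀ i = -(∑ l ∈ Finset.Ico (i - n + 1) i, dd n Z i₀ l) := by
  rw [dd]
  simp only [not_lt.2 h.le, h.ne', hZ, dif_neg, if_pos, dite_false, ite_true]
  rw [Finset.sum_attach]

lemma dd_chi {n : ℕ} {Z : ℤ → Prop} {i₀ i : ℤ} (hn : 1 ≤ n) (h : i₀ < i) (hZ : Z i) :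
    ∑ l ∈ Finset.Icc (i - n + 1) i, dd n Z i₀ l = 0 := by
  rw [sum_Icc_eq_sum_Ico_add _ (by omega), dd_Z h hZ]
  ring


lemma windowFact {n : ℕ} {a : ℤ → ℤ} {v : ℤ → ℝ} (hn : 1 ≤ n) (hv : v ∈ PiPoly n a)
    {i : ℤ} (h0 : v i = 0) (h1 : chiW n v i = (klev n a : ℝ)) :
    chiW n v (i - 1) = (klev n a : ℝ) ∧ v (i - n) = 0 := by
  obtain ⟨hV, hpos, hchi⟩ := hv
  have e1 : chiW n v i = (∑ l ∈ Finset.Ico (i - n + 1) i, v l) + v i :=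
    sum_Icc_eq_sum_Ico_add _ (by omega)
  have e2 : chiW n v (i - 1) = v (i - n) + ∑ l ∈ Finset.Ico (i - n + 1) i, v l := by
    have h3 : i - 1 - n + 1 = i - n := by ring
    unfold chiW
    rw [h3, sum_Icc_eq_add_sum _ (by omega : i - (n : ℤ) ≤ i - 1),
      show i - (n : ℤ) + 1 = i - n + 1 by ring, Icc_pred_eq_Ico]
  have hle := hchi (i - 1)
  have hnn : (0 : ℝ) ≤ v (i - n) := hpos _
  constructor
  · rw [e2]; rw [e1, h0, add_zero] at h1; linarith [h1 ▸ (e2 ▸ hle)]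
  · rw [e1, h0, add_zero] at h1
    rw [e2, h1] at hle
    linarith

lemma dd_vanish {n : ℕ} {a : ℤ → ℤ} {v : ℤ → ℝ} (hn : 1 ≤ n) (hv : v ∈ PiPoly n a)
    {i₀ : ℤ} (h0 : v i₀ ≠ 0) (h1 : chiW n v i₀ ≠ (klev n a : ℝ)) :
    ∀ i, i₀ < i → v i = 0 →
      dd n (fun j => chiW n v j = (klev n a : ℝ)) i₀ i = 0 := by
  set Z : ℤ → Prop := fun j => chiW n v j = (klev n a : ℝ) with hZdef
  have main : ∀ m : ℕ, ∀ i, i₀ < i → i ≤ i₀ + m → v i = 0 → dd n Z i₀ i = 0 := by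
    intro m
    induction m with
    | zero => intro i hlt hle _; omega
    | succ m ih =>
      intro i hlt hle hv0
      by_cases hZ : Z i
      · have hfact := windowFact hn hv hv0 hZ
        have hi1 : i₀ < i - 1 := by
          rcases lt_or_eq_of_le (by omega : i₀ ≤ i - 1) with h | h
          · exact h
          · exact absurd (h ▸ hfact.1) h1
        have hchain : ∑ l ∈ Finset.Icc (i - 1 - n + 1) (i - 1), dd n Z i₀ l = 0 :=
          dd_chi hn hi1 hfact.1
        have hin : dd n Z i₀ (i - n) = 0 := by
          rcases lt_trichotomy (i - (n : ℤ)) i₀ with h | h | h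
          · exact dd_lt h
          · exact absurd (h ▸ hfact.2) h0
          · exact ih (i - n) h (by omega) hfact.2
        rw [show i - 1 - (n : ℤ) + 1 = i - n by ring,
          sum_Icc_eq_add_sum _ (by omega : i - (n : ℤ) ≤ i - 1), hin, zero_add,
          show i - (n : ℤ) + 1 = i - n + 1 by ring, Icc_pred_eq_Ico] at hchain
        rw [dd_Z hlt hZ, hchain, neg_zero]
      · exact dd_not hlt hZ
  intro i h h'
  exact main (i - i₀).toNat i h (by omega) h'

lemma chiW_add_mul (n : ℕ) (x z : ℤ → ℝ) (t : ℝ) (j : ℤ) :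
    chiW n (fun i => x i + t * z i) j = chiW n x j + t * chiW n z j := by
  simp [chiW, Finset.sum_add_distrib, Finset.mul_sum]

lemma exists_dir {n : ℕ} {a : ℤ → ℤ} {v : ℤ → ℝ} (hn1 : 1 ≤ n) (hv : v ∈ PiPoly n a)
    {i₀ N : ℤ} (h0 : v i₀ ≠ 0) (h1 : chiW n v i₀ ≠ (klev n a : ℝ))
    (hN : ∀ i, N ≤ i → v i = 0) (hKpos : (0 : ℝ) < (klev n a : ℝ)) :
    ∃ d : ℤ → ℝ, d i₀ = -1 ∧ (∀ i, v i = 0 → d i = 0) ∧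
      (∀ j, chiW n v j = (klev n a : ℝ) → chiW n d j = 0) ∧
      (∀ i, i < i₀ → d i = 0) ∧ (∀ i, N + n ≤ i → d i = 0) := by
  set Z : ℤ → Prop := fun j => chiW n v j = (klev n a : ℝ) with hZ
  refine ⟨dd n Z i₀, dd_self, ?_, ?_, fun i h => dd_lt h, ?_⟩
  · intro i hi
    rcases lt_trichotomy i i₀ with h | h | h
    · exact dd_lt h
    · exact absurd (h ▸ hi) h0
    · exact dd_vanish hn1 hv h0 h1 i h hi
  · intro j hj
    rcases lt_trichotomy j i₀ with h | h | h
    · unfold chiW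
      apply Finset.sum_eq_zero
      intro l hl
      simp only [Finset.mem_Icc] at hl
      exact dd_lt (by omega)
    · exact absurd (h ▸ hj) h1
    · exact dd_chi hn1 h hj
  · intro i hi
    have hii : i₀ < i := by
      by_contra h
      push_neg at h
      exact h0 (hN i₀ (by omega))
    apply dd_not hii
    intro hZi
    have hz : chiW n v i = 0 := by
      unfold chiW
      apply Finset.sum_eq_zero
      intro l hl
      simp only [Finset.mem_Icc] at hl
      exact hN l (by omega)
    have hZi' : chiW n v i = (klev n a : ℝ) := hZi
    linarith [hZi', hz]

/-- A point `v ∈ Π` is a vertex of `Π` (i.e. belongs to a minimal element of the face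
lattice of `Π`) if and only if for every integer `i` at least one of the equalities
`v_i = 0` or `χ_i(v) = k` holds. -/
theorem stmt17 (n : ℕ) (hn : 2 ≤ n) (a : ℤ → ℤ)
    (hper : ∀ i, a (i + n) = a i) (hpos : ∀ i, 0 ≤ a i)
    (v : ℤ → ℝ) (hv : v ∈ PiPoly n a) :
    (∃ f, IsFacePi n a f ∧ v ∈ f ∧ ∀ g, IsFacePi n a g → g ⊆ f → g = f) ↔
      ∀ i : ℤ, v i = 0 ∨ chiW n v i = (klev n a : ℝ) := by
  have hn1 : 1 ≤ n := by omega
  constructor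
  · -- forward
    rintro ⟨f, ⟨hfne, S, T, hfeq⟩, hvf, hmin⟩
    by_contra hcon
    push_neg at hcon
    obtain ⟨i₀, h0, h1⟩ := hcon
    rw [hfeq] at hvf
    obtain ⟨N, hN⟩ := hv.1.1
    obtain ⟨M, hM⟩ := hv.1.2
    have hvpos := hv.2.1
    have hvchi := hv.2.2
    have hvI0 : 0 < v i₀ := lt_of_le_of_ne (hvpos i₀) (Ne.symm h0)
    have hchilt : chiW n v i₀ < (klev n a : ℝ) := lt_of_le_of_ne (hvchi i₀) h1
    have hsingle : v i₀ ≤ chiW n v i₀ := by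
      unfold chiW
      exact Finset.single_le_sum (fun l _ => hvpos l)
        (Finset.mem_Icc.2 ⟨by omega, le_refl _⟩)
    have hKpos : (0 : ℝ) < (klev n a : ℝ) := by linarith
    have hNi₀ : i₀ < N := by
      by_contra h
      push_neg at h
      exact h0 (hN i₀ h)
    obtain ⟨d, hdi₀, F0, FZ, Flt, F6⟩ := exists_dir hn1 hv h0 h1 hN hKpos
    have Fbox_d : ∀ i : ℤ, d i ≠ 0 → i₀ ≤ i ∧ i ≤ N + 2 * n := by
      intro i hi
      constructor
      · by_contra h; push_neg at h; exact hi (Flt i h)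
      · by_contra h; push_neg at h; exact hi (F6 i (by omega))
    have Fbox_chi : ∀ j : ℤ, chiW n d j ≠ 0 → i₀ ≤ j ∧ j ≤ N + 2 * n := by
      intro j hj
      constructor
      · by_contra h; push_neg at h
        apply hj; unfold chiW
        apply Finset.sum_eq_zero
        intro l hl
        simp only [Finset.mem_Icc] at hl
        exact Flt l (by omega)
      · by_contra h; push_neg at h
        apply hj; unfold chiW
        apply Finset.sum_eq_zero
        intro l hl
        simp only [Finset.mem_Icc] at hl
        exact F6 l (by omega)
    -- the finite candidate set for the step size
    set A : Finset ℤ := (Finset.Icc i₀ (N + 2 * n)).filter (fun i => d i < 0) with hA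
    set B : Finset ℤ := (Finset.Icc i₀ (N + 2 * n)).filter (fun j => 0 < chiW n d j) with hB
    set Ts : Finset ℝ := A.image (fun i => v i / (-d i)) ∪
      B.image (fun j => ((klev n a : ℝ) - chiW n v j) / chiW n d j) with hTs
    have hi₀A : i₀ ∈ A := by
      rw [hA, Finset.mem_filter]
      refine ⟨Finset.mem_Icc.2 ⟨le_refl _, by omega⟩, by rw [hdi₀]; norm_num⟩
    have hTne : Ts.Nonempty :=
      ⟨_, Finset.mem_union_left _ (Finset.mem_image_of_mem _ hi₀A)⟩
    set t : ℝ := Ts.min' hTne with ht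
    have hvz : ∀ i : ℤ, d i ≠ 0 → 0 < v i := by
      intro i hdi
      rcases eq_or_lt_of_le (hvpos i) with h | h
      · exact absurd (F0 i h.symm) hdi
      · exact h
    have hvchne : ∀ j : ℤ, chiW n d j ≠ 0 → chiW n v j < (klev n a : ℝ) := by
      intro j hj
      rcases eq_or_lt_of_le (hvchi j) with h | h
      · exact absurd (FZ j h) hj
      · exact h
    have htpos : 0 < t := by
      rw [ht, Finset.lt_min'_iff]
      intro s hs
      rw [hTs, Finset.mem_union] at hs
      rcases hs with hs | hs
      · obtain ⟨i, hiA, rfl⟩ := Finset.mem_image.1 hs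
        rw [hA, Finset.mem_filter] at hiA
        exact div_pos (hvz i (ne_of_lt hiA.2)) (by linarith [hiA.2])
      · obtain ⟨j, hjB, rfl⟩ := Finset.mem_image.1 hs
        rw [hB, Finset.mem_filter] at hjB
        exact div_pos (by linarith [hvchne j (ne_of_gt hjB.2)]) hjB.2
    have hcoord : ∀ i, 0 ≤ v i + t * d i := by
      intro i
      rcases le_or_gt 0 (d i) with h | h
      · have := mul_nonneg htpos.le h
        linarith [hvpos i]
      · have hmem : v i / (-d i) ∈ Ts := by
          apply Finset.mem_union_left
          apply Finset.mem_image_of_mem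
          rw [hA, Finset.mem_filter]
          exact ⟨Finset.mem_Icc.2 (Fbox_d i (ne_of_lt h)), h⟩
        have hle : t ≤ v i / (-d i) := ht ▸ Finset.min'_le Ts _ hmem
        rw [le_div_iff₀ (by linarith : (0:ℝ) < -d i)] at hle
        nlinarith
    have hwin : ∀ j, chiW n v j + t * chiW n d j ≤ (klev n a : ℝ) := by
      intro j
      rcases le_or_gt (chiW n d j) 0 with h | h
      · have := mul_nonpos_of_nonneg_of_nonpos htpos.le h
        linarith [hvchi j]
      · have hmem : ((klev n a : ℝ) - chiW n v j) / chiW n d j ∈ Ts := by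
          apply Finset.mem_union_right
          apply Finset.mem_image_of_mem
          rw [hB, Finset.mem_filter]
          exact ⟨Finset.mem_Icc.2 (Fbox_chi j (ne_of_gt h)), h⟩
        have hle : t ≤ ((klev n a : ℝ) - chiW n v j) / chiW n d j :=
          ht ▸ Finset.min'_le Ts _ hmem
        rw [le_div_iff₀ h] at hle
        linarith
    have hyPi : (fun i => v i + t * d i) ∈ PiPoly n a := by
      refine ⟨⟨⟨N + n, ?_⟩, ⟨min M (i₀ - 1), ?_⟩⟩, hcoord, ?_⟩
      · intro i hi
        simp only
        rw [hN i (by omega), F6 i hi]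
        ring
      · intro i hi
        simp only
        rw [Flt i (by omega), hM i (by omega)]
        ring
      · intro j
        rw [chiW_add_mul]
        exact hwin j
    have hyS : ∀ i ∈ S, v i + t * d i = 0 := by
      intro i hi
      have hvi : v i = 0 := by
        have := Set.mem_iInter₂.1 hvf.1.2 i hi
        exact this
      rw [hvi, F0 i hvi]
      ring
    have hyT : ∀ j ∈ T, chiW n (fun i => v i + t * d i) j = (klev n a : ℝ) := by
      intro j hj
      have hvj : chiW n v j = (klev n a : ℝ) := Set.mem_iInter₂.1 hvf.2 j hj
      rw [chiW_add_mul, hvj, FZ j hvj]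
      ring
    have hSZ : ∀ i ∈ S, v i = 0 := fun i hi => Set.mem_iInter₂.1 hvf.1.2 i hi
    -- t is attained
    have htmem := Ts.min'_mem hTne
    rw [← ht, hTs, Finset.mem_union] at htmem
    rcases htmem with hm | hm
    · -- a coordinate becomes zero
      obtain ⟨i₁, hiA, heq⟩ := Finset.mem_image.1 hm
      rw [hA, Finset.mem_filter] at hiA
      have hd1 : d i₁ < 0 := hiA.2
      have hv1 : v i₁ ≠ 0 := ne_of_gt (hvz i₁ (ne_of_lt hd1))
      have hy1 : v i₁ + t * d i₁ = 0 := by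
        have hdne : d i₁ ≠ 0 := ne_of_lt hd1
        have h2 : v i₁ / -d i₁ * d i₁ = -v i₁ := by
          rw [div_neg, neg_mul, div_mul_cancel₀ _ hdne]
        rw [← heq, h2]
        ring
      set g : Set (ℤ → ℝ) := PiPoly n a ∩ (⋂ i ∈ insert i₁ S, {x | x i = 0}) ∩
        (⋂ i ∈ T, {x | chiW n x i = (klev n a : ℝ)}) with hg
      have hyg : (fun i => v i + t * d i) ∈ g := by
        refine ⟨⟨hyPi, Set.mem_iInter₂.2 ?_⟩, Set.mem_iInter₂.2 ?_⟩
        · intro i hi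
          rcases hi with rfl | hi
          · exact hy1
          · exact hyS i hi
        · intro j hj
          exact hyT j hj
      have hgface : IsFacePi n a g := ⟨⟨_, hyg⟩, insert i₁ S, T, rfl⟩
      have hsub : g ⊆ f := by
        rw [hfeq, hg]
        intro x hx
        exact ⟨⟨hx.1.1, Set.mem_iInter₂.2 fun i hi =>
          Set.mem_iInter₂.1 hx.1.2 i (Set.mem_insert_of_mem _ hi)⟩, hx.2⟩
      have hgf := hmin g hgface hsub
      have hvg : v ∈ g := by rw [hgf, hfeq]; exact hvf
      exact hv1 (Set.mem_iInter₂.1 hvg.1.2 i₁ (Set.mem_insert _ _))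
    · -- a window constraint becomes tight
      obtain ⟨j₁, hjB, heq⟩ := Finset.mem_image.1 hm
      rw [hB, Finset.mem_filter] at hjB
      have hd1 : 0 < chiW n d j₁ := hjB.2
      have hv1 : chiW n v j₁ ≠ (klev n a : ℝ) := ne_of_lt (hvchne j₁ (ne_of_gt hd1))
      have hy1 : chiW n (fun i => v i + t * d i) j₁ = (klev n a : ℝ) := by
        have hdne : chiW n d j₁ ≠ 0 := ne_of_gt hd1
        have h2 : ((klev n a : ℝ) - chiW n v j₁) / chiW n d j₁ * chiW n d j₁ =
            (klev n a : ℝ) - chiW n v j₁ := div_mul_cancel₀ _ hdne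
        rw [chiW_add_mul, ← heq, h2]
        ring
      set g : Set (ℤ → ℝ) := PiPoly n a ∩ (⋂ i ∈ S, {x | x i = 0}) ∩
        (⋂ i ∈ insert j₁ T, {x | chiW n x i = (klev n a : ℝ)}) with hg
      have hyg : (fun i => v i + t * d i) ∈ g := by
        refine ⟨⟨hyPi, Set.mem_iInter₂.2 ?_⟩, Set.mem_iInter₂.2 ?_⟩
        · intro i hi
          exact hyS i hi
        · intro j hj
          rcases hj with rfl | hj
          · exact hy1
          · exact hyT j hj
      have hgface : IsFacePi n a g := ⟨⟨_, hyg⟩, S, insert j₁ T, rfl⟩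
      have hsub : g ⊆ f := by
        rw [hfeq, hg]
        intro x hx
        exact ⟨hx.1, Set.mem_iInter₂.2 fun i hi =>
          Set.mem_iInter₂.1 hx.2 i (Set.mem_insert_of_mem _ hi)⟩
      have hgf := hmin g hgface hsub
      have hvg : v ∈ g := by rw [hgf, hfeq]; exact hvf
      exact hv1 (Set.mem_iInter₂.1 hvg.2 j₁ (Set.mem_insert _ _))
  · -- backward
    intro hall
    set fmin : Set (ℤ → ℝ) := PiPoly n a ∩ (⋂ i ∈ {i : ℤ | v i = 0}, {x | x i = 0}) ∩
      (⋂ i ∈ {i : ℤ | chiW n v i = (klev n a : ℝ)}, {x | chiW n x i = (klev n a : ℝ)}) with hfm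
    have hvmem : v ∈ fmin := by
      refine ⟨⟨hv, Set.mem_iInter₂.2 fun i hi => hi⟩, Set.mem_iInter₂.2 fun i hi => hi⟩
    have hsing : ∀ x ∈ fmin, x = v := by
      intro x hx
      obtain ⟨⟨hxPi, hxE⟩, hxH⟩ := hx
      by_contra hne
      obtain ⟨Mx, hMx⟩ := hxPi.1.2
      obtain ⟨Mv, hMv⟩ := hv.1.2
      have hbdd : ∃ b : ℤ, ∀ z : ℤ, x z ≠ v z → b ≤ z := by
        refine ⟨min Mx Mv + 1, fun z hz => ?_⟩
        by_contra h
        push_neg at h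
        exact hz (by rw [hMx z (by omega), hMv z (by omega)])
      have hinh : ∃ z : ℤ, x z ≠ v z := Function.ne_iff.mp hne
      obtain ⟨lb, hPlb, hlb⟩ := Int.exists_least_of_bdd hbdd hinh
      rcases hall lb with h | h
      · exact hPlb (by rw [Set.mem_iInter₂.1 hxE lb h, h])
      · have hx1 : chiW n x lb = (klev n a : ℝ) := Set.mem_iInter₂.1 hxH lb h
        have hsum : ∑ l ∈ Finset.Icc (lb - n + 1) lb, (x l - v l) = 0 := by
          rw [Finset.sum_sub_distrib]
          have e1 : ∑ l ∈ Finset.Icc (lb - n + 1) lb, x l = (klev n a : ℝ) := hx1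
          have e2 : ∑ l ∈ Finset.Icc (lb - n + 1) lb, v l = (klev n a : ℝ) := h
          rw [e1, e2]
          ring
        rw [sum_Icc_eq_sum_Ico_add _ (by omega : lb - (n:ℤ) + 1 ≤ lb)] at hsum
        have hico : ∑ l ∈ Finset.Ico (lb - n + 1) lb, (x l - v l) = 0 := by
          apply Finset.sum_eq_zero
          intro l hl
          simp only [Finset.mem_Ico] at hl
          have : x l = v l := by
            by_contra hc
            exact absurd (hlb l hc) (by omega)
          rw [this]
          ring
        rw [hico, zero_add] at hsum
        exact hPlb (by linarith)
    refine ⟨fmin, ⟨⟨v, hvmem⟩, {i : ℤ | v i = 0}, {i : ℤ | chiW n v i = (klev n a : ℝ)}, hfm⟩,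
      hvmem, ?_⟩
    intro g hgface hsub
    obtain ⟨⟨w, hw⟩, _⟩ := hgface
    apply Set.Subset.antisymm hsub
    intro u hu
    have h1 : u = v := hsing u hu
    have h2 : w = v := hsing w (hsub hw)
    rw [h1, ← h2]
    exact hw
end
end

section
/- For any vertex v of Π (λ ≠ 0), the graph Δ_v has exactly m(λ) connected components Γ_1,...,Γ_{m(λ)}, and they can be labeled so that for all sufficiently small i (i ≪ 0) the component Γ_r contains exactly l_r vertices in row i, where l_1,...,l_{m(λ)} are the sizes of the path components of the subgraph of the n-cycle in which vertices i and i+1 are joined exactly when a_{(i+1) mod n} = 0. -/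
open scoped BigOperators

noncomputable section

/-- The reference sequence `T^m` (real valued): `0` for `i > mn`, `a_i` otherwise. -/
def TseqR (n : ℕ) (a : ℤ → ℤ) (m i : ℤ) : ℝ :=
  if (m * n : ℤ) < i then 0 else (a i : ℝ)

/-- The plane-filling GT-pattern coordinate `s_{i,j}(x)` of a point `x ∈ V`. -/
def sPatR (n : ℕ) (a : ℤ → ℤ) (x : ℤ → ℝ) (p : ℤ × ℤ) : ℝ :=
  (∑ᶠ l : ℤ, if l ≤ p.1 * n + p.2 * ((n : ℤ) - 1) then x l - TseqR n a (p.1 + p.2) l else 0)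
    - ∑ l ∈ Finset.Icc (p.1 * n + p.2 * ((n : ℤ) - 1) + 1) ((p.1 + p.2) * n),
        TseqR n a (p.1 + p.2) l

/-- The equality graph `Θ(x)`: lattice-adjacent indices are joined iff the corresponding
coordinates of the plane-filling GT-pattern of `x` agree. -/
def ThetaGraph (n : ℕ) (a : ℤ → ℤ) (x : ℤ → ℝ) : SimpleGraph (ℤ × ℤ) :=
  SimpleGraph.fromRel fun p q => LatAdj p q ∧ sPatR n a x p = sPatR n a x q

/-- The shift `(i,j) ↦ (i-n+1, j+n)`. -/
def shiftPt (n : ℕ) (p : ℤ × ℤ) : ℤ × ℤ := (p.1 - (n - 1), p.2 + n)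

/-- The relation on connected components of a graph on `ℤ × ℤ` identifying a component
with its image under the shift `(i,j) ↦ (i-n+1, j+n)`. -/
def shiftRel (n : ℕ) (G : SimpleGraph (ℤ × ℤ)) :
    G.ConnectedComponent → G.ConnectedComponent → Prop :=
  fun c c' => {p | G.connectedComponentMk p = c'} =
    shiftPt n '' {p | G.connectedComponentMk p = c}

/-- The subgraph of the `n`-cycle associated to `λ`: vertices `i` and `i+1` of `ZMod n`
are joined exactly when `a_{(i+1) mod n} = 0`. -/
def cycG (n : ℕ) (a : ℤ → ℤ) : SimpleGraph (ZMod n) :=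
  SimpleGraph.fromRel fun r s => s = r + 1 ∧ a ((s.val : ℤ)) = 0

/-- `v` is a vertex of `Π`: it belongs to a minimal element of the face lattice. -/
def IsVertexPi (n : ℕ) (a : ℤ → ℤ) (v : ℤ → ℝ) : Prop :=
  ∃ f, IsFacePi n a f ∧ v ∈ f ∧ ∀ g, IsFacePi n a g → g ⊆ f → g = f


-- ======================= auxiliary development =======================

lemma intExtR (f g : ℤ → ℝ) (x0 : ℤ) (h0 : f x0 = g x0)
    (hstep : ∀ y, f (y+1) - f y = g (y+1) - g y) : ∀ y, f y = g y := by
  have up : ∀ y, x0 ≤ y → f y = g y := by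
    intro y hy
    refine Int.le_induction (motive := fun y _ => f y = g y) h0 ?_ y hy
    intro k _ ih; have := hstep k; linarith
  have down : ∀ y, y ≤ x0 → f y = g y := by
    intro y hy
    refine Int.le_induction_down (motive := fun y _ => f y = g y) h0 ?_ y hy
    intro k _ ih; have := hstep (k-1); simp only [sub_add_cancel] at this; linarith
  intro y; rcases le_total x0 y with h | h
  · exact up y h
  · exact down y h

lemma sum_Icc_bot {M : Type*} [AddCommMonoid M] (f : ℤ → M) {x y : ℤ} (h : x ≤ y) :
    ∑ l ∈ Finset.Icc x y, f l = f x + ∑ l ∈ Finset.Icc (x+1) y, f l := by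
  have : Finset.Icc x y = insert x (Finset.Icc (x+1) y) := by
    ext l; simp only [Finset.mem_Icc, Finset.mem_insert]; omega
  rw [this, Finset.sum_insert (by simp only [Finset.mem_Icc]; omega)]

lemma sum_Icc_top {M : Type*} [AddCommMonoid M] (f : ℤ → M) {x y : ℤ} (h : x ≤ y) :
    ∑ l ∈ Finset.Icc x y, f l = (∑ l ∈ Finset.Icc x (y-1), f l) + f y := by
  have : Finset.Icc x y = insert y (Finset.Icc x (y-1)) := by
    ext l; simp only [Finset.mem_Icc, Finset.mem_insert]; omega
  rw [this, Finset.sum_insert (by simp only [Finset.mem_Icc]; omega), add_comm]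

def AbarZ (a : ℤ → ℤ) (M : ℤ) : ℤ :=
  if 0 ≤ M then ∑ l ∈ Finset.Icc 1 M, a l else -∑ l ∈ Finset.Icc (M+1) 0, a l

lemma Abar_succ (a : ℤ → ℤ) (M : ℤ) : AbarZ a (M+1) = AbarZ a M + a (M+1) := by
  unfold AbarZ
  rcases le_or_gt 0 M with h | h
  · rw [if_pos (by omega), if_pos h, sum_Icc_top a (show (1:ℤ) ≤ M + 1 by omega)]
    simp
  rcases eq_or_lt_of_le (show M + 1 ≤ 0 by omega) with h3 | h3
  · rw [if_pos (by omega), if_neg (by omega)]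
    have e1 : Finset.Icc (1:ℤ) (M+1) = ∅ := Finset.Icc_eq_empty (by omega)
    have e2 : Finset.Icc (M+1) (0:ℤ) = {0} := by rw [← h3]; simp
    rw [e1, e2]
    simp [h3]
  · rw [if_neg (by omega), if_neg (by omega), sum_Icc_bot a (show M+1 ≤ (0:ℤ) by omega)]
    ring

lemma Abar_diff (a : ℤ → ℤ) {x y : ℤ} (h : x ≤ y) :
    AbarZ a y = AbarZ a x + ∑ l ∈ Finset.Icc (x+1) y, a l := by
  refine Int.le_induction (motive := fun y _ => AbarZ a y = AbarZ a x + ∑ l ∈ Finset.Icc (x + 1) y, a l) (by simp) ?_ y h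
  intro y hy ih
  rw [Abar_succ, ih, sum_Icc_top a (show x+1 ≤ y+1 by omega)]
  simp only [add_sub_cancel_right]
  ring

lemma Abar_zero (a : ℤ → ℤ) : AbarZ a 0 = 0 := by
  unfold AbarZ
  simp

section peri
variable {n : ℕ} {a : ℤ → ℤ}
lemma window (hn : 1 ≤ n) (hper : ∀ i, a (i + n) = a i) (x : ℤ) :
    ∑ l ∈ Finset.Icc (x+1) (x+n), a l = klev n a := by
  have base : ∑ l ∈ Finset.Icc (0+1) (0+(n:ℤ)), a l = klev n a := by
    rw [zero_add, zero_add, sum_Icc_top a (show (1:ℤ) ≤ n by exact_mod_cast hn), klev,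
      sum_Icc_bot a (show (0:ℤ) ≤ (n:ℤ)-1 by omega)]
    have : a (n:ℤ) = a 0 := by simpa using hper 0
    rw [this]; ring
  have := intExtR (fun x => ((∑ l ∈ Finset.Icc (x+1) (x+n), a l : ℤ) : ℝ))
    (fun _ => ((klev n a : ℤ) : ℝ)) 0 (by exact congrArg (fun z : ℤ => (z : ℝ)) base) ?_ x
  · exact_mod_cast this
  · intro y
    have h1 : ∑ l ∈ Finset.Icc (y+1+1) (y+1+(n:ℤ)), a l
        = (∑ l ∈ Finset.Icc (y+1+1) (y+(n:ℤ)), a l) + a (y+1+n) := by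
      have := sum_Icc_top a (show y+1+1 ≤ y+1+(n:ℤ) by omega)
      rw [show y+1+(n:ℤ)-1 = y+(n:ℤ) from by ring] at this
      exact this
    have h2 : ∑ l ∈ Finset.Icc (y+1) (y+(n:ℤ)), a l
        = a (y+1) + ∑ l ∈ Finset.Icc (y+1+1) (y+(n:ℤ)), a l := by
      exact sum_Icc_bot a (by omega)
    have h3 : a (y+1+(n:ℤ)) = a (y+1) := hper (y+1)
    rw [h1, h2, h3]
    push_cast
    ring

lemma Abar_per (hn : 1 ≤ n) (hper : ∀ i, a (i + n) = a i) (M : ℤ) :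
    AbarZ a (M + n) = AbarZ a M + klev n a := by
  rw [Abar_diff a (show M ≤ M + (n:ℤ) by omega), window hn hper]

lemma Abar_shift (hn : 1 ≤ n) (hper : ∀ i, a (i + n) = a i) :
    ∀ t : ℤ, ∀ M, AbarZ a (M + t * n) = AbarZ a M + t * klev n a := by
  intro t
  induction t using Int.induction_on with
  | zero => simp
  | succ i ih =>
      intro M
      have : M + ((i:ℤ)+1) * n = (M + i * n) + n := by ring
      rw [this, Abar_per hn hper, ih]; ring
  | pred i ih =>
      intro M
      have : M + (-(i:ℤ)-1) * n = (M - n) + (-(i:ℤ)) * n := by ring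
      rw [this, ih]
      have : AbarZ a ((M - n) + n) = AbarZ a (M-n) + klev n a := Abar_per hn hper _
      simp only [sub_add_cancel] at this
      have e2 : (-(i:ℤ)-1) * klev n a = (-(i:ℤ)) * klev n a - klev n a := by ring
      linarith

lemma Abar_mul (hn : 1 ≤ n) (hper : ∀ i, a (i + n) = a i) (m : ℤ) :
    AbarZ a (m * n) = m * klev n a := by
  have := Abar_shift hn hper m 0
  simpa [Abar_zero] using this

lemma aper_shift (hper : ∀ i, a (i + n) = a i) :
    ∀ t : ℤ, ∀ M, a (M + t * n) = a M := by
  intro t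
  induction t using Int.induction_on with
  | zero => simp
  | succ i ih =>
      intro M
      have e : M + ((i:ℤ)+1) * n = (M + i * n) + n := by ring
      rw [e, hper, ih]
  | pred i ih =>
      intro M
      have e : M + (-(i:ℤ)-1) * n = (M - n) + (-(i:ℤ)) * n := by ring
      rw [e, ih]
      have := hper (M - n)
      simp only [sub_add_cancel] at this
      rw [this]

lemma aresidue (hn : 1 ≤ n) (hper : ∀ i, a (i + n) = a i) (M : ℤ) :
    a M = a (((M : ZMod n)).val : ℤ) := by
  haveI : NeZero n := ⟨by omega⟩
  have hval : (((M : ZMod n)).val : ℤ) = M % n := ZMod.val_intCast M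
  rw [hval]
  have h0 := Int.mul_ediv_add_emod M n
  have : M = M % n + (M / n) * n := by linarith
  conv_lhs => rw [this]
  rw [aper_shift hper]

end peri

def hfunD (a : ℤ → ℤ) (v : ℤ → ℝ) (Nl : ℤ) (M : ℤ) : ℝ :=
  (AbarZ a M : ℝ) + ∑ l ∈ Finset.Icc (Nl+1) M, (v l - (a l : ℝ))

section hfun
variable {n : ℕ} {a : ℤ → ℤ} {v : ℤ → ℝ} {Nl Nr : ℤ}
lemma hfun_left (M : ℤ) (h : M ≤ Nl) : hfunD a v Nl M = (AbarZ a M : ℝ) := by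
  unfold hfunD
  rw [Finset.Icc_eq_empty (by omega)]
  simp

lemma hfun_succ (hNl : ∀ i ≤ Nl, v i = (a i : ℝ)) (M : ℤ) :
    hfunD a v Nl (M+1) = hfunD a v Nl M + v (M+1) := by
  unfold hfunD
  rcases le_or_gt (Nl+1) (M+1) with h | h
  · rw [sum_Icc_top _ h, Abar_succ, show M + 1 - 1 = M from by ring]
    push_cast
    ring
  · rw [Finset.Icc_eq_empty (by omega), Finset.Icc_eq_empty (by omega), Abar_succ,
      hNl (M+1) (by omega)]
    push_cast
    ring

lemma hfun_diff (hNl : ∀ i ≤ Nl, v i = (a i : ℝ)) {x y : ℤ} (h : x ≤ y) :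
    hfunD a v Nl y = hfunD a v Nl x + ∑ l ∈ Finset.Icc (x+1) y, v l := by
  refine Int.le_induction
    (motive := fun y _ => hfunD a v Nl y = hfunD a v Nl x + ∑ l ∈ Finset.Icc (x+1) y, v l)
    (by simp) ?_ y h
  intro y hy ih
  rw [hfun_succ hNl, ih, sum_Icc_top v (show x+1 ≤ y+1 by omega)]
  simp only [add_sub_cancel_right]
  ring

lemma hfun_mono (hNl : ∀ i ≤ Nl, v i = (a i : ℝ)) (hvpos : ∀ i, 0 ≤ v i)
    {x y : ℤ} (h : x ≤ y) : hfunD a v Nl x ≤ hfunD a v Nl y := by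
  rw [hfun_diff hNl h]
  have : 0 ≤ ∑ l ∈ Finset.Icc (x+1) y, v l :=
    Finset.sum_nonneg fun l _ => hvpos l
  linarith

lemma hfun_chi (hNl : ∀ i ≤ Nl, v i = (a i : ℝ)) (M : ℤ) :
    chiW n v M = hfunD a v Nl M - hfunD a v Nl (M - n) := by
  have h := hfun_diff (v := v) hNl (show M - (n:ℤ) ≤ M by omega)
  unfold chiW
  have e : M - (n:ℤ) + 1 = M - n + 1 := by ring
  rw [← e] at *
  linarith [h]

lemma hfun_constr (hNl : ∀ i ≤ Nl, v i = (a i : ℝ)) (hNr : ∀ i, Nr ≤ i → v i = 0)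
    (M : ℤ) (h : Nr - 1 ≤ M) : hfunD a v Nl M = hfunD a v Nl (Nr - 1) := by
  rw [hfun_diff hNl h]
  have : ∑ l ∈ Finset.Icc (Nr-1+1) M, v l = 0 := by
    apply Finset.sum_eq_zero
    intro l hl
    simp only [Finset.mem_Icc] at hl
    exact hNr l (by omega)
  rw [this, add_zero]

lemma hfun_le (hNl : ∀ i ≤ Nl, v i = (a i : ℝ)) (hNr : ∀ i, Nr ≤ i → v i = 0)
    (hvpos : ∀ i, 0 ≤ v i) (M : ℤ) : hfunD a v Nl M ≤ hfunD a v Nl (Nr - 1) := by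
  rcases le_or_gt M (Nr - 1) with h | h
  · exact hfun_mono hNl hvpos h
  · rw [hfun_constr hNl hNr M (by omega)]

end hfun

def Mof (n : ℕ) (p : ℤ × ℤ) : ℤ := p.1 * n + p.2 * ((n : ℤ) - 1)

def mof (p : ℤ × ℤ) : ℤ := p.1 + p.2

def ptc (n : ℕ) (M m : ℤ) : ℤ × ℤ := (M - ((n:ℤ)-1)*m, (n:ℤ)*m - M)

lemma Mof_ptc (n : ℕ) (M m : ℤ) : Mof n (ptc n M m) = M := by
  unfold Mof ptc; ring

lemma mof_ptc (n : ℕ) (M m : ℤ) : mof (ptc n M m) = m := by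
  unfold mof ptc; ring

lemma ptc_eta (n : ℕ) (p : ℤ × ℤ) : ptc n (Mof n p) (mof p) = p := by
  unfold Mof mof ptc
  ext <;> simp <;> ring

lemma fst_eq (n : ℕ) (p : ℤ × ℤ) : p.1 = Mof n p - ((n:ℤ)-1) * mof p := by
  unfold Mof mof; ring

section spat
variable {n : ℕ} {a : ℤ → ℤ} {v : ℤ → ℝ} {Nl : ℤ}
lemma sPat_eq_s18 (hn : 1 ≤ n) (hper : ∀ i, a (i + n) = a i)
    (hNl : ∀ i ≤ Nl, v i = (a i : ℝ)) (p : ℤ × ℤ) :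
    sPatR n a v p = hfunD a v Nl (Mof n p) - (mof p) * (klev n a : ℝ) := by
  set M := Mof n p with hM
  set m := mof p with hm
  have hMe : p.1 * n + p.2 * ((n : ℤ) - 1) = M := rfl
  have hme : p.1 + p.2 = m := rfl
  set G : ℤ → ℝ := fun l => if l ≤ M then v l - (a l : ℝ) else 0 with hG
  set H : ℤ → ℝ := fun l => if m * n < l ∧ l ≤ M then (a l : ℝ) else 0 with hH
  have hsplit : ∀ l : ℤ, (if l ≤ M then v l - TseqR n a m l else 0) = G l + H l := by
    intro l
    simp only [hG, hH, TseqR]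
    by_cases h1 : l ≤ M <;> by_cases h2 : m * (n:ℤ) < l <;>
      simp [h1, h2] <;> ring
  have hGsupp : Function.support G ⊆ ↑(Finset.Icc (Nl+1) M) := by
    intro l hl
    simp only [Function.mem_support, hG] at hl
    simp only [Finset.coe_Icc, Set.mem_Icc]
    by_contra hc
    push_neg at hc
    by_cases h1 : l ≤ M
    · rw [if_pos h1] at hl
      have : v l = (a l : ℝ) := hNl l (by omega)
      rw [this] at hl; simp at hl
    · rw [if_neg h1] at hl; simp at hl
  have hHsupp : Function.support H ⊆ ↑(Finset.Icc (m*n+1) M) := by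
    intro l hl
    simp only [Function.mem_support, hH] at hl
    simp only [Finset.coe_Icc, Set.mem_Icc]
    by_cases h1 : m * (n:ℤ) < l ∧ l ≤ M
    · omega
    · rw [if_neg h1] at hl; simp at hl
  have hGfin : (Function.support G).Finite :=
    Set.Finite.subset (Finset.finite_toSet _) hGsupp
  have hHfin : (Function.support H).Finite :=
    Set.Finite.subset (Finset.finite_toSet _) hHsupp
  have e1 : (∑ᶠ l : ℤ, (if l ≤ M then v l - TseqR n a m l else 0))
      = (∑ᶠ l : ℤ, G l) + ∑ᶠ l : ℤ, H l := by
    rw [← finsum_add_distrib hGfin hHfin]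
    exact finsum_congr hsplit
  have e2 : (∑ᶠ l : ℤ, G l) = ∑ l ∈ Finset.Icc (Nl+1) M, (v l - (a l:ℝ)) := by
    rw [finsum_eq_sum_of_support_subset G hGsupp]
    apply Finset.sum_congr rfl
    intro l hl
    simp only [Finset.mem_Icc] at hl
    simp only [hG, if_pos (show l ≤ M by omega)]
  have e3 : (∑ᶠ l : ℤ, H l) = ∑ l ∈ Finset.Icc (m*n+1) M, (a l : ℝ) := by
    rw [finsum_eq_sum_of_support_subset H hHsupp]
    apply Finset.sum_congr rfl
    intro l hl
    simp only [Finset.mem_Icc] at hl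
    simp only [hH, if_pos (show m * (n:ℤ) < l ∧ l ≤ M by omega)]
  have e4 : ∑ l ∈ Finset.Icc (M+1) (m * n), TseqR n a m l
      = ∑ l ∈ Finset.Icc (M+1) (m*n), (a l : ℝ) := by
    apply Finset.sum_congr rfl
    intro l hl
    simp only [Finset.mem_Icc] at hl
    simp only [TseqR, if_neg (show ¬ (m * (n:ℤ) < l) by omega)]
  have e5 : ((AbarZ a M : ℝ) - (AbarZ a (m*n) : ℝ))
      = ∑ l ∈ Finset.Icc (m*n+1) M, (a l : ℝ) - ∑ l ∈ Finset.Icc (M+1) (m*n), (a l : ℝ) := by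
    rcases le_total (m*n) M with h | h
    · rw [Finset.Icc_eq_empty (show ¬ (M+1) ≤ m*n by omega)]
      have := Abar_diff a h
      rw [this]
      push_cast
      simp
    · rw [Finset.Icc_eq_empty (show ¬ (m*n+1) ≤ M by omega)]
      have := Abar_diff a h
      rw [this]
      push_cast
      simp
  have e6 : (AbarZ a (m*n) : ℝ) = (m : ℝ) * (klev n a : ℝ) := by
    rw [Abar_mul hn hper m]; push_cast; ring
  unfold sPatR
  rw [hMe, hme, e1, e2, e3, e4]
  unfold hfunD
  have := e5
  rw [e6] at this
  linarith [this]

end spat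

section graph
variable {n : ℕ} {a : ℤ → ℤ} {v : ℤ → ℝ} {Nl : ℤ}
lemma adj_s {p q : ℤ × ℤ} (h : (ThetaGraph n a v).Adj p q) :
    sPatR n a v p = sPatR n a v q := by
  rw [ThetaGraph, SimpleGraph.fromRel_adj] at h
  rcases h.2 with h | h
  · exact h.2
  · exact h.2.symm

lemma reach_s {p q : ℤ × ℤ} (h : (ThetaGraph n a v).Reachable p q) :
    sPatR n a v p = sPatR n a v q := by
  obtain ⟨w⟩ := h
  induction w with
  | nil => rfl
  | cons h _ ih => exact (adj_s h).trans ih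

lemma comp_s {p q : ℤ × ℤ}
    (h : (ThetaGraph n a v).connectedComponentMk p = (ThetaGraph n a v).connectedComponentMk q) :
    sPatR n a v p = sPatR n a v q :=
  reach_s (SimpleGraph.ConnectedComponent.exact h)

-- structured adjacency constructors

lemma adjE (hn : 1 ≤ n) (hper : ∀ i, a (i + n) = a i)
    (hNl : ∀ i ≤ Nl, v i = (a i : ℝ)) {M : ℤ} (m : ℤ)
    (h : hfunD a v Nl M = hfunD a v Nl (M - 1)) :
    (ThetaGraph n a v).Adj (ptc n M m) (ptc n (M-1) m) := by
  rw [ThetaGraph, SimpleGraph.fromRel_adj]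
  constructor
  · intro hc
    have := congrArg (fun r : ℤ × ℤ => r.2) hc
    simp only [ptc] at this
    omega
  · left
    constructor
    · right; left
      simp only [ptc, Prod.mk.injEq]
      constructor <;> ring
    · rw [sPat_eq_s18 hn hper hNl, sPat_eq_s18 hn hper hNl, Mof_ptc, Mof_ptc, mof_ptc, mof_ptc, h]

lemma adjH (hn : 1 ≤ n) (hper : ∀ i, a (i + n) = a i)
    (hNl : ∀ i ≤ Nl, v i = (a i : ℝ)) {M : ℤ} (m : ℤ)
    (h : hfunD a v Nl M = hfunD a v Nl (M - n) + (klev n a : ℝ)) :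
    (ThetaGraph n a v).Adj (ptc n M m) (ptc n (M - n) (m - 1)) := by
  rw [ThetaGraph, SimpleGraph.fromRel_adj]
  constructor
  · intro hc
    have := congrArg (fun r : ℤ × ℤ => r.1) hc
    simp only [ptc] at this
    have hr : ((n:ℤ)-1)*m = ((n:ℤ)-1)*(m-1) + ((n:ℤ)-1) := by ring
    omega
  · left
    constructor
    · left
      simp only [ptc, Prod.mk.injEq]
      constructor <;> ring
    · rw [sPat_eq_s18 hn hper hNl, sPat_eq_s18 hn hper hNl, Mof_ptc, Mof_ptc, mof_ptc, mof_ptc, h]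
      push_cast
      ring

-- closure properties of components viewed on the M-axis

end graph

def Cset (n : ℕ) (a : ℤ → ℤ) (v : ℤ → ℝ) (c : (ThetaGraph n a v).ConnectedComponent) :
    Set ℤ := {M | ∃ q, (ThetaGraph n a v).connectedComponentMk q = c ∧ Mof n q = M}

section closure
variable {n : ℕ} {a : ℤ → ℤ} {v : ℤ → ℝ} {Nl : ℤ}
variable (hn : 1 ≤ n) (hper : ∀ i, a (i + n) = a i) (hNl : ∀ i ≤ Nl, v i = (a i : ℝ))
variable {c : (ThetaGraph n a v).ConnectedComponent}
include hn hper hNl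
lemma clEdown {M : ℤ} (hM : M ∈ Cset n a v c)
    (h : hfunD a v Nl M = hfunD a v Nl (M - 1)) : (M - 1) ∈ Cset n a v c := by
  obtain ⟨q, hq, hMq⟩ := hM
  subst hMq
  refine ⟨ptc n (Mof n q - 1) (mof q), ?_, Mof_ptc n _ _⟩
  rw [← hq]
  have := adjE hn hper hNl (v := v) (mof q) h
  rw [ptc_eta] at this
  exact (SimpleGraph.ConnectedComponent.connectedComponentMk_eq_of_adj this).symm

lemma clEup {M : ℤ} (hM : M ∈ Cset n a v c)
    (h : hfunD a v Nl (M+1) = hfunD a v Nl M) : (M + 1) ∈ Cset n a v c := by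
  obtain ⟨q, hq, hMq⟩ := hM
  subst hMq
  refine ⟨ptc n (Mof n q + 1) (mof q), ?_, Mof_ptc n _ _⟩
  rw [← hq]
  have := adjE hn hper hNl (v := v) (M := Mof n q + 1) (mof q)
    (by rw [show Mof n q + 1 - 1 = Mof n q from by ring]; exact h)
  rw [show Mof n q + 1 - 1 = Mof n q from by ring, ptc_eta] at this
  exact SimpleGraph.ConnectedComponent.connectedComponentMk_eq_of_adj this

lemma clHdown {M : ℤ} (hM : M ∈ Cset n a v c)
    (h : hfunD a v Nl M = hfunD a v Nl (M - n) + (klev n a : ℝ)) :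
    (M - n) ∈ Cset n a v c := by
  obtain ⟨q, hq, hMq⟩ := hM
  subst hMq
  refine ⟨ptc n (Mof n q - n) (mof q - 1), ?_, Mof_ptc n _ _⟩
  rw [← hq]
  have := adjH hn hper hNl (v := v) (mof q) h
  rw [ptc_eta] at this
  exact (SimpleGraph.ConnectedComponent.connectedComponentMk_eq_of_adj this).symm

lemma clHup {M : ℤ} (hM : M ∈ Cset n a v c)
    (h : hfunD a v Nl (M+n) = hfunD a v Nl M + (klev n a : ℝ)) :
    (M + n) ∈ Cset n a v c := by
  obtain ⟨q, hq, hMq⟩ := hM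
  subst hMq
  refine ⟨ptc n (Mof n q + n) (mof q + 1), ?_, Mof_ptc n _ _⟩
  rw [← hq]
  have := adjH hn hper hNl (v := v) (M := Mof n q + n) (mof q + 1)
    (by rw [show Mof n q + (n:ℤ) - n = Mof n q from by ring]; exact h)
  rw [show Mof n q + (n:ℤ) - n = Mof n q from by ring,
    show mof q + 1 - 1 = mof q from by ring, ptc_eta] at this
  exact SimpleGraph.ConnectedComponent.connectedComponentMk_eq_of_adj this

end closure

lemma tele (f : ℤ → ℝ) {x y : ℤ} (h : x ≤ y) :
    ∑ l ∈ Finset.Icc (x+1) y, (f l - f (l-1)) = f y - f x := by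
  refine Int.le_induction
    (motive := fun y _ => ∑ l ∈ Finset.Icc (x+1) y, (f l - f (l-1)) = f y - f x)
    (by simp) ?_ y h
  intro y hy ih
  have : Finset.Icc (x+1) (y+1) = insert (y+1) (Finset.Icc (x+1) y) := by
    ext l; simp only [Finset.mem_Icc, Finset.mem_insert]; omega
  rw [this, Finset.sum_insert (by simp only [Finset.mem_Icc]; omega), ih]
  simp only [add_sub_cancel_right]
  ring

section anchor
variable {n : ℕ} {a : ℤ → ℤ} {v : ℤ → ℝ} {Nl Nr : ℤ}
lemma anchor (hn : 1 ≤ n) (hper : ∀ i, a (i + n) = a i)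
    (hNl : ∀ i ≤ Nl, v i = (a i : ℝ)) (hNr : ∀ i, Nr ≤ i → v i = 0)
    (hv : v ∈ PiPoly n a) (hvert : IsVertexPi n a v)
    (c : (ThetaGraph n a v).ConnectedComponent) :
    ∃ q, (ThetaGraph n a v).connectedComponentMk q = c ∧ Mof n q ≤ Nl := by
  classical
  by_contra hcon
  push_neg at hcon
  set K : ℝ := (klev n a : ℝ) with hK
  have hvpos : ∀ i, 0 ≤ v i := hv.2.1
  have hchile : ∀ i, chiW n v i ≤ K := hv.2.2
  set P : ℤ → Prop := fun M => M ∈ Cset n a v c with hP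
  have hPlow : ∀ M, P M → Nl < M := by
    rintro M ⟨q, hq, hMq⟩
    rw [← hMq]
    exact hcon q hq
  have hstep : ∀ M : ℤ, hfunD a v Nl M = hfunD a v Nl (M-1) + v M := by
    intro M
    have := hfun_succ hNl (M-1)
    rw [show M - 1 + 1 = M from by ring] at this
    exact this
  have clE1 : ∀ M, P M → v M = 0 → P (M-1) := by
    intro M hM h0
    exact clEdown hn hper hNl hM (by rw [hstep M, h0, add_zero])
  have clE2 : ∀ M, P M → v (M+1) = 0 → P (M+1) := by
    intro M hM h0
    refine clEup hn hper hNl hM ?_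
    rw [hfun_succ hNl M, h0, add_zero]
  have clH1 : ∀ M, P M → chiW n v M = K → P (M - n) := by
    intro M hM h0
    refine clHdown hn hper hNl hM ?_
    have := hfun_chi (n := n) (Nl := Nl) hNl M
    rw [h0] at this
    linarith
  have clH2 : ∀ M, P M → chiW n v (M + n) = K → P (M + n) := by
    intro M hM h0
    refine clHup hn hper hNl hM ?_
    have := hfun_chi (n := n) (Nl := Nl) hNl (M + n)
    rw [h0, show M + (n:ℤ) - n = M from by ring] at this
    linarith
  have W1 : ∀ M : ℤ, Nr ≤ M + 1 → (P M ↔ P (M+1)) := by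
    intro M hM
    constructor
    · intro h; exact clE2 M h (hNr _ hM)
    · intro h
      have := clE1 (M+1) h (hNr _ hM)
      rw [show M + 1 - 1 = M from by ring] at this
      exact this
  have W3 : ∀ M M' : ℤ, Nr - 1 ≤ M → M ≤ M' → (P M ↔ P M') := by
    intro M M' hM hMM'
    refine Int.le_induction (motive := fun M' _ => P M ↔ P M') Iff.rfl ?_ M' hMM'
    intro y hy ih
    exact ih.trans (W1 y (by omega))
  obtain ⟨p₀, hp₀⟩ := Quot.exists_rep c
  have hPne : P (Mof n p₀) := ⟨p₀, hp₀, rfl⟩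
  obtain ⟨Ms, hMs, hleast⟩ := Int.exists_least_of_bdd
    (P := P) ⟨Nl + 1, fun z hz => by have := hPlow z hz; omega⟩ ⟨Mof n p₀, hPne⟩
  have hMsNr : Ms ≤ Nr - 1 := by
    by_contra hc
    push_neg at hc
    have := (W1 (Ms - 1) (by omega)).mpr
    rw [show Ms - 1 + 1 = Ms from by ring] at this
    have := hleast _ (this hMs)
    omega
  have hMsm : ¬ P (Ms - 1) := fun h => by have := hleast _ h; omega
  set BEp := (Finset.Icc (Nl+1) (Nr-1)).filter (fun M => P M ∧ ¬ P (M-1)) with hBEp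
  set BHm := (Finset.Icc (Nl+1) (Nr-1+n)).filter (fun M => ¬ P M ∧ P (M - n)) with hBHm
  have covE : ∀ M, P M → ¬ P (M-1) → M ∈ BEp := by
    intro M h1 h2
    rw [hBEp, Finset.mem_filter, Finset.mem_Icc]
    refine ⟨⟨by have := hPlow M h1; omega, ?_⟩, h1, h2⟩
    by_contra hc
    push_neg at hc
    have := (W1 (M-1) (by omega)).mpr
    rw [show M - 1 + 1 = M from by ring] at this
    exact h2 (this h1)
  have covH : ∀ M, ¬ P M → P (M - n) → M ∈ BHm := by
    intro M h1 h2
    rw [hBHm, Finset.mem_filter, Finset.mem_Icc]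
    refine ⟨⟨by have := hPlow _ h2; omega, ?_⟩, h1, h2⟩
    by_contra hc
    push_neg at hc
    exact h1 ((W3 (M - n) M (by omega) (by omega)).mp h2)
  have hBE : BEp.Nonempty := ⟨Ms, covE Ms hMs hMsm⟩
  have epos : ∀ M ∈ BEp, 0 < v M := by
    intro M hM
    rw [hBEp, Finset.mem_filter] at hM
    rcases lt_or_eq_of_le (hvpos M) with h | h
    · exact h
    · exact absurd (clE1 M hM.2.1 h.symm) hM.2.2
  have hposH : ∀ M ∈ BHm, chiW n v M < K := by
    intro M hM
    rw [hBHm, Finset.mem_filter] at hM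
    rcases lt_or_eq_of_le (hchile M) with h | h
    · exact h
    · have := clH2 (M - n) hM.2.2 (by rw [show M - (n:ℤ) + n = M from by ring]; exact h)
      rw [show M - (n:ℤ) + n = M from by ring] at this
      exact absurd this hM.2.1
  -- the perturbation size
  set δ : ℝ := if hBH : BHm.Nonempty
      then min (BEp.inf' hBE v) (BHm.inf' hBH (fun M => K - chiW n v M))
      else BEp.inf' hBE v with hδ
  have δpos : 0 < δ := by
    rw [hδ]
    split_ifs with hBH
    · refine lt_min ?_ ?_
      · rw [Finset.lt_inf'_iff]
        exact fun M hM => epos M hM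
      · rw [Finset.lt_inf'_iff]
        intro M hM
        have := hposH M hM
        linarith
    · rw [Finset.lt_inf'_iff]
      exact fun M hM => epos M hM
  have δleE : ∀ M ∈ BEp, δ ≤ v M := by
    intro M hM
    rw [hδ]
    split_ifs with hBH
    · exact le_trans (min_le_left _ _) (Finset.inf'_le v hM)
    · exact Finset.inf'_le v hM
  have δleH : ∀ M ∈ BHm, δ ≤ K - chiW n v M := by
    intro M hM
    rw [hδ]
    have hBH : BHm.Nonempty := ⟨M, hM⟩
    rw [dif_pos hBH]
    exact le_trans (min_le_right _ _) (Finset.inf'_le _ hM)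
  have attain : (∃ M₀ ∈ BEp, δ = v M₀ ∧ P M₀ ∧ ¬ P (M₀ - 1))
      ∨ (∃ M₀ ∈ BHm, δ = K - chiW n v M₀ ∧ ¬ P M₀ ∧ P (M₀ - n)) := by
    rw [hδ]
    split_ifs with hBH
    · rcases min_cases (BEp.inf' hBE v) (BHm.inf' hBH (fun M => K - chiW n v M)) with
        ⟨hmin, _⟩ | ⟨hmin, _⟩
      · obtain ⟨M₀, hM₀, he⟩ := Finset.exists_mem_eq_inf' hBE v
        have hM₀' := hM₀
        rw [hBEp, Finset.mem_filter] at hM₀'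
        exact Or.inl ⟨M₀, hM₀, by rw [hmin, he], hM₀'.2.1, hM₀'.2.2⟩
      · obtain ⟨M₀, hM₀, he⟩ := Finset.exists_mem_eq_inf' hBH (fun M => K - chiW n v M)
        have hM₀' := hM₀
        rw [hBHm, Finset.mem_filter] at hM₀'
        exact Or.inr ⟨M₀, hM₀, by rw [hmin, he], hM₀'.2.1, hM₀'.2.2⟩
    · obtain ⟨M₀, hM₀, he⟩ := Finset.exists_mem_eq_inf' hBE v
      have hM₀' := hM₀
      rw [hBEp, Finset.mem_filter] at hM₀'
      exact Or.inl ⟨M₀, hM₀, by rw [he], hM₀'.2.1, hM₀'.2.2⟩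
  -- the perturbed point
  set ind : ℤ → ℝ := fun M => if P M then 1 else 0 with hind
  set w : ℤ → ℝ := fun j => v j - δ * (ind j - ind (j-1)) with hw
  have hindE : ∀ i : ℤ, (P i ↔ P (i-1)) → w i = v i := by
    intro i hi
    rw [hw]
    simp only [hind]
    by_cases h : P i
    · rw [if_pos h, if_pos (hi.mp h)]; ring
    · rw [if_neg h, if_neg (fun hc => h (hi.mpr hc))]; ring
  have hchiw : ∀ i : ℤ, chiW n w i = chiW n v i - δ * (ind i - ind (i - n)) := by
    intro i
    unfold chiW
    rw [hw]
    simp only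
    rw [Finset.sum_sub_distrib, ← Finset.mul_sum]
    have : ∑ l ∈ Finset.Icc (i - n + 1) i, (ind l - ind (l-1)) = ind i - ind (i - n) := by
      have := tele ind (show i - (n:ℤ) ≤ i by omega)
      rw [show i - (n:ℤ) + 1 = i - n + 1 from by ring] at this
      exact this
    rw [this]
  have hwNr : ∀ i, Nr ≤ i → w i = 0 := by
    intro i hi
    have hiff : P i ↔ P (i-1) := by
      have := W1 (i-1) (by omega)
      rw [show i - 1 + 1 = i from by ring] at this
      exact this.symm
    rw [hindE i hiff]
    exact hNr i hi
  have hwNl : ∀ i, i ≤ Nl → w i = (a i : ℝ) := by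
    intro i hi
    have h1 : ¬ P i := fun h => by have := hPlow i h; omega
    have h2 : ¬ P (i-1) := fun h => by have := hPlow _ h; omega
    rw [hindE i (iff_of_false h1 h2)]
    exact hNl i hi
  have hwpos : ∀ i, 0 ≤ w i := by
    intro i
    by_cases h1 : P i <;> by_cases h2 : P (i-1)
    · rw [hindE i (iff_of_true h1 h2)]; exact hvpos i
    · have he : w i = v i - δ := by
        rw [hw]; simp only [hind]; rw [if_pos h1, if_neg h2]; ring
      rw [he]
      have := δleE i (covE i h1 h2)
      linarith
    · have he : w i = v i + δ := by
        rw [hw]; simp only [hind]; rw [if_neg h1, if_pos h2]; ring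
      rw [he]; have := hvpos i; linarith
    · rw [hindE i (iff_of_false h1 h2)]; exact hvpos i
  have hwchi : ∀ i, chiW n w i ≤ K := by
    intro i
    rw [hchiw i]
    simp only [hind]
    by_cases h1 : P i <;> by_cases h2 : P (i - n)
    · rw [if_pos h1, if_pos h2]; have := hchile i; ring_nf; linarith
    · rw [if_pos h1, if_neg h2]; have := hchile i; have := δpos; ring_nf; linarith
    · rw [if_neg h1, if_pos h2]
      have := δleH i (covH i h1 h2)
      ring_nf
      linarith
    · rw [if_neg h1, if_neg h2]; have := hchile i; ring_nf; linarith
  have hwPi : w ∈ PiPoly n a := ⟨⟨⟨Nr, hwNr⟩, ⟨Nl, hwNl⟩⟩, hwpos, hwchi⟩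
  have hpresE : ∀ i, v i = 0 → w i = 0 := by
    intro i h0
    have hiff : P i ↔ P (i-1) := by
      constructor
      · intro h; exact clE1 i h h0
      · intro h
        have := clE2 (i-1) h (by rw [show i-1+1 = i from by ring]; exact h0)
        rwa [show i-1+1 = i from by ring] at this
    rw [hindE i hiff]; exact h0
  have hpresH : ∀ i, chiW n v i = K → chiW n w i = K := by
    intro i h0
    have hiff : P i ↔ P (i - n) := by
      constructor
      · intro h; exact clH1 i h h0
      · intro h
        have := clH2 (i - n) h (by rw [show i-(n:ℤ)+n = i from by ring]; exact h0)
        rwa [show i-(n:ℤ)+n = i from by ring] at this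
    rw [hchiw i]
    simp only [hind]
    by_cases h : P i
    · rw [if_pos h, if_pos (hiff.mp h), h0]; ring
    · rw [if_neg h, if_neg (fun hc => h (hiff.mpr hc)), h0]; ring
  obtain ⟨f, ⟨hfne, S, T, hfeq⟩, hvf, hmin⟩ := hvert
  have hvf' := hvf
  rw [hfeq] at hvf'
  have hvS : ∀ i ∈ S, v i = 0 := fun i hi => Set.mem_iInter₂.mp hvf'.1.2 i hi
  have hvT : ∀ i ∈ T, chiW n v i = K := fun i hi => Set.mem_iInter₂.mp hvf'.2 i hi
  have hwS : ∀ i ∈ S, w i = 0 := fun i hi => hpresE i (hvS i hi)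
  have hwT : ∀ i ∈ T, chiW n w i = K := fun i hi => hpresH i (hvT i hi)
  rcases attain with ⟨M₀, hM₀mem, hδeq, hPM₀, hPM₀m⟩ | ⟨M₀, hM₀mem, hδeq, hPM₀, hPM₀m⟩
  · have hwM₀ : w M₀ = 0 := by
      rw [hw]; simp only [hind]; rw [if_pos hPM₀, if_neg hPM₀m, hδeq]; ring
    set g : Set (ℤ → ℝ) := PiPoly n a ∩ (⋂ i ∈ (insert M₀ S), {x : ℤ → ℝ | x i = 0}) ∩
      (⋂ i ∈ T, {x : ℤ → ℝ | chiW n x i = (klev n a : ℝ)}) with hg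
    have hwg : w ∈ g := by
      rw [hg]
      refine ⟨⟨hwPi, ?_⟩, ?_⟩
      · apply Set.mem_iInter₂.mpr
        intro i hi
        rcases Set.mem_insert_iff.mp hi with h | h
        · show w i = 0; rw [h]; exact hwM₀
        · exact hwS i h
      · exact Set.mem_iInter₂.mpr fun i hi => hwT i hi
    have hgface : IsFacePi n a g := ⟨⟨w, hwg⟩, insert M₀ S, T, hg⟩
    have hgsub : g ⊆ f := by
      rw [hfeq, hg]
      intro x hx
      refine ⟨⟨hx.1.1, ?_⟩, hx.2⟩
      exact Set.mem_iInter₂.mpr fun i hi =>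
        Set.mem_iInter₂.mp hx.1.2 i (Set.mem_insert_of_mem _ hi)
    have hgf := hmin g hgface hgsub
    rw [← hgf, hg] at hvf
    have hv0 : v M₀ = 0 := Set.mem_iInter₂.mp hvf.1.2 M₀ (Set.mem_insert _ _)
    have := epos M₀ hM₀mem
    linarith
  · have hwM₀ : chiW n w M₀ = K := by
      rw [hchiw M₀]; simp only [hind]; rw [if_neg hPM₀, if_pos hPM₀m, hδeq]; ring
    set g : Set (ℤ → ℝ) := PiPoly n a ∩ (⋂ i ∈ S, {x : ℤ → ℝ | x i = 0}) ∩
      (⋂ i ∈ (insert M₀ T), {x : ℤ → ℝ | chiW n x i = (klev n a : ℝ)}) with hg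
    have hwg : w ∈ g := by
      rw [hg]
      refine ⟨⟨hwPi, Set.mem_iInter₂.mpr fun i hi => hwS i hi⟩, ?_⟩
      apply Set.mem_iInter₂.mpr
      intro i hi
      rcases Set.mem_insert_iff.mp hi with h | h
      · show chiW n w i = (klev n a : ℝ); rw [h]; exact hwM₀
      · exact hwT i h
    have hgface : IsFacePi n a g := ⟨⟨w, hwg⟩, S, insert M₀ T, hg⟩
    have hgsub : g ⊆ f := by
      rw [hfeq, hg]
      intro x hx
      refine ⟨hx.1, ?_⟩
      exact Set.mem_iInter₂.mpr fun i hi =>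
        Set.mem_iInter₂.mp hx.2 i (Set.mem_insert_of_mem _ hi)
    have hgf := hmin g hgface hgsub
    rw [← hgf, hg] at hvf
    have hv0 : chiW n v M₀ = (klev n a : ℝ) :=
      Set.mem_iInter₂.mp hvf.2 M₀ (Set.mem_insert _ _)
    have := hposH M₀ hM₀mem
    rw [hK] at this
    linarith

end anchor

section fl
variable {n : ℕ} {a : ℤ → ℤ} {v : ℤ → ℝ} {Nl : ℤ}
variable (hn : 1 ≤ n) (hper : ∀ i, a (i + n) = a i) (hNl : ∀ i ≤ Nl, v i = (a i : ℝ))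
include hn hper hNl
lemma flE {M : ℤ} (hM : M ≤ Nl) (ha : a M = 0) (m : ℤ) :
    (ThetaGraph n a v).Adj (ptc n M m) (ptc n (M-1) m) := by
  refine adjE hn hper hNl m ?_
  rw [hfun_left M hM, hfun_left (M-1) (by omega)]
  have := Abar_succ a (M-1)
  rw [show M - 1 + 1 = M from by ring, ha] at this
  rw [this]
  push_cast
  ring

lemma flH {M : ℤ} (hM : M ≤ Nl) (m : ℤ) :
    (ThetaGraph n a v).Adj (ptc n M m) (ptc n (M - n) (m - 1)) := by
  refine adjH hn hper hNl m ?_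
  rw [hfun_left M hM, hfun_left (M - n) (by omega)]
  have := Abar_per hn hper (M - n)
  rw [show M - (n:ℤ) + n = M from by ring] at this
  rw [this]
  push_cast
  ring

lemma flHchain {M : ℤ} (hM : M ≤ Nl) (m : ℤ) :
    ∀ t : ℕ, (ThetaGraph n a v).Reachable (ptc n M m) (ptc n (M - t * n) (m - t)) := by
  intro t
  induction t with
  | zero =>
      simp only [Nat.cast_zero, zero_mul, sub_zero]
      exact SimpleGraph.Reachable.refl _
  | succ t ih =>
      refine ih.trans ?_
      have hnn : (0:ℤ) ≤ (t:ℤ) * n := by positivity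
      have := (flH hn hper hNl (M := M - t * n) (by omega) (m - t)).reachable
      rw [show M - (t:ℤ)*n - n = M - ((t:ℕ)+1:ℤ) * n from by push_cast; ring,
        show m - (t:ℤ) - 1 = m - ((t:ℕ)+1:ℤ) from by push_cast; ring] at this
      convert this using 3 <;> push_cast <;> ring

lemma flSame {M M' : ℤ} (hM : M ≤ Nl) (hM' : M' ≤ Nl) (hdvd : (n:ℤ) ∣ (M' - M)) (m : ℤ) :
    ∃ m', (ThetaGraph n a v).Reachable (ptc n M m) (ptc n M' m') := by
  obtain ⟨t, ht⟩ := hdvd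
  rcases le_or_gt 0 t with hsgn | hsgn
  · refine ⟨m + t, ?_⟩
    have := flHchain hn hper hNl (M := M') (by omega) (m + t) t.toNat
    rw [show M' - (t.toNat : ℤ) * n = M from by
        rw [Int.toNat_of_nonneg hsgn, mul_comm]; omega,
      show m + t - (t.toNat : ℤ) = m from by rw [Int.toNat_of_nonneg hsgn]; ring] at this
    exact this.symm
  · refine ⟨m + t, ?_⟩
    have := flHchain hn hper hNl (M := M) hM m ((-t).toNat)
    rw [show M - ((-t).toNat : ℤ) * n = M' from by
        rw [Int.toNat_of_nonneg (by omega : (0:ℤ) ≤ -t)]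
        have e : -t * (n:ℤ) = -((n:ℤ)*t) := by ring
        omega,
      show m - ((-t).toNat : ℤ) = m + t from by
        rw [Int.toNat_of_nonneg (by omega : (0:ℤ) ≤ -t)]; ring] at this
    exact this

end fl

section flwalk
variable {n : ℕ} {a : ℤ → ℤ} {v : ℤ → ℝ} {Nl : ℤ}
lemma flWalk (hn2 : 2 ≤ n) (hper : ∀ i, a (i + n) = a i)
    (hNl : ∀ i ≤ Nl, v i = (a i : ℝ)) {r r' : ZMod n}
    (h : (cycG n a).Reachable r r') :
    ∀ M m, M ≤ Nl → ((M : ZMod n) = r) →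
    ∃ M' m', M' ≤ Nl ∧ ((M' : ZMod n) = r') ∧
      (ThetaGraph n a v).Reachable (ptc n M m) (ptc n M' m') := by
  have hn : 1 ≤ n := by omega
  obtain ⟨wlk⟩ := h
  induction wlk with
  | nil => exact fun M m hM hres => ⟨M, m, hM, hres, .refl _⟩
  | @cons r r₁ r₂ hadj wlk ih =>
      intro M m hM hres
      rw [cycG, SimpleGraph.fromRel_adj] at hadj
      have step : ∃ M₁ m₁, M₁ ≤ Nl ∧ ((M₁ : ZMod n) = r₁) ∧
          (ThetaGraph n a v).Reachable (ptc n M m) (ptc n M₁ m₁) := by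
        rcases hadj.2 with ⟨he, hz⟩ | ⟨he, hz⟩
        · -- r₁ = r + 1
          refine ⟨M - n + 1, m - 1, by omega, ?_, ?_⟩
          · push_cast
            rw [ZMod.natCast_self]
            rw [hres, he]
            ring
          · have h1 := (flH hn hper hNl (M := M) hM m).reachable
            have h2 := (flE hn hper hNl (M := M - n + 1) (by omega) ?_ (m-1)).reachable
            · rw [show M - (n:ℤ) + 1 - 1 = M - n from by ring] at h2
              exact h1.trans h2.symm
            · rw [aresidue hn hper (M - n + 1)]
              have : ((M - (n:ℤ) + 1 : ℤ) : ZMod n) = r₁ := by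
                push_cast
                rw [ZMod.natCast_self, hres, he]
                ring
              rw [this]
              exact hz
        · -- r = r₁ + 1
          refine ⟨M - 1, m, by omega, ?_, ?_⟩
          · push_cast
            rw [hres, he]
            ring
          · refine (flE hn hper hNl (M := M) hM ?_ m).reachable
            rw [aresidue hn hper M, hres]
            exact hz
      obtain ⟨M₁, m₁, hM₁, hres₁, hreach⟩ := step
      obtain ⟨M', m', hM', hres', hreach'⟩ := ih M₁ m₁ hM₁ hres₁
      exact ⟨M', m', hM', hres', hreach.trans hreach'⟩

end flwalk

section cyc
variable {n : ℕ} {a : ℤ → ℤ}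
lemma chainE (hn2 : 2 ≤ n) (hper : ∀ i, a (i + n) = a i) {x y : ℤ} (hxy : x ≤ y)
    (hz : ∀ l ∈ Finset.Icc (x+1) y, a l = 0) :
    (cycG n a).Reachable ((x : ZMod n)) ((y : ZMod n)) := by
  haveI : NeZero n := ⟨by omega⟩
  haveI : Fact (1 < n) := ⟨by omega⟩
  refine Int.le_induction (motive := fun y _ => (∀ l ∈ Finset.Icc (x+1) y, a l = 0) →
      (cycG n a).Reachable ((x : ZMod n)) ((y : ZMod n)))
    (fun _ => SimpleGraph.Reachable.refl _) ?_ y hxy hz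
  intro y hy ih hz'
  clear hz
  refine SimpleGraph.Reachable.trans
    (ih fun l hl => hz' l (by simp only [Finset.mem_Icc] at *; omega)) ?_
  refine SimpleGraph.Adj.reachable ?_
  rw [cycG, SimpleGraph.fromRel_adj]
  constructor
  · intro hc
    have : ((y + 1 : ℤ) : ZMod n) = (y : ZMod n) + 1 := by push_cast; ring
    rw [this] at hc
    exact (one_ne_zero : (1 : ZMod n) ≠ 0) (by
      have := congrArg (fun z => z - (y : ZMod n)) hc
      simpa using this.symm)
  · left
    constructor
    · push_cast; ring
    · rw [← aresidue (by omega) hper (y+1)]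
      exact hz' (y+1) (by simp only [Finset.mem_Icc]; omega)

lemma cycMul (hn2 : 2 ≤ n) (hper : ∀ i, a (i + n) = a i) (hpos : ∀ i, 0 ≤ a i)
    (hk : 0 < klev n a) :
    ∀ d : ℕ, ∀ x y : ℤ, x ≤ y → y - x ≤ d →
    (∃ t : ℤ, AbarZ a y - AbarZ a x = t * klev n a) →
    (cycG n a).Reachable ((x : ZMod n)) ((y : ZMod n)) := by
  intro d
  induction d with
  | zero =>
      intro x y h1 h2 _
      have : x = y := by omega
      rw [this]
  | succ d ih =>
      intro x y h1 h2 ⟨t, ht⟩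
      by_cases hbig : (n:ℤ) ≤ y - x
      · have hstep : AbarZ a (x + n) = AbarZ a x + klev n a := Abar_per (by omega) hper x
        have hreach : (cycG n a).Reachable (((x + n : ℤ) : ZMod n)) ((y : ZMod n)) := by
          refine ih (x+n) y (by omega) (by omega) ⟨t - 1, by
            have e : (t-1) * klev n a = t * klev n a - klev n a := by ring
            linarith [ht, hstep, e]⟩
        have hres : ((x + (n:ℤ) : ℤ) : ZMod n) = (x : ZMod n) := by
          push_cast
          rw [ZMod.natCast_self]
          ring
        rw [hres] at hreach
        exact hreach
      · push_neg at hbig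
        have hS : AbarZ a y - AbarZ a x = ∑ l ∈ Finset.Icc (x+1) y, a l := by
          rw [Abar_diff a h1]; ring
        have hS2 : AbarZ a (x+n) - AbarZ a y = ∑ l ∈ Finset.Icc (y+1) (x+n), a l := by
          rw [Abar_diff a (show y ≤ x + (n:ℤ) by omega)]; ring
        have hsum : (AbarZ a y - AbarZ a x) + (AbarZ a (x+n) - AbarZ a y) = klev n a := by
          have := Abar_per (n := n) (by omega) hper x
          linarith
        have hSpos : 0 ≤ AbarZ a y - AbarZ a x := by
          rw [hS]; exact Finset.sum_nonneg fun l _ => hpos l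
        have hS2pos : 0 ≤ AbarZ a (x+n) - AbarZ a y := by
          rw [hS2]; exact Finset.sum_nonneg fun l _ => hpos l
        rcases le_or_gt t 0 with hts | hts
        · have : t * klev n a ≤ 0 := by
            calc t * klev n a ≤ 0 * klev n a := by
                  exact mul_le_mul_of_nonneg_right hts (le_of_lt hk)
            _ = 0 := by ring
          have hS0 : AbarZ a y - AbarZ a x = 0 := by omega
          rw [hS] at hS0
          refine chainE hn2 hper h1 ?_
          intro l hl
          have := (Finset.sum_eq_zero_iff_of_nonneg (fun l _ => hpos l)).mp hS0 l hl
          exact this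
        · have : klev n a ≤ t * klev n a := by
            calc klev n a = 1 * klev n a := by ring
            _ ≤ t * klev n a := mul_le_mul_of_nonneg_right (by omega) (le_of_lt hk)
          have hS0 : AbarZ a (x+n) - AbarZ a y = 0 := by omega
          rw [hS2] at hS0
          have hreach := chainE hn2 hper (show y ≤ x + (n:ℤ) by omega) (fun l hl =>
            (Finset.sum_eq_zero_iff_of_nonneg (fun l _ => hpos l)).mp hS0 l hl)
          have hres : ((x + (n:ℤ) : ℤ) : ZMod n) = (x : ZMod n) := by
            push_cast
            rw [ZMod.natCast_self]
            ring
          rw [hres] at hreach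
          exact hreach.symm

lemma cyc_of_mult (hn2 : 2 ≤ n) (hper : ∀ i, a (i + n) = a i) (hpos : ∀ i, 0 ≤ a i)
    (hk : 0 < klev n a) {x y : ℤ} (h : x ≤ y)
    (hmul : ∃ t : ℤ, AbarZ a y - AbarZ a x = t * klev n a) :
    (cycG n a).Reachable ((x : ZMod n)) ((y : ZMod n)) :=
  cycMul hn2 hper hpos hk (y - x).toNat x y h (by omega) hmul

end cyc

section shift
variable {n : ℕ} {a : ℤ → ℤ} {v : ℤ → ℝ} {Nl : ℤ}
lemma Mof_shift (p : ℤ × ℤ) : Mof n (shiftPt n p) = Mof n p := by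
  unfold Mof shiftPt; ring

lemma mof_shift (p : ℤ × ℤ) : mof (shiftPt n p) = mof p + 1 := by
  unfold mof shiftPt; ring

lemma s_shift (hn : 1 ≤ n) (hper : ∀ i, a (i + n) = a i)
    (hNl : ∀ i ≤ Nl, v i = (a i : ℝ)) (p : ℤ × ℤ) :
    sPatR n a v (shiftPt n p) = sPatR n a v p - (klev n a : ℝ) := by
  rw [sPat_eq_s18 hn hper hNl, sPat_eq_s18 hn hper hNl, Mof_shift, mof_shift]
  push_cast
  ring

lemma latadj_shift (p q : ℤ × ℤ) : LatAdj (shiftPt n p) (shiftPt n q) ↔ LatAdj p q := by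
  simp only [LatAdj, shiftPt, Prod.mk.injEq, Prod.ext_iff]
  omega

def sigE (n : ℕ) : Equiv (ℤ × ℤ) (ℤ × ℤ) where
  toFun := shiftPt n
  invFun := fun p => (p.1 + ((n:ℤ) - 1), p.2 - n)
  left_inv := by intro p; simp [shiftPt]
  right_inv := by intro p; simp [shiftPt]

def thetaIso (hn : 1 ≤ n) (hper : ∀ i, a (i + n) = a i)
    (hNl : ∀ i ≤ Nl, v i = (a i : ℝ)) : ThetaGraph n a v ≃g ThetaGraph n a v where
  toEquiv := sigE n
  map_rel_iff' := by
    intro p q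
    show (ThetaGraph n a v).Adj (shiftPt n p) (shiftPt n q) ↔ _
    rw [ThetaGraph, SimpleGraph.fromRel_adj, SimpleGraph.fromRel_adj]
    have hne : shiftPt n p ≠ shiftPt n q ↔ p ≠ q :=
      not_congr (Equiv.apply_eq_iff_eq (sigE n))
    have hs : sPatR n a v (shiftPt n p) = sPatR n a v (shiftPt n q)
        ↔ sPatR n a v p = sPatR n a v q := by
      rw [s_shift hn hper hNl, s_shift hn hper hNl, sub_left_inj]
    have hs' : sPatR n a v (shiftPt n q) = sPatR n a v (shiftPt n p)
        ↔ sPatR n a v q = sPatR n a v p := by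
      rw [s_shift hn hper hNl, s_shift hn hper hNl, sub_left_inj]
    exact and_congr hne (or_congr (and_congr (latadj_shift p q) hs)
      (and_congr (latadj_shift q p) hs'))

variable (hn : 1 ≤ n) (hper : ∀ i, a (i + n) = a i) (hNl : ∀ i ≤ Nl, v i = (a i : ℝ))
def sigC (hn : 1 ≤ n) (hper : ∀ i, a (i + n) = a i) (hNl : ∀ i ≤ Nl, v i = (a i : ℝ)) :
    Equiv.Perm (ThetaGraph n a v).ConnectedComponent where
  toFun := fun c => c.map (thetaIso hn hper hNl).toHom
  invFun := fun c => c.map (thetaIso hn hper hNl).symm.toHom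
  left_inv := by
    intro c
    refine c.ind fun p => ?_
    simp only [SimpleGraph.ConnectedComponent.map_mk]
    congr 1
    exact (sigE n).symm_apply_apply p
  right_inv := by
    intro c
    refine c.ind fun p => ?_
    simp only [SimpleGraph.ConnectedComponent.map_mk]
    congr 1
    exact (sigE n).apply_symm_apply p

lemma sigC_mk (p : ℤ × ℤ) :
    sigC hn hper hNl ((ThetaGraph n a v).connectedComponentMk p)
      = (ThetaGraph n a v).connectedComponentMk (shiftPt n p) := rfl

lemma sigC_inv_mk (p : ℤ × ℤ) :
    (sigC hn hper hNl)⁻¹ ((ThetaGraph n a v).connectedComponentMk p)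
      = (ThetaGraph n a v).connectedComponentMk ((sigE n).symm p) := rfl

def ptShift (n : ℕ) (w : ℤ) (p : ℤ × ℤ) : ℤ × ℤ :=
  (p.1 - w * ((n:ℤ) - 1), p.2 + w * n)

lemma Mof_ptShift (w : ℤ) (p : ℤ × ℤ) : Mof n (ptShift n w p) = Mof n p := by
  unfold Mof ptShift; ring

lemma mof_ptShift (w : ℤ) (p : ℤ × ℤ) : mof (ptShift n w p) = mof p + w := by
  unfold mof ptShift; ring

lemma sigC_pow (w : ℤ) : ∀ (p : ℤ × ℤ),
    ((sigC hn hper hNl) ^ w) ((ThetaGraph n a v).connectedComponentMk p)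
      = (ThetaGraph n a v).connectedComponentMk (ptShift n w p) := by
  induction w using Int.induction_on with
  | zero =>
      intro p
      rw [zpow_zero]
      simp only [Equiv.Perm.coe_one, id_eq]
      congr 1
      unfold ptShift
      ext <;> simp
  | succ i ih =>
      intro p
      rw [zpow_add_one, Equiv.Perm.mul_apply, sigC_mk, ih (shiftPt n p)]
      congr 1
      unfold ptShift shiftPt
      ext <;> simp <;> push_cast <;> ring
  | pred i ih =>
      intro p
      rw [show (-(i:ℤ) - 1) = (-(i:ℤ)) - 1 from by ring, zpow_sub_one,
        Equiv.Perm.mul_apply, sigC_inv_mk, ih ((sigE n).symm p)]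
      congr 1
      unfold ptShift sigE
      simp only [Equiv.coe_fn_symm_mk]
      ext <;> simp <;> push_cast <;> ring

lemma srel_iff (c c' : (ThetaGraph n a v).ConnectedComponent) :
    shiftRel n (ThetaGraph n a v) c c' ↔ c' = sigC hn hper hNl c := by
  have himg : shiftPt n '' {p | (ThetaGraph n a v).connectedComponentMk p = c}
      = {p | (ThetaGraph n a v).connectedComponentMk p = sigC hn hper hNl c} := by
    ext p
    constructor
    · rintro ⟨q, hq, rfl⟩
      show (ThetaGraph n a v).connectedComponentMk (shiftPt n q) = _
      rw [← sigC_mk hn hper hNl q, hq]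
    · intro hp
      refine ⟨(sigE n).symm p, ?_, (sigE n).apply_symm_apply p⟩
      show (ThetaGraph n a v).connectedComponentMk ((sigE n).symm p) = c
      have : sigC hn hper hNl ((ThetaGraph n a v).connectedComponentMk ((sigE n).symm p))
          = sigC hn hper hNl c := by
        rw [sigC_mk]
        show (ThetaGraph n a v).connectedComponentMk ((sigE n) ((sigE n).symm p)) = _
        rw [(sigE n).apply_symm_apply]
        exact hp
      exact (sigC hn hper hNl).injective this
  rw [shiftRel, himg]
  constructor
  · intro h
    obtain ⟨q, hq⟩ := Quot.exists_rep c'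
    have hq' : (ThetaGraph n a v).connectedComponentMk q = c' := hq
    have hmem : q ∈ {p | (ThetaGraph n a v).connectedComponentMk p = c'} := hq'
    rw [h] at hmem
    exact hq'.symm.trans hmem
  · intro h
    subst h
    rfl

lemma eqvgen_iff (c c' : (ThetaGraph n a v).ConnectedComponent) :
    Relation.EqvGen (shiftRel n (ThetaGraph n a v)) c c'
      ↔ ∃ w : ℤ, c' = ((sigC hn hper hNl) ^ w) c := by
  constructor
  · intro h
    induction h with
    | rel x y hxy =>
        exact ⟨1, by rw [zpow_one]; exact (srel_iff hn hper hNl x y).mp hxy⟩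
    | refl x => exact ⟨0, by simp⟩
    | symm x y _ ih =>
        obtain ⟨w, hw⟩ := ih
        refine ⟨-w, ?_⟩
        rw [hw, ← Equiv.Perm.mul_apply, ← zpow_add]
        simp
    | trans x y z _ _ ih1 ih2 =>
        obtain ⟨w1, hw1⟩ := ih1
        obtain ⟨w2, hw2⟩ := ih2
        refine ⟨w1 + w2, ?_⟩
        rw [hw2, hw1, ← Equiv.Perm.mul_apply, ← zpow_add, add_comm]
  · rintro ⟨w, rfl⟩
    have key : ∀ w : ℤ, Relation.EqvGen (shiftRel n (ThetaGraph n a v)) c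
        (((sigC hn hper hNl) ^ w) c) := by
      intro w
      induction w using Int.induction_on with
      | zero => rw [zpow_zero]; exact Relation.EqvGen.refl _
      | succ i ih =>
          refine Relation.EqvGen.trans _ _ _ ih (Relation.EqvGen.rel _ _ ?_)
          rw [srel_iff hn hper hNl]
          rw [← Equiv.Perm.mul_apply, ← zpow_one_add, add_comm 1 (i:ℤ)]
      | pred i ih =>
          refine Relation.EqvGen.trans _ _ _ ih (Relation.EqvGen.symm _ _
            (Relation.EqvGen.rel _ _ ?_))
          rw [srel_iff hn hper hNl]
          rw [← Equiv.Perm.mul_apply, ← zpow_one_add,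
            show 1 + (-(i:ℤ) - 1) = -(i:ℤ) from by ring]
    exact key w

end shift


-- ======================= bridge lemmas =======================

section bridge
variable {n : ℕ} {a : ℤ → ℤ} {v : ℤ → ℝ} {Nl : ℤ}

/-- base point for a residue, deep in the far-left region -/
def MrD (n : ℕ) (Nl : ℤ) (r : ZMod n) : ℤ := (r.val : ℤ) - n * (1 + Nl.natAbs)

lemma MrD_le (hn2 : 2 ≤ n) (r : ZMod n) : MrD n Nl r ≤ Nl := by
  haveI : NeZero n := ⟨by omega⟩
  have h1 : r.val < n := ZMod.val_lt r
  have h2 : (r.val : ℤ) < n := by exact_mod_cast h1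
  unfold MrD
  have h3 : (Nl.natAbs : ℤ) = |Nl| := Int.abs_eq_natAbs Nl |>.symm
  have h4 : -(Nl.natAbs : ℤ) ≤ Nl := by omega
  have h6 : (2:ℤ) ≤ (n:ℤ) := by exact_mod_cast hn2
  have h7 : (0:ℤ) ≤ (Nl.natAbs:ℤ) := by positivity
  nlinarith [h2, h4, h6, h7]

lemma MrD_res (hn2 : 2 ≤ n) (r : ZMod n) : ((MrD n Nl r : ℤ) : ZMod n) = r := by
  haveI : NeZero n := ⟨by omega⟩
  unfold MrD
  push_cast
  rw [ZMod.natCast_self, ZMod.natCast_val, ZMod.cast_id]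
  ring

variable (hn2 : 2 ≤ n) (hper : ∀ i, a (i + n) = a i) (hpos : ∀ i, 0 ≤ a i)
  (hk : 0 < klev n a) (hNl : ∀ i ≤ Nl, v i = (a i : ℝ))

include hn2 hper hpos hk hNl in
lemma farres {p q : ℤ × ℤ} (hp : Mof n p ≤ Nl) (hq : Mof n q ≤ Nl)
    (h : (ThetaGraph n a v).connectedComponentMk p = (ThetaGraph n a v).connectedComponentMk q) :
    (cycG n a).connectedComponentMk ((Mof n p : ZMod n))
      = (cycG n a).connectedComponentMk ((Mof n q : ZMod n)) := by
  have hn : 1 ≤ n := by omega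
  have hs := comp_s h
  rw [sPat_eq_s18 hn hper hNl, sPat_eq_s18 hn hper hNl, hfun_left (Mof n p) hp,
    hfun_left (Mof n q) hq] at hs
  have hZ : AbarZ a (Mof n q) - AbarZ a (Mof n p) = (mof q - mof p) * klev n a := by
    have h9 : (AbarZ a (Mof n q) : ℝ) - (AbarZ a (Mof n p) : ℝ)
        = ((mof q : ℝ) - mof p) * (klev n a : ℝ) := by
      push_cast at hs ⊢
      linarith [hs]
    exact_mod_cast h9
  rcases le_total (Mof n p) (Mof n q) with hle | hle
  · exact SimpleGraph.ConnectedComponent.sound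
      (cyc_of_mult hn2 hper hpos hk hle ⟨mof q - mof p, hZ⟩)
  · exact (SimpleGraph.ConnectedComponent.sound
      (cyc_of_mult hn2 hper hpos hk hle ⟨mof p - mof q, by linarith [hZ]⟩)).symm

include hn2 hper hpos hk hNl in
lemma resclass {p q : ℤ × ℤ} (hp : Mof n p ≤ Nl) (hq : Mof n q ≤ Nl)
    (h : Quotient.mk (Relation.EqvGen.setoid (shiftRel n (ThetaGraph n a v)))
           ((ThetaGraph n a v).connectedComponentMk p)
       = Quotient.mk (Relation.EqvGen.setoid (shiftRel n (ThetaGraph n a v)))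
           ((ThetaGraph n a v).connectedComponentMk q)) :
    (cycG n a).connectedComponentMk ((Mof n p : ZMod n))
      = (cycG n a).connectedComponentMk ((Mof n q : ZMod n)) := by
  have hn : 1 ≤ n := by omega
  have hgen : Relation.EqvGen (shiftRel n (ThetaGraph n a v))
      ((ThetaGraph n a v).connectedComponentMk p)
      ((ThetaGraph n a v).connectedComponentMk q) := Quotient.exact h
  obtain ⟨w, hw⟩ := (eqvgen_iff hn hper hNl _ _).mp hgen
  rw [sigC_pow hn hper hNl w p] at hw
  have hres : ((Mof n (ptShift n w p) : ℤ) : ZMod n) = ((Mof n p : ℤ) : ZMod n) := by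
    rw [Mof_ptShift]
  have h2 := farres hn2 hper hpos hk hNl (p := ptShift n w p) (q := q)
    (by rw [Mof_ptShift]; exact hp) hq hw.symm
  rw [hres] at h2
  exact h2

include hn2 hper hpos hk hNl in
lemma connclass {p q : ℤ × ℤ} (hp : Mof n p ≤ Nl) (hq : Mof n q ≤ Nl)
    (hreach : (cycG n a).Reachable ((Mof n p : ZMod n)) ((Mof n q : ZMod n))) :
    Quotient.mk (Relation.EqvGen.setoid (shiftRel n (ThetaGraph n a v)))
        ((ThetaGraph n a v).connectedComponentMk p)
      = Quotient.mk (Relation.EqvGen.setoid (shiftRel n (ThetaGraph n a v)))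
        ((ThetaGraph n a v).connectedComponentMk q) := by
  have hn : 1 ≤ n := by omega
  obtain ⟨M', m', hM', hres', hreach'⟩ :=
    flWalk hn2 hper hNl hreach (Mof n p) (mof p) hp rfl
  rw [ptc_eta] at hreach'
  haveI : NeZero n := ⟨by omega⟩
  have hdvd : (n : ℤ) ∣ (Mof n q - M') := by
    rw [← ZMod.intCast_zmod_eq_zero_iff_dvd]
    push_cast
    rw [hres']
    rw [sub_eq_zero]
  obtain ⟨m'', hreach''⟩ := flSame hn hper hNl hM' hq hdvd m'
  have hpq : (ThetaGraph n a v).connectedComponentMk p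
      = (ThetaGraph n a v).connectedComponentMk (ptc n (Mof n q) m'') :=
    SimpleGraph.ConnectedComponent.sound (hreach'.trans hreach'')
  have hsh : ptc n (Mof n q) m'' = ptShift n (m'' - mof q) q := by
    unfold ptc ptShift Mof mof
    rw [Prod.ext_iff]
    constructor <;> simp <;> ring
  rw [hpq, hsh, ← sigC_pow hn hper hNl (m'' - mof q) q]
  exact (Quotient.sound ((eqvgen_iff hn hper hNl _ _).mpr
    ⟨m'' - mof q, rfl⟩)).symm

/-- the comparison map from cycle components to shift-classes of Θ-components -/
def E1map (hn2 : 2 ≤ n) (hper : ∀ i, a (i + n) = a i) (hpos : ∀ i, 0 ≤ a i)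
    (hk : 0 < klev n a) (hNl : ∀ i ≤ Nl, v i = (a i : ℝ)) :
    (cycG n a).ConnectedComponent →
      Quotient (Relation.EqvGen.setoid (shiftRel n (ThetaGraph n a v))) :=
  SimpleGraph.ConnectedComponent.lift
    (fun r => Quotient.mk (Relation.EqvGen.setoid (shiftRel n (ThetaGraph n a v)))
      ((ThetaGraph n a v).connectedComponentMk (ptc n (MrD n Nl r) 0)))
    (by
      intro r r' pw _
      have hr : ((Mof n (ptc n (MrD n Nl r) 0) : ℤ) : ZMod n) = r := by
        rw [Mof_ptc]; exact MrD_res hn2 r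
      have hr' : ((Mof n (ptc n (MrD n Nl r') 0) : ℤ) : ZMod n) = r' := by
        rw [Mof_ptc]; exact MrD_res hn2 r'
      refine connclass hn2 hper hpos hk hNl ?_ ?_ ?_
      · rw [Mof_ptc]; exact MrD_le hn2 r
      · rw [Mof_ptc]; exact MrD_le hn2 r'
      · rw [hr, hr']; exact pw.reachable)

lemma E1map_mk (hn2 : 2 ≤ n) (hper : ∀ i, a (i + n) = a i) (hpos : ∀ i, 0 ≤ a i)
    (hk : 0 < klev n a) (hNl : ∀ i ≤ Nl, v i = (a i : ℝ)) (r : ZMod n) :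
    E1map hn2 hper hpos hk hNl ((cycG n a).connectedComponentMk r)
      = Quotient.mk (Relation.EqvGen.setoid (shiftRel n (ThetaGraph n a v)))
        ((ThetaGraph n a v).connectedComponentMk (ptc n (MrD n Nl r) 0)) := rfl

end bridge

/-- For a vertex `v` of `Π` (with `λ ≠ 0`), the components of `Δ_v` — that is, the
shift-equivalence classes of connected components of the equality graph `Θ(v)` — are in
bijection with the `m(λ)` path components of the cycle subgraph, in such a way that a
class corresponding to a path component of size `l_r` consists of components having
exactly `l_r` vertices in each row `i` for all sufficiently small `i`. -/
theorem stmt18 (n : ℕ) (hn : 2 ≤ n) (a : ℤ → ℤ)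
    (hper : ∀ i, a (i + n) = a i) (hpos : ∀ i, 0 ≤ a i) (hk : 0 < klev n a)
    (v : ℤ → ℝ) (hv : v ∈ PiPoly n a) (hvert : IsVertexPi n a v) :
    ∃ e : (cycG n a).ConnectedComponent ≃
        Quotient (Relation.EqvGen.setoid (shiftRel n (ThetaGraph n a v))),
      ∀ (κ : (cycG n a).ConnectedComponent)
        (c : (ThetaGraph n a v).ConnectedComponent),
        e κ = Quotient.mk (Relation.EqvGen.setoid (shiftRel n (ThetaGraph n a v))) c →
        ∃ N : ℤ, ∀ i ≤ N,
          Nat.card {p : ℤ × ℤ // (ThetaGraph n a v).connectedComponentMk p = c ∧ p.1 = i}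
            = Nat.card {r : ZMod n // (cycG n a).connectedComponentMk r = κ} := by
  classical
  have hn1 : 1 ≤ n := by omega
  haveI : NeZero n := ⟨by omega⟩
  haveI : Nonempty (ZMod n) := ⟨0⟩
  obtain ⟨⟨Nr, hNr⟩, ⟨Nl, hNl⟩⟩ := hv.1
  have hNl' : ∀ i ≤ Nl, v i = (a i : ℝ) := hNl
  have hvpos : ∀ i, 0 ≤ v i := hv.2.1
  have Kpos : (0:ℝ) < (klev n a : ℝ) := by exact_mod_cast hk
  -- the bijection
  have hinj : Function.Injective (E1map hn hper hpos hk hNl') := by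
    intro κ κ'
    induction κ using SimpleGraph.ConnectedComponent.ind with | _ r =>
    induction κ' using SimpleGraph.ConnectedComponent.ind with | _ r' =>
    intro h
    rw [E1map_mk, E1map_mk] at h
    have hres := resclass hn hper hpos hk hNl'
      (p := ptc n (MrD n Nl r) 0) (q := ptc n (MrD n Nl r') 0)
      (by rw [Mof_ptc]; exact MrD_le hn r) (by rw [Mof_ptc]; exact MrD_le hn r') h
    rw [Mof_ptc, Mof_ptc, MrD_res hn r, MrD_res hn r'] at hres
    exact hres
  have hsurj : Function.Surjective (E1map hn hper hpos hk hNl') := by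
    intro Q
    obtain ⟨c, hc⟩ := Quot.exists_rep Q
    obtain ⟨p₀, hp₀, hM₀⟩ := anchor hn1 hper hNl' hNr hv hvert c
    refine ⟨(cycG n a).connectedComponentMk ((Mof n p₀ : ZMod n)), ?_⟩
    rw [E1map_mk]
    have h1 : Quotient.mk (Relation.EqvGen.setoid (shiftRel n (ThetaGraph n a v)))
        ((ThetaGraph n a v).connectedComponentMk
          (ptc n (MrD n Nl ((Mof n p₀ : ZMod n))) 0))
        = Quotient.mk (Relation.EqvGen.setoid (shiftRel n (ThetaGraph n a v)))
          ((ThetaGraph n a v).connectedComponentMk p₀) := by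
      refine connclass hn hper hpos hk hNl' ?_ hM₀ ?_
      · rw [Mof_ptc]; exact MrD_le hn _
      · rw [Mof_ptc, MrD_res hn]
    rw [h1, hp₀]
    exact hc
  refine ⟨Equiv.ofBijective _ ⟨hinj, hsurj⟩, ?_⟩
  intro κ c hec
  have hec' : E1map hn hper hpos hk hNl' κ
      = Quotient.mk (Relation.EqvGen.setoid (shiftRel n (ThetaGraph n a v))) c := hec
  obtain ⟨p₀, hp₀, hM₀⟩ := anchor hn1 hper hNl' hNr hv hvert c
  set sc : ℝ := sPatR n a v p₀ with hsc
  have hcs : ∀ p, (ThetaGraph n a v).connectedComponentMk p = c → sPatR n a v p = sc :=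
    fun p hp => comp_s (hp.trans hp₀.symm)
  obtain ⟨r₀, hr₀⟩ := Quot.exists_rep κ
  have hr₀' : (cycG n a).connectedComponentMk r₀ = κ := hr₀
  -- far-left points of c have residue class κ
  have hK1 : ∀ p, (ThetaGraph n a v).connectedComponentMk p = c → Mof n p ≤ Nl →
      (cycG n a).connectedComponentMk ((Mof n p : ZMod n)) = κ := by
    intro p hp hpM
    have h1 : Quotient.mk (Relation.EqvGen.setoid (shiftRel n (ThetaGraph n a v)))
        ((ThetaGraph n a v).connectedComponentMk (ptc n (MrD n Nl r₀) 0))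
        = Quotient.mk (Relation.EqvGen.setoid (shiftRel n (ThetaGraph n a v)))
          ((ThetaGraph n a v).connectedComponentMk p) := by
      rw [← E1map_mk hn hper hpos hk hNl' r₀, hr₀', hec', hp]
    have hres := resclass hn hper hpos hk hNl'
      (p := ptc n (MrD n Nl r₀) 0) (q := p)
      (by rw [Mof_ptc]; exact MrD_le hn r₀) hpM h1
    rw [Mof_ptc, MrD_res hn r₀] at hres
    rw [← hres]
    exact hr₀'
  -- every residue of κ is realized by far-left points of c
  have hK2 : ∀ r : ZMod n, (cycG n a).connectedComponentMk r = κ →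
      ∃ p, (ThetaGraph n a v).connectedComponentMk p = c ∧ Mof n p ≤ Nl ∧
        ((Mof n p : ZMod n)) = r := by
    intro r hrκ
    have hreach : (cycG n a).Reachable ((Mof n p₀ : ZMod n)) r :=
      SimpleGraph.ConnectedComponent.exact ((hK1 p₀ hp₀ hM₀).trans hrκ.symm)
    obtain ⟨M', m', hM', hres', hreach'⟩ :=
      flWalk hn hper hNl' hreach (Mof n p₀) (mof p₀) hM₀ rfl
    rw [ptc_eta] at hreach'
    refine ⟨ptc n M' m', ?_, ?_, ?_⟩
    · exact (SimpleGraph.ConnectedComponent.sound hreach').symm.trans hp₀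
    · rw [Mof_ptc]; exact hM'
    · rw [Mof_ptc]; exact hres'
  -- realizing each low row within each residue
  have hRow : ∀ r : ZMod n, ∃ Nrr : ℤ, (cycG n a).connectedComponentMk r = κ →
      ∀ i ≤ Nrr, ∃ p, (ThetaGraph n a v).connectedComponentMk p = c ∧ Mof n p ≤ Nl ∧
        ((Mof n p : ZMod n)) = r ∧ p.1 = i := by
    intro r
    by_cases hrκ : (cycG n a).connectedComponentMk r = κ
    · obtain ⟨p₁, hp₁c, hp₁M, hp₁r⟩ := hK2 r hrκ
      refine ⟨p₁.1, fun _ i hi => ?_⟩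
      set q : ℕ := (p₁.1 - i).toNat with hqdef
      have hq : (q:ℤ) = p₁.1 - i := Int.toNat_of_nonneg (by omega)
      have hqn : (0:ℤ) ≤ (q:ℤ) * n := by positivity
      have hch := flHchain hn1 hper hNl' (M := Mof n p₁) hp₁M (mof p₁) q
      rw [ptc_eta] at hch
      refine ⟨ptc n (Mof n p₁ - q*n) (mof p₁ - q),
        (SimpleGraph.ConnectedComponent.sound hch).symm.trans hp₁c, ?_, ?_, ?_⟩
      · rw [Mof_ptc]; omega
      · rw [Mof_ptc]
        push_cast
        rw [ZMod.natCast_self]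
        rw [show ((Mof n p₁ : ZMod n) - (q:ZMod n) * 0) = ((Mof n p₁ : ZMod n)) from by ring]
        exact hp₁r
      · show Mof n p₁ - q*n - ((n:ℤ)-1)*(mof p₁ - q) = i
        have he : Mof n p₁ - q*n - ((n:ℤ)-1)*(mof p₁ - q)
            = (Mof n p₁ - ((n:ℤ)-1)*(mof p₁)) - q := by ring
        rw [he, ← fst_eq]
        omega
    · exact ⟨0, fun h => absurd h hrκ⟩
  choose fN hfN using hRow
  -- the lower bound on rows of points of c which are not far left
  set B : ℝ := ((Nl:ℝ)+1) * (klev n a : ℝ)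
      - ((n:ℝ)-1) * (hfunD a v Nl (Nr-1) - sc) with hB
  have hCU : ∀ p, (ThetaGraph n a v).connectedComponentMk p = c →
      ((p.1:ℝ)) * (klev n a : ℝ) < B → Mof n p ≤ Nl := by
    intro p hp hlt
    by_contra hcc
    push_neg at hcc
    have hs := hcs p hp
    rw [sPat_eq_s18 hn1 hper hNl' p] at hs
    have h1 : ((p.1:ℝ)) = (Mof n p : ℝ) - ((n:ℝ)-1) * (mof p : ℝ) := by
      rw [fst_eq n p]; push_cast; ring
    have h2 : (mof p : ℝ) * (klev n a : ℝ) = hfunD a v Nl (Mof n p) - sc := by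
      linarith [hs]
    have h3 : ((p.1:ℝ)) * (klev n a : ℝ) = (Mof n p : ℝ) * (klev n a : ℝ)
        - ((n:ℝ)-1) * (hfunD a v Nl (Mof n p) - sc) := by
      rw [h1, sub_mul, mul_assoc, h2]
    have h4 : ((Nl:ℝ)+1) * (klev n a : ℝ) ≤ (Mof n p : ℝ) * (klev n a : ℝ) := by
      refine mul_le_mul_of_nonneg_right ?_ (le_of_lt Kpos)
      have : ((Nl + 1 : ℤ) : ℝ) ≤ ((Mof n p : ℤ) : ℝ) := by
        exact_mod_cast (by omega : Nl + 1 ≤ Mof n p)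
      push_cast at this
      linarith
    have h5 : hfunD a v Nl (Mof n p) ≤ hfunD a v Nl (Nr-1) :=
      hfun_le hNl' hNr hvpos _
    have h6 : (0:ℝ) ≤ (n:ℝ)-1 := by
      have : (1:ℝ) ≤ (n:ℝ) := by exact_mod_cast hn1
      linarith
    have h7 : ((n:ℝ)-1) * (hfunD a v Nl (Mof n p) - sc)
        ≤ ((n:ℝ)-1) * (hfunD a v Nl (Nr-1) - sc) :=
      mul_le_mul_of_nonneg_left (by linarith) h6
    rw [hB] at hlt
    linarith
  set N1 : ℤ := ⌊B / (klev n a : ℝ)⌋ - 1 with hN1def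
  have hN1 : ∀ i : ℤ, i ≤ N1 → ((i:ℝ)) * (klev n a : ℝ) < B := by
    intro i hi
    have h1 : (i:ℝ) ≤ (N1:ℝ) := by exact_mod_cast hi
    have h2 : (N1:ℝ) < B / (klev n a : ℝ) := by
      have h3 : ((⌊B / (klev n a : ℝ)⌋ : ℤ) : ℝ) ≤ B / (klev n a : ℝ) :=
        Int.floor_le _
      rw [hN1def]
      push_cast
      linarith
    exact (lt_div_iff₀ Kpos).mp (lt_of_le_of_lt h1 h2)
  set N2 : ℤ := (Finset.univ.image fN).min' (Finset.Nonempty.image Finset.univ_nonempty fN)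
    with hN2def
  have hN2 : ∀ r : ZMod n, N2 ≤ fN r := fun r =>
    Finset.min'_le _ _ (Finset.mem_image_of_mem fN (Finset.mem_univ r))
  refine ⟨min N1 N2, ?_⟩
  intro i hi
  have hiN1 : i ≤ N1 := le_trans hi (min_le_left _ _)
  have hiN2 : i ≤ N2 := le_trans hi (min_le_right _ _)
  have hMle : ∀ p : {p : ℤ × ℤ // (ThetaGraph n a v).connectedComponentMk p = c ∧ p.1 = i},
      Mof n p.1 ≤ Nl := by
    rintro ⟨p, hpc, hpi⟩
    exact hCU p hpc (by rw [hpi]; exact hN1 i hiN1)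
  set φ : {p : ℤ × ℤ // (ThetaGraph n a v).connectedComponentMk p = c ∧ p.1 = i} →
      {r : ZMod n // (cycG n a).connectedComponentMk r = κ} :=
    fun p => ⟨((Mof n p.1 : ZMod n)), hK1 p.1 p.2.1 (hMle p)⟩ with hφ
  have hφinj : Function.Injective φ := by
    rintro ⟨p, hpc, hpi⟩ ⟨p', hpc', hpi'⟩ hpp
    have hres : ((Mof n p : ZMod n)) = ((Mof n p' : ZMod n)) :=
      congrArg Subtype.val hpp
    have hMp : Mof n p ≤ Nl := hMle ⟨p, hpc, hpi⟩
    have hMp' : Mof n p' ≤ Nl := hMle ⟨p', hpc', hpi'⟩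
    have hsv : hfunD a v Nl (Mof n p) - (mof p) * (klev n a : ℝ)
        = hfunD a v Nl (Mof n p') - (mof p') * (klev n a : ℝ) := by
      rw [← sPat_eq_s18 hn1 hper hNl' p, ← sPat_eq_s18 hn1 hper hNl' p', hcs p hpc, hcs p' hpc']
    rw [hfun_left (Mof n p) hMp, hfun_left (Mof n p') hMp'] at hsv
    have hZ : AbarZ a (Mof n p) - (mof p) * klev n a
        = AbarZ a (Mof n p') - (mof p') * klev n a := by
      exact_mod_cast hsv
    have hdvd : (n : ℤ) ∣ (Mof n p' - Mof n p) := by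
      rw [← ZMod.intCast_zmod_eq_zero_iff_dvd]
      push_cast
      rw [← hres, sub_eq_zero]
    obtain ⟨t, ht⟩ := hdvd
    have hMeq : Mof n p' = Mof n p + t * n := by
      have hcm : (n:ℤ) * t = t * n := mul_comm _ _
      omega
    have hAb := Abar_shift hn1 hper t (Mof n p)
    rw [← hMeq] at hAb
    have hmof : mof p' = mof p + t := by
      have h9 : (mof p' - mof p - t) * klev n a = 0 := by
        have h8 := hZ
        rw [hAb] at h8
        linear_combination h8
      rcases mul_eq_zero.mp h9 with h | h
      · omega
      · omega
    have e1 : Mof n p - ((n:ℤ)-1) * mof p = Mof n p' - ((n:ℤ)-1) * (mof p') := by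
      rw [← fst_eq, ← fst_eq, hpi, hpi']
    rw [hMeq, hmof] at e1
    have ht0 : t = 0 := by linear_combination -e1
    have : p = p' := by
      rw [← ptc_eta n p, ← ptc_eta n p', hMeq, hmof, ht0]
      norm_num
    exact Subtype.ext this
  have hφsurj : Function.Surjective φ := by
    rintro ⟨r, hr⟩
    obtain ⟨p, hpc, hpM, hpr, hpi⟩ := hfN r hr i (le_trans hiN2 (hN2 r))
    exact ⟨⟨p, hpc, hpi⟩, Subtype.ext hpr⟩
  exact Nat.card_congr (Equiv.ofBijective φ ⟨hφinj, hφsurj⟩)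
end
end
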